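/- arXiv:2011.01732 — 4 statements merged into one kernel-verified Lean document; each statement's English description precedes it below -/
import Mathlib

section
/- Let Γ be a domino graph (two junction vertices A, B joined by three disjoint paths) with its inner metric, in which each of the three paths between A and B has length at least 1. Then for any total order T on Γ and any ε > 0 there exists a snake on 4 points in (Γ,T) of diameter at least 1/3 − ε and of width at most 2ε. In particular, Γ admits snakes on 4 points of arbitrarily large elongation for every order T. -/
open scoped Classical

/-- Length of the path visiting the points of a list in order,
for a distance function `d`. -/
noncomputable def pathLen {α : Type*} (d : α → α → ℝ) : List α → ℝ
  | [] => 0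
  | [_] => 0
  | a :: b :: l => d a b + pathLen d (b :: l)

/-- `lopt d X` : minimal length of a path visiting all points of the finite set `X`. -/
noncomputable def lopt {α : Type*} (d : α → α → ℝ) (X : Finset α) : ℝ :=
  sInf {r : ℝ | ∃ l : List α, l.Nodup ∧ l.toFinset = X ∧ pathLen d l = r}

/-- `lord d T X` : length of the path visiting all points of `X` in the order `T`. -/
noncomputable def lord {α : Type*} (d : α → α → ℝ) (T : LinearOrder α) (X : Finset α) : ℝ :=
  sInf {r : ℝ | ∃ l : List α, l.Nodup ∧ l.toFinset = X ∧ List.Pairwise T.lt l ∧ pathLen d l = r}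

/-- The order ratio function `OR_{M,T}(k)`. -/
noncomputable def ORd {α : Type*} (d : α → α → ℝ) (T : LinearOrder α) (k : ℕ) : ℝ :=
  sSup {r : ℝ | ∃ X : Finset α, 2 ≤ X.card ∧ X.card ≤ k + 1 ∧ r = lord d T X / lopt d X}

/-- A snake in an ordered space: a tuple of points strictly increasing with respect to `T`. -/
def IsSnake {α : Type*} (T : LinearOrder α) {n : ℕ} (x : Fin n → α) : Prop :=
  ∀ i j : Fin n, i < j → T.lt (x i) (x j)

/-- Diameter of a snake. -/
noncomputable def snakeDiam {α : Type*} (d : α → α → ℝ) {n : ℕ} (x : Fin n → α) : ℝ :=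
  sSup {r : ℝ | ∃ i j : Fin n, r = d (x i) (x j)}

/-- Width of a snake: maximal distance between points whose indices have the same parity. -/
noncomputable def snakeWidth {α : Type*} (d : α → α → ℝ) {n : ℕ} (x : Fin n → α) : ℝ :=
  sSup {r : ℝ | ∃ i j : Fin n, i.val % 2 = j.val % 2 ∧ r = d (x i) (x j)}



namespace Theta12

structure TD (M : Type*) [MetricSpace M] where
  a : M
  b : M
  L : Fin 3 → ℝ
  g : Fin 3 → ℝ → M
  hL : ∀ i, 1 ≤ L i
  h0 : ∀ i, g i 0 = a
  h1 : ∀ i, g i (L i) = b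
  hsame : ∀ i : Fin 3, ∀ s t : ℝ, s ∈ Set.Icc 0 (L i) → t ∈ Set.Icc 0 (L i) →
      dist (g i s) (g i t) =
        min (|s - t|)
          (min (s + min (min (L 0) (L 1)) (L 2) + (L i - t))
            ((L i - s) + min (min (L 0) (L 1)) (L 2) + t))
  hdiff : ∀ i j : Fin 3, i ≠ j → ∀ s t : ℝ,
      s ∈ Set.Icc 0 (L i) → t ∈ Set.Icc 0 (L j) →
      dist (g i s) (g j t) =
        min (min (s + t) ((L i - s) + (L j - t)))
          (min (s + min (min (L 0) (L 1)) (L 2) + (L j - t))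
            ((L i - s) + min (min (L 0) (L 1)) (L 2) + t))

namespace TD
variable {M : Type*} [MetricSpace M] (D : TD M)

lemma one_le_m : 1 ≤ min (min (D.L 0) (D.L 1)) (D.L 2) := by
  have h0 := D.hL 0; have h1 := D.hL 1; have h2 := D.hL 2
  simp only [le_min_iff]; exact ⟨⟨h0, h1⟩, h2⟩

lemma Lpos (i : Fin 3) : (0:ℝ) < D.L i := lt_of_lt_of_le one_pos (D.hL i)

lemma dist_same_le (i : Fin 3) {s t : ℝ} (hs : s ∈ Set.Icc 0 (D.L i))
    (ht : t ∈ Set.Icc 0 (D.L i)) :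
    dist (D.g i s) (D.g i t) ≤ |s - t| := by
  rw [D.hsame i s t hs ht]; exact min_le_left _ _

lemma dist_same_ge (i : Fin 3) {s t : ℝ} (hs : s ∈ Set.Icc 0 (D.L i))
    (ht : t ∈ Set.Icc 0 (D.L i)) :
    min (|s - t|) 1 ≤ dist (D.g i s) (D.g i t) := by
  rw [D.hsame i s t hs ht]
  have hm := D.one_le_m
  obtain ⟨hs0, hs1⟩ := hs; obtain ⟨ht0, ht1⟩ := ht
  refine le_min (min_le_left _ _) (le_min ?_ ?_) <;>
    exact le_trans (min_le_right _ _) (by linarith)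

lemma dist_diff_le₁ {i j : Fin 3} (hij : i ≠ j) {s t : ℝ} (hs : s ∈ Set.Icc 0 (D.L i))
    (ht : t ∈ Set.Icc 0 (D.L j)) :
    dist (D.g i s) (D.g j t) ≤ s + t := by
  rw [D.hdiff i j hij s t hs ht]
  exact le_trans (min_le_left _ _) (min_le_left _ _)

lemma dist_diff_le₂ {i j : Fin 3} (hij : i ≠ j) {s t : ℝ} (hs : s ∈ Set.Icc 0 (D.L i))
    (ht : t ∈ Set.Icc 0 (D.L j)) :
    dist (D.g i s) (D.g j t) ≤ (D.L i - s) + (D.L j - t) := by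
  rw [D.hdiff i j hij s t hs ht]
  exact le_trans (min_le_left _ _) (min_le_right _ _)

lemma dist_diff_ge {i j : Fin 3} (hij : i ≠ j) {s t : ℝ} (hs : s ∈ Set.Icc 0 (D.L i))
    (ht : t ∈ Set.Icc 0 (D.L j)) :
    min (min (s + t) ((D.L i - s) + (D.L j - t))) 1 ≤ dist (D.g i s) (D.g j t) := by
  rw [D.hdiff i j hij s t hs ht]
  have hm := D.one_le_m
  obtain ⟨hs0, hs1⟩ := hs; obtain ⟨ht0, ht1⟩ := ht
  refine le_min (min_le_left _ _) (le_min ?_ ?_) <;>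
    exact le_trans (min_le_right _ _) (by linarith)

end TD

/-- Lipschitz paths avoiding a region, as a relation. -/
def GP {M : Type*} [MetricSpace M] (f : M → Prop) (x y : M) : Prop :=
  ∃ (p : ℝ → M) (T : ℝ), 0 ≤ T ∧ p 0 = x ∧ p T = y ∧
    (∀ s ∈ Set.Icc (0:ℝ) T, ∀ t ∈ Set.Icc (0:ℝ) T, dist (p s) (p t) ≤ |s - t|) ∧
    (∀ t ∈ Set.Icc (0:ℝ) T, f (p t))

namespace GP
variable {M : Type*} [MetricSpace M] {f : M → Prop} {x y z : M}

lemma refl (hx : f x) : GP f x x :=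
  ⟨fun _ => x, 0, le_refl _, rfl, rfl, by intro s hs t ht; simp, by intro t ht; simpa⟩

lemma symm (h : GP f x y) : GP f y x := by
  obtain ⟨p, T, hT, hp0, hpT, hlip, hf⟩ := h
  refine ⟨fun t => p (T - t), T, hT, by simpa, by simpa, ?_, ?_⟩
  · intro s hs t ht
    have hs' : T - s ∈ Set.Icc (0:ℝ) T := ⟨by linarith [hs.2], by linarith [hs.1]⟩
    have ht' : T - t ∈ Set.Icc (0:ℝ) T := ⟨by linarith [ht.2], by linarith [ht.1]⟩
    calc dist (p (T - s)) (p (T - t)) ≤ |(T - s) - (T - t)| := hlip _ hs' _ ht'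
    _ = |s - t| := by rw [abs_sub_comm]; ring_nf
  · intro t ht
    exact hf _ ⟨by linarith [ht.2], by linarith [ht.1]⟩

lemma trans (h1 : GP f x y) (h2 : GP f y z) : GP f x z := by
  obtain ⟨p, T, hT, hp0, hpT, hlip, hf⟩ := h1
  obtain ⟨q, S, hS, hq0, hqS, hqlip, hqf⟩ := h2
  have e3 : p T = q 0 := by rw [hpT, hq0]
  refine ⟨fun t => if t ≤ T then p t else q (t - T), T + S, by linarith, ?_, ?_, ?_, ?_⟩
  · simp only [if_pos hT]; exact hp0
  · by_cases h : T + S ≤ T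
    · have hS0 : S = 0 := le_antisymm (by linarith) hS
      have hz : z = y := by rw [← hqS, hS0, hq0]
      simp only [if_pos h]
      rw [show T + S = T by linarith, hpT, hz]
    · simp only [if_neg h, show T + S - T = S by ring, hqS]
  · intro s hs t ht
    by_cases h1s : s ≤ T <;> by_cases h1t : t ≤ T
    · simpa [h1s, h1t] using hlip s ⟨hs.1, h1s⟩ t ⟨ht.1, h1t⟩
    · simp only [if_pos h1s, if_neg h1t]
      have htT : T ≤ t := le_of_not_ge h1t
      have e1 : dist (p s) (p T) ≤ |s - T| := hlip s ⟨hs.1, h1s⟩ T ⟨hT, le_refl _⟩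
      have e2 : dist (q 0) (q (t - T)) ≤ |0 - (t - T)| :=
        hqlip 0 ⟨le_refl _, hS⟩ _ ⟨by linarith, by linarith [ht.2]⟩
      rw [e3] at e1
      have htri := dist_triangle (p s) (q 0) (q (t - T))
      have habs : |s - T| + |0 - (t - T)| ≤ |s - t| := by
        rw [abs_of_nonpos (by linarith : s - T ≤ 0),
          abs_of_nonpos (by linarith : (0:ℝ) - (t - T) ≤ 0),
          abs_of_nonpos (by linarith : s - t ≤ 0)]
        linarith
      linarith
    · simp only [if_neg h1s, if_pos h1t]
      have hsT : T ≤ s := le_of_not_ge h1s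
      have e1 : dist (q (s - T)) (q 0) ≤ |(s - T) - 0| :=
        hqlip _ ⟨by linarith, by linarith [hs.2]⟩ 0 ⟨le_refl _, hS⟩
      have e2 : dist (p T) (p t) ≤ |T - t| := hlip T ⟨hT, le_refl _⟩ t ⟨ht.1, h1t⟩
      rw [e3] at e2
      have htri := dist_triangle (q (s - T)) (q 0) (p t)
      have habs : |(s - T) - 0| + |T - t| ≤ |s - t| := by
        rw [abs_of_nonneg (by linarith : (0:ℝ) ≤ (s - T) - 0),
          abs_of_nonneg (by linarith : (0:ℝ) ≤ T - t),
          abs_of_nonneg (by linarith : (0:ℝ) ≤ s - t)]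
        linarith
      linarith
    · have hsT : T ≤ s := le_of_not_ge h1s
      have htT : T ≤ t := le_of_not_ge h1t
      simp only [if_neg h1s, if_neg h1t]
      have := hqlip (s - T) ⟨by linarith, by linarith [hs.2]⟩ (t - T)
        ⟨by linarith, by linarith [ht.2]⟩
      calc dist (q (s - T)) (q (t - T)) ≤ |(s - T) - (t - T)| := this
        _ = |s - t| := by ring_nf
  · intro t ht
    by_cases h1t : t ≤ T
    · simpa [h1t] using hf t ⟨ht.1, h1t⟩
    · simpa [h1t] using hqf (t - T) ⟨by linarith [le_of_not_ge h1t], by linarith [ht.2]⟩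

lemma mono {f' : M → Prop} (himp : ∀ w, f w → f' w) (h : GP f x y) : GP f' x y := by
  obtain ⟨p, T, hT, hp0, hpT, hlip, hf⟩ := h
  exact ⟨p, T, hT, hp0, hpT, hlip, fun t ht => himp _ (hf t ht)⟩

end GP



lemma extract {M : Type*} [MetricSpace M] (p : ℝ → M) (T : ℝ) (hT : 0 ≤ T)
    (hlip : ∀ s ∈ Set.Icc (0:ℝ) T, ∀ t ∈ Set.Icc (0:ℝ) T, dist (p s) (p t) ≤ |s - t|)
    (P : M → Prop) (h0 : P (p 0)) (hT' : ¬ P (p T)) (δ : ℝ) (hδ : 0 < δ) :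
    ∃ σ τ, σ ∈ Set.Icc (0:ℝ) T ∧ τ ∈ Set.Icc (0:ℝ) T ∧ dist (p σ) (p τ) ≤ δ ∧
      P (p σ) ∧ ¬ P (p τ) := by
  classical
  set S : Set ℝ := {t | t ∈ Set.Icc (0:ℝ) T ∧ P (p t)} with hS
  have hne : S.Nonempty := ⟨0, ⟨le_refl _, hT⟩, h0⟩
  have hbdd : BddAbove S := ⟨T, fun t htm => htm.1.2⟩
  set c := sSup S with hc
  have hc0 : 0 ≤ c := le_csSup hbdd ⟨⟨le_refl _, hT⟩, h0⟩
  have hcT : c ≤ T := csSup_le hne (fun t htm => htm.1.2)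
  obtain ⟨σ, hσS, hσgt⟩ := exists_lt_of_lt_csSup hne (show c - δ/2 < c by linarith)
  have hσc : σ ≤ c := le_csSup hbdd hσS
  set τ := min (c + δ/2) T with hτdef
  have hτmem : τ ∈ Set.Icc (0:ℝ) T := ⟨le_min (by linarith) hT, min_le_right _ _⟩
  have hτP : ¬ P (p τ) := by
    by_cases hcase : c + δ/2 ≤ T
    · have hττ : τ = c + δ/2 := min_eq_left hcase
      intro hPτ
      have hle : τ ≤ c := le_csSup hbdd ⟨hτmem, hPτ⟩
      rw [hττ] at hle; linarith
    · have hττ : τ = T := min_eq_right (by linarith)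
      rw [hττ]; exact hT'
  refine ⟨σ, τ, hσS.1, hτmem, ?_, hσS.2, hτP⟩
  have hd := hlip σ hσS.1 τ hτmem
  have hτc : c ≤ τ := le_min (by linarith) hcT
  have hτub : τ ≤ c + δ/2 := min_le_left _ _
  have habs : |σ - τ| ≤ δ := by
    rw [abs_of_nonpos (by linarith)]; linarith
  linarith

lemma transfer {M : Type*} [MetricSpace M] [LinearOrder M] {ε : ℝ} (hε : 0 < ε)
    (hε' : ε ≤ 1/100)
    (hns : ∀ y1 y2 y3 y4 : M, y1 < y2 → y2 < y3 → y3 < y4 → dist y1 y3 ≤ 2*ε →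
      dist y2 y4 ≤ 2*ε → dist y1 y2 < 1/3 - ε)
    {u u' x y : M} (hu : u < u') (hc : dist u u' ≤ 2*ε)
    (hgp : GP (fun z => 1/3 - ε ≤ dist z u) x y)
    (hx1 : u < x) (hx2 : x < u') : u < y ∧ y < u' := by
  obtain ⟨p, T, hT, hp0, hpT, hlip, hf⟩ := hgp
  by_contra hcon
  obtain ⟨σ, τ, hσ, hτ, hd, hPσ, hPτ⟩ := extract p T hT hlip (fun z => u < z ∧ z < u')
    (by rw [hp0]; exact ⟨hx1, hx2⟩) (by rw [hpT]; exact hcon) (2*ε) (by linarith)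
  have hfσ : 1/3 - ε ≤ dist (p σ) u := hf σ hσ
  have hfτ : 1/3 - ε ≤ dist (p τ) u := hf τ hτ
  rcases not_and_or.mp hPτ with h | h
  · have hne2 : p τ ≠ u := by
      intro he; rw [he, dist_self] at hfτ; linarith
    have hlt : p τ < u := lt_of_le_of_ne (not_lt.mp h) hne2
    have hres := hns (p τ) u (p σ) u' hlt hPσ.1 hPσ.2 (by rw [dist_comm]; exact hd) hc
    linarith
  · have hge : u' ≤ p τ := not_lt.mp h
    have hne2 : u' ≠ p τ := by
      intro he
      have h0' : dist (p τ) u' = 0 := by rw [← he, dist_self]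
      have h3 : dist (p τ) u ≤ dist (p τ) u' + dist u' u := dist_triangle _ _ _
      rw [h0', dist_comm u' u] at h3
      linarith
    have hlt : u' < p τ := lt_of_le_of_ne hge hne2
    have hres := hns u (p σ) u' (p τ) hPσ.1 hPσ.2 hlt hc hd
    rw [dist_comm] at hres; linarith

lemma tripod {M : Type*} [MetricSpace M] [LinearOrder M] {ρ δ : ℝ} (hρ : 0 < ρ) (hδ : 0 < δ)
    (x : Fin 3 → M) (f : Fin 3 → M → Prop)
    (hd : ∀ k, ∀ z, f k z → ρ ≤ dist z (x k))
    (hp : ∀ m n k : Fin 3, k ≠ m → k ≠ n → m ≠ n → GP (f k) (x m) (x n))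
    (hne : ∀ m k : Fin 3, m ≠ k → x m ≠ x k) :
    ∃ (k : Fin 3) (h h' : M), f k h ∧ f k h' ∧ dist h h' ≤ δ ∧ h < x k ∧ x k < h' := by
  have core : ∀ m n k : Fin 3, k ≠ m → k ≠ n → m ≠ n → x m ≤ x k → x k ≤ x n →
      ∃ (k' : Fin 3) (h h' : M), f k' h ∧ f k' h' ∧ dist h h' ≤ δ ∧ h < x k' ∧ x k' < h' := by
    intro m n k hkm hkn hmn h1 h2
    obtain ⟨p, T, hT, hp0, hpT, hlip, hf⟩ := hp m n k hkm hkn hmn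
    have hx1 : p 0 < x k := by rw [hp0]; exact lt_of_le_of_ne h1 (hne m k hkm.symm)
    have hxT : ¬ (p T < x k) := by rw [hpT]; exact not_lt.mpr h2
    obtain ⟨σ, τ, hσ, hτ, hdst, hPσ, hPτ⟩ := extract p T hT hlip (fun z => z < x k) hx1 hxT δ hδ
    refine ⟨k, p σ, p τ, hf σ hσ, hf τ hτ, hdst, hPσ, ?_⟩
    have hle : x k ≤ p τ := not_lt.mp hPτ
    refine lt_of_le_of_ne hle ?_
    intro he
    have hd2 := hd k (p τ) (hf τ hτ)
    rw [← he, dist_self] at hd2; linarith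
  rcases le_total (x 0) (x 1) with h01 | h01 <;>
    rcases le_total (x 1) (x 2) with h12 | h12 <;>
      rcases le_total (x 0) (x 2) with h02 | h02
  · exact core 0 2 1 (by decide) (by decide) (by decide) h01 h12
  · exact core 2 1 0 (by decide) (by decide) (by decide) h02 h01
  · exact core 0 1 2 (by decide) (by decide) (by decide) h02 h12
  · exact core 2 1 0 (by decide) (by decide) (by decide) h02 h01
  · exact core 1 2 0 (by decide) (by decide) (by decide) h01 h02
  · exact core 1 0 2 (by decide) (by decide) (by decide) h12 h02
  · exact core 0 1 2 (by decide) (by decide) (by decide) h02 h12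
  · exact core 2 0 1 (by decide) (by decide) (by decide) h12 h01
namespace TD
variable {M : Type*} [MetricSpace M] (D : TD M)

lemma seg {f : M → Prop} (i : Fin 3) {A B : ℝ} (hAB : A ≤ B) (hA : 0 ≤ A) (hB : B ≤ D.L i)
    (hf : ∀ u, A ≤ u → u ≤ B → f (D.g i u)) : GP f (D.g i A) (D.g i B) := by
  refine ⟨fun t => D.g i (A + t), B - A, by linarith, ?_, ?_, ?_, ?_⟩
  · show D.g i (A + 0) = D.g i A
    rw [add_zero]
  · show D.g i (A + (B - A)) = D.g i B
    rw [show A + (B - A) = B by ring]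
  · intro u hu v hv
    have h1 : A + u ∈ Set.Icc 0 (D.L i) := ⟨by linarith [hu.1], by linarith [hu.2]⟩
    have h2 : A + v ∈ Set.Icc 0 (D.L i) := ⟨by linarith [hv.1], by linarith [hv.2]⟩
    have hle := D.dist_same_le i h1 h2
    rw [show A + u - (A + v) = u - v by ring] at hle
    exact hle
  · intro u hu
    exact hf (A + u) (by linarith [hu.1]) (by linarith [hu.2])

lemma other1' (w : Fin 3) : ∃ l : Fin 3, l ≠ w := by
  fin_cases w
  exacts [⟨1, by decide⟩, ⟨0, by decide⟩, ⟨0, by decide⟩]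

lemma connect {ε : ℝ} (hε : 0 < ε) (hε' : ε ≤ 1/100)
    (w : Fin 3) {t : ℝ} (ht : t ∈ Set.Icc 0 (D.L w))
    (i : Fin 3) {s : ℝ} (hs : s ∈ Set.Icc 0 (D.L i))
    (j : Fin 3) {s' : ℝ} (hs' : s' ∈ Set.Icc 0 (D.L j))
    (hx : 1/3 - ε/2 ≤ dist (D.g i s) (D.g w t))
    (hy : 1/3 - ε/2 ≤ dist (D.g j s') (D.g w t)) :
    GP (fun z => 1/3 - ε ≤ dist z (D.g w t)) (D.g i s) (D.g j s') := by
  obtain ⟨ht0, ht1⟩ := ht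
  have hLw := D.hL w
  have acc : ∀ (i : Fin 3) (s : ℝ), 0 ≤ s → s ≤ D.L i →
      1/3 - ε/2 ≤ dist (D.g i s) (D.g w t) →
      ((1/3 - ε ≤ t ∧ GP (fun z => 1/3 - ε ≤ dist z (D.g w t)) (D.g i s) D.a) ∨
       (1/3 - ε ≤ D.L w - t ∧ GP (fun z => 1/3 - ε ≤ dist z (D.g w t)) (D.g i s) D.b)) := by
    intro i s hs0 hs1 hfar
    have hLi := D.hL i
    by_cases hiw : i = w
    · subst hiw
      have habs : 1/3 - ε/2 ≤ |s - t| :=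
        le_trans hfar (D.dist_same_le i ⟨hs0, hs1⟩ ⟨ht0, ht1⟩)
      rcases le_or_gt s t with hst | hst
      · left
        have hst' : s ≤ t - (1/3 - ε/2) := by
          rw [abs_of_nonpos (by linarith)] at habs; linarith
        refine ⟨by linarith, ?_⟩
        have hseg := D.seg (f := fun z => 1/3 - ε ≤ dist z (D.g i t)) i
          (A := 0) (B := s) hs0 (le_refl 0) (by linarith) ?_
        · have hseg' := hseg.symm
          rw [D.h0 i] at hseg'
          exact hseg'
        · intro u hu0 hu1
          have hge := D.dist_same_ge i (s := u) (t := t) ⟨by linarith, by linarith⟩ ⟨ht0, ht1⟩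
          have : 1/3 - ε ≤ min (|u - t|) 1 := by
            refine le_min ?_ (by linarith)
            rw [abs_of_nonpos (by linarith)]; linarith
          linarith
      · right
        have hst' : t + (1/3 - ε/2) ≤ s := by
          rw [abs_of_pos (by linarith)] at habs; linarith
        refine ⟨by linarith, ?_⟩
        have hseg := D.seg (f := fun z => 1/3 - ε ≤ dist z (D.g i t)) i
          (A := s) (B := D.L i) hs1 hs0 (le_refl _) ?_
        · rw [D.h1 i] at hseg
          exact hseg
        · intro u hu0 hu1
          have hge := D.dist_same_ge i (s := u) (t := t) ⟨by linarith, by linarith⟩ ⟨ht0, ht1⟩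
          have : 1/3 - ε ≤ min (|u - t|) 1 := by
            refine le_min ?_ (by linarith)
            rw [abs_of_pos (by linarith)]; linarith
          linarith
    · have hub1 : 1/3 - ε/2 ≤ s + t :=
        le_trans hfar (D.dist_diff_le₁ hiw ⟨hs0, hs1⟩ ⟨ht0, ht1⟩)
      have hub2 : 1/3 - ε/2 ≤ (D.L i - s) + (D.L w - t) :=
        le_trans hfar (D.dist_diff_le₂ hiw ⟨hs0, hs1⟩ ⟨ht0, ht1⟩)
      rcases le_or_gt (1/3 - ε) t with hRPt | hRPt
      · left
        refine ⟨hRPt, ?_⟩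
        have hseg := D.seg (f := fun z => 1/3 - ε ≤ dist z (D.g w t)) i
          (A := 0) (B := s) hs0 (le_refl 0) (by linarith) ?_
        · have hseg' := hseg.symm
          rw [D.h0 i] at hseg'
          exact hseg'
        · intro u hu0 hu1
          have hge := D.dist_diff_ge hiw (s := u) (t := t) ⟨by linarith, by linarith⟩ ⟨ht0, ht1⟩
          have : 1/3 - ε ≤ min (min (u + t) ((D.L i - u) + (D.L w - t))) 1 :=
            le_min (le_min (by linarith) (by linarith)) (by linarith)
          linarith
      · right
        refine ⟨by linarith, ?_⟩
        have hseg := D.seg (f := fun z => 1/3 - ε ≤ dist z (D.g w t)) i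
          (A := s) (B := D.L i) hs1 hs0 (le_refl _) ?_
        · rw [D.h1 i] at hseg
          exact hseg
        · intro u hu0 hu1
          have hge := D.dist_diff_ge hiw (s := u) (t := t) ⟨by linarith, by linarith⟩ ⟨ht0, ht1⟩
          have : 1/3 - ε ≤ min (min (u + t) ((D.L i - u) + (D.L w - t))) 1 :=
            le_min (le_min (by linarith) (by linarith)) (by linarith)
          linarith
  have bridge : 1/3 - ε ≤ t → 1/3 - ε ≤ D.L w - t →
      GP (fun z => 1/3 - ε ≤ dist z (D.g w t)) D.a D.b := by
    intro h1 h2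
    obtain ⟨l, hlw⟩ := other1' w
    have hLl := D.hL l
    have hseg := D.seg (f := fun z => 1/3 - ε ≤ dist z (D.g w t)) l
      (A := 0) (B := D.L l) (by linarith) (le_refl 0) (le_refl _) ?_
    · rw [D.h0 l, D.h1 l] at hseg
      exact hseg
    · intro u hu0 hu1
      have hge := D.dist_diff_ge hlw (s := u) (t := t) ⟨by linarith, by linarith⟩ ⟨ht0, ht1⟩
      have : 1/3 - ε ≤ min (min (u + t) ((D.L l - u) + (D.L w - t))) 1 :=
        le_min (le_min (by linarith) (by linarith)) (by linarith)
      linarith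
  obtain ⟨hsx0, hsx1⟩ := hs
  obtain ⟨hsy0, hsy1⟩ := hs'
  rcases acc i s hsx0 hsx1 hx with ⟨hta, hxa⟩ | ⟨htb, hxb⟩ <;>
    rcases acc j s' hsy0 hsy1 hy with ⟨h'a, hya⟩ | ⟨h'b, hyb⟩
  · exact hxa.trans hya.symm
  · exact hxa.trans ((bridge hta h'b).trans hyb.symm)
  · exact hxb.trans (((bridge h'a htb).symm).trans hya.symm)
  · exact hxb.trans hyb.symm

lemma cross_ge {i j : Fin 3} (hij : i ≠ j) {s t r : ℝ} (hs : s ∈ Set.Icc 0 (D.L i))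
    (ht : t ∈ Set.Icc 0 (D.L j)) (h1 : r ≤ s + t) (h2 : r ≤ (D.L i - s) + (D.L j - t))
    (h3 : r ≤ 1) : r ≤ dist (D.g i s) (D.g j t) :=
  le_trans (le_min (le_min h1 h2) h3) (D.dist_diff_ge hij hs ht)

lemma same_ge' (i : Fin 3) {s t r : ℝ} (hs : s ∈ Set.Icc 0 (D.L i))
    (ht : t ∈ Set.Icc 0 (D.L i)) (h1 : r ≤ |s - t|) (h3 : r ≤ 1) :
    r ≤ dist (D.g i s) (D.g i t) :=
  le_trans (le_min h1 h3) (D.dist_same_ge i hs ht)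

include D in
lemma step1 [LinearOrder M] {ε : ℝ} (hε : 0 < ε) (hε' : ε ≤ 1/100) :
    ∃ (v h h' : M), h < v ∧ v < h' ∧ dist h h' ≤ ε/50 ∧
      1/3 - ε/2 + ε/50 ≤ dist h v ∧ 1/3 - ε/2 + ε/50 ≤ dist h' v := by
  have hρ : 0 < (1/3 - ε/2 + ε/50 : ℝ) := by linarith
  have hδ : 0 < ε/50 := by linarith
  have hL0 := D.hL 0
  have hL1 := D.hL 1
  have hmem0 : (0:ℝ) ∈ Set.Icc 0 (D.L 1) := ⟨le_refl _, by linarith⟩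
  have hmemL : (D.L 1) ∈ Set.Icc 0 (D.L 1) := ⟨by linarith, le_refl _⟩
  have hmemh : (D.L 1/2) ∈ Set.Icc 0 (D.L 1) := ⟨by linarith, by linarith⟩
  set x : Fin 3 → M := ![D.a, D.b, D.g 1 (D.L 1 / 2)] with hxdef
  have hx0 : x 0 = D.a := rfl
  have hx1 : x 1 = D.b := rfl
  have hx2 : x 2 = D.g 1 (D.L 1 / 2) := rfl
  set f : Fin 3 → M → Prop := fun k z => 1/3 - ε/2 + ε/50 ≤ dist z (x k) with hfdef
  -- distances between the three points
  have hab : (1:ℝ) ≤ dist D.a D.b := by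
    have h := D.same_ge' 0 (s := 0) (t := D.L 0) (r := 1)
      ⟨le_refl _, by linarith⟩ ⟨by linarith, le_refl _⟩
      (by rw [abs_of_nonpos (by linarith)]; linarith) (le_refl _)
    rwa [D.h0 0, D.h1 0] at h
  have haμ : (1/2:ℝ) ≤ dist D.a (D.g 1 (D.L 1/2)) := by
    have h := D.same_ge' 1 (s := 0) (t := D.L 1/2) (r := 1/2) hmem0 hmemh
      (by rw [abs_of_nonpos (by linarith)]; linarith) (by linarith)
    rwa [D.h0 1] at h
  have hbμ : (1/2:ℝ) ≤ dist D.b (D.g 1 (D.L 1/2)) := by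
    have h := D.same_ge' 1 (s := D.L 1) (t := D.L 1/2) (r := 1/2) hmemL hmemh
      (by rw [abs_of_pos (by linarith)]; linarith) (by linarith)
    rwa [D.h1 1] at h
  -- the three connecting paths
  have P2 : GP (f 2) (x 0) (x 1) := by
    have hseg := D.seg (f := f 2) 0 (A := 0) (B := D.L 0) (by linarith) (le_refl _) (le_refl _) ?_
    · rw [D.h0 0, D.h1 0] at hseg; exact hseg
    · intro u hu0 hu1
      show 1/3 - ε/2 + ε/50 ≤ dist (D.g 0 u) (x 2)
      rw [hx2]
      exact D.cross_ge (by decide) ⟨hu0, hu1⟩ hmemh (by linarith) (by linarith) (by linarith)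
  have P0 : GP (f 0) (x 1) (x 2) := by
    have hseg := (D.seg (f := f 0) 1 (A := D.L 1/2) (B := D.L 1) (by linarith) (by linarith)
      (le_refl _) ?_).symm
    · rw [D.h1 1] at hseg; exact hseg
    · intro u hu0 hu1
      show 1/3 - ε/2 + ε/50 ≤ dist (D.g 1 u) (x 0)
      rw [hx0, ← D.h0 1]
      exact D.same_ge' 1 ⟨by linarith, by linarith⟩ hmem0
        (by rw [abs_of_pos (by linarith)]; linarith) (by linarith)
  have P1 : GP (f 1) (x 0) (x 2) := by
    have hseg := (D.seg (f := f 1) 1 (A := 0) (B := D.L 1/2) (by linarith) (le_refl _)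
      (by linarith) ?_).symm
    · rw [D.h0 1] at hseg; exact hseg.symm
    · intro u hu0 hu1
      show 1/3 - ε/2 + ε/50 ≤ dist (D.g 1 u) (x 1)
      rw [hx1, ← D.h1 1]
      exact D.same_ge' 1 ⟨by linarith, by linarith⟩ hmemL
        (by rw [abs_of_nonpos (by linarith)]; linarith) (by linarith)
  have hp : ∀ m n k : Fin 3, k ≠ m → k ≠ n → m ≠ n → GP (f k) (x m) (x n) := by
    intro m n k hkm hkn hmn
    fin_cases k <;> fin_cases m <;> fin_cases n <;>
      first
        | exact absurd rfl hkm
        | exact absurd rfl hkn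
        | exact absurd rfl hmn
        | exact P0
        | exact P0.symm
        | exact P1
        | exact P1.symm
        | exact P2
        | exact P2.symm
  have hne : ∀ m k : Fin 3, m ≠ k → x m ≠ x k := by
    have d01 : x 0 ≠ x 1 := by
      rw [hx0, hx1]; intro he
      rw [he, dist_self] at hab; linarith
    have d02 : x 0 ≠ x 2 := by
      rw [hx0, hx2]; intro he
      rw [he, dist_self] at haμ; linarith
    have d12 : x 1 ≠ x 2 := by
      rw [hx1, hx2]; intro he
      rw [he, dist_self] at hbμ; linarith
    intro m k hmk
    fin_cases m <;> fin_cases k <;>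
      first
        | exact absurd rfl hmk
        | exact d01
        | exact d01.symm
        | exact d02
        | exact d02.symm
        | exact d12
        | exact d12.symm
  obtain ⟨k, h, h', hfk, hfk', hdhh, hlt1, hlt2⟩ :=
    tripod hρ hδ x f (fun k z hz => hz) hp hne
  exact ⟨x k, h, h', hlt1, hlt2, hdhh, hfk, hfk'⟩

lemma other2' (w : Fin 3) : ∃ j k : Fin 3, j ≠ w ∧ k ≠ w ∧ j ≠ k := by
  fin_cases w
  exacts [⟨1, 2, by decide, by decide, by decide⟩,
    ⟨0, 2, by decide, by decide, by decide⟩,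
    ⟨0, 1, by decide, by decide, by decide⟩]

include D in
set_option maxHeartbeats 2000000 in
lemma step2 [LinearOrder M] {ε : ℝ} (hε : 0 < ε) (hε' : ε ≤ 1/100)
    (w : Fin 3) {t : ℝ} (ht0 : 0 ≤ t) (ht1 : t ≤ D.L w) :
    ∃ (v p q : M), p < v ∧ v < q ∧ dist p q ≤ ε/50 ∧
      (1/3 - ε/2 + ε/50) ≤ dist p v ∧ (1/3 - ε/2 + ε/50) ≤ dist q v ∧
      (1/3 - ε/2 + 3*ε/50) ≤ dist p (D.g w t) ∧ (1/3 - ε/2 + 3*ε/50) ≤ dist q (D.g w t) := by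
  obtain ⟨j, k, hjw, hkw, hjk⟩ := other2' w
  have hLw := D.hL w
  have hLj := D.hL j
  have hLk := D.hL k
  have hρ : 0 < ((1/3 - ε/2 + ε/50) : ℝ) := by linarith
  have hδ : 0 < ε/50 := by linarith
  have htmem : t ∈ Set.Icc 0 (D.L w) := ⟨ht0, ht1⟩
  have finish : ∀ (y : Fin 3 → M),
      (∀ m n kk : Fin 3, kk ≠ m → kk ≠ n → m ≠ n →
        GP (fun z => ((1/3 - ε/2 + ε/50) ≤ dist z (y kk)) ∧ ((1/3 - ε/2 + 3*ε/50) ≤ dist z (D.g w t))) (y m) (y n)) →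
      (∀ m kk : Fin 3, m ≠ kk → y m ≠ y kk) →
      ∃ (v p q : M), p < v ∧ v < q ∧ dist p q ≤ ε/50 ∧
        (1/3 - ε/2 + ε/50) ≤ dist p v ∧ (1/3 - ε/2 + ε/50) ≤ dist q v ∧
        (1/3 - ε/2 + 3*ε/50) ≤ dist p (D.g w t) ∧ (1/3 - ε/2 + 3*ε/50) ≤ dist q (D.g w t) := by
    intro y hp hne
    obtain ⟨kk, p, q, hfp, hfq, hdpq, h1, h2⟩ :=
      tripod hρ hδ y (fun kk z => ((1/3 - ε/2 + ε/50) ≤ dist z (y kk)) ∧ ((1/3 - ε/2 + 3*ε/50) ≤ dist z (D.g w t)))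
        (fun kk z hz => hz.1) hp hne
    exact ⟨y kk, p, q, h1, h2, hdpq, hfp.1, hfq.1, hfp.2, hfq.2⟩
  have dispatch : ∀ (y : Fin 3 → M),
      GP (fun z => ((1/3 - ε/2 + ε/50) ≤ dist z (y 2)) ∧ ((1/3 - ε/2 + 3*ε/50) ≤ dist z (D.g w t))) (y 0) (y 1) →
      GP (fun z => ((1/3 - ε/2 + ε/50) ≤ dist z (y 0)) ∧ ((1/3 - ε/2 + 3*ε/50) ≤ dist z (D.g w t))) (y 1) (y 2) →
      GP (fun z => ((1/3 - ε/2 + ε/50) ≤ dist z (y 1)) ∧ ((1/3 - ε/2 + 3*ε/50) ≤ dist z (D.g w t))) (y 0) (y 2) →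
      (∀ m n kk : Fin 3, kk ≠ m → kk ≠ n → m ≠ n →
        GP (fun z => ((1/3 - ε/2 + ε/50) ≤ dist z (y kk)) ∧ ((1/3 - ε/2 + 3*ε/50) ≤ dist z (D.g w t))) (y m) (y n)) := by
    intro y P2 P0 P1 m n kk hkm hkn hmn
    fin_cases kk <;> fin_cases m <;> fin_cases n <;>
      first
        | exact absurd rfl hkm
        | exact absurd rfl hkn
        | exact absurd rfl hmn
        | exact P0
        | exact P0.symm
        | exact P1
        | exact P1.symm
        | exact P2
        | exact P2.symm
  have nedispatch : ∀ (y : Fin 3 → M), y 0 ≠ y 1 → y 0 ≠ y 2 → y 1 ≠ y 2 →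
      (∀ m kk : Fin 3, m ≠ kk → y m ≠ y kk) := by
    intro y d01 d02 d12 m kk hmk
    fin_cases m <;> fin_cases kk <;>
      first
        | exact absurd rfl hmk
        | exact d01
        | exact d01.symm
        | exact d02
        | exact d02.symm
        | exact d12
        | exact d12.symm
  rcases le_or_gt t (1/3 - ε/2 + 3*ε/50) with hLO | hMID1
  · -- LO case: t near the junction a
    have hmemj : ((1/3 - ε/2 + 3*ε/50):ℝ) ∈ Set.Icc 0 (D.L j) := ⟨by linarith, by linarith⟩
    have hmemk : ((1/3 - ε/2 + 3*ε/50):ℝ) ∈ Set.Icc 0 (D.L k) := ⟨by linarith, by linarith⟩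
    have hmems : ((D.L w - (1/3 - ε/2) - ε/25):ℝ) ∈ Set.Icc 0 (D.L w) := ⟨by linarith, by linarith⟩
    obtain ⟨y, hy0, hy1, hy2⟩ :
        ∃ y : Fin 3 → M, y 0 = D.g j (1/3 - ε/2 + 3*ε/50) ∧ y 1 = D.g k (1/3 - ε/2 + 3*ε/50) ∧ y 2 = D.g w (D.L w - (1/3 - ε/2) - ε/25) :=
      ⟨![D.g j (1/3 - ε/2 + 3*ε/50), D.g k (1/3 - ε/2 + 3*ε/50), D.g w (D.L w - (1/3 - ε/2) - ε/25)], rfl, rfl, rfl⟩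
    have segjt : ∀ u, (1/3 - ε/2 + 3*ε/50) ≤ u → u ≤ D.L j → (1/3 - ε/2 + 3*ε/50) ≤ dist (D.g j u) (D.g w t) :=
      fun u hu0 hu1 => D.cross_ge hjw ⟨by linarith, hu1⟩ htmem
        (by linarith) (by linarith) (by linarith)
    have segkt : ∀ u, (1/3 - ε/2 + 3*ε/50) ≤ u → u ≤ D.L k → (1/3 - ε/2 + 3*ε/50) ≤ dist (D.g k u) (D.g w t) :=
      fun u hu0 hu1 => D.cross_ge hkw ⟨by linarith, hu1⟩ htmem
        (by linarith) (by linarith) (by linarith)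
    have segwt : ∀ u, (D.L w - (1/3 - ε/2) - ε/25) ≤ u → u ≤ D.L w → (1/3 - ε/2 + 3*ε/50) ≤ dist (D.g w u) (D.g w t) :=
      fun u hu0 hu1 => D.same_ge' w ⟨by linarith, hu1⟩ htmem
        (by rw [abs_of_nonneg (by linarith)]; linarith) (by linarith)
    have P2 : GP (fun z => ((1/3 - ε/2 + ε/50) ≤ dist z (y 2)) ∧ ((1/3 - ε/2 + 3*ε/50) ≤ dist z (D.g w t))) (y 0) (y 1) := by
      rw [hy0, hy1]
      have hA := D.seg (f := fun z => ((1/3 - ε/2 + ε/50) ≤ dist z (y 2)) ∧ ((1/3 - ε/2 + 3*ε/50) ≤ dist z (D.g w t)))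
        j (A := (1/3 - ε/2 + 3*ε/50)) (B := D.L j) (by linarith) (by linarith) (le_refl _)
        (fun u hu0 hu1 => ⟨by
          rw [hy2]
          exact D.cross_ge hjw ⟨by linarith, hu1⟩ hmems
            (by linarith) (by linarith) (by linarith), segjt u hu0 hu1⟩)
      have hB := D.seg (f := fun z => ((1/3 - ε/2 + ε/50) ≤ dist z (y 2)) ∧ ((1/3 - ε/2 + 3*ε/50) ≤ dist z (D.g w t)))
        k (A := (1/3 - ε/2 + 3*ε/50)) (B := D.L k) (by linarith) (by linarith) (le_refl _)
        (fun u hu0 hu1 => ⟨by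
          rw [hy2]
          exact D.cross_ge hkw ⟨by linarith, hu1⟩ hmems
            (by linarith) (by linarith) (by linarith), segkt u hu0 hu1⟩)
      rw [D.h1 j] at hA
      rw [D.h1 k] at hB
      exact hA.trans hB.symm
    have P0 : GP (fun z => ((1/3 - ε/2 + ε/50) ≤ dist z (y 0)) ∧ ((1/3 - ε/2 + 3*ε/50) ≤ dist z (D.g w t))) (y 1) (y 2) := by
      rw [hy1, hy2]
      have hA := D.seg (f := fun z => ((1/3 - ε/2 + ε/50) ≤ dist z (y 0)) ∧ ((1/3 - ε/2 + 3*ε/50) ≤ dist z (D.g w t)))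
        k (A := (1/3 - ε/2 + 3*ε/50)) (B := D.L k) (by linarith) (by linarith) (le_refl _)
        (fun u hu0 hu1 => ⟨by
          rw [hy0]
          exact D.cross_ge (Ne.symm hjk) ⟨by linarith, hu1⟩ hmemj
            (by linarith) (by linarith) (by linarith), segkt u hu0 hu1⟩)
      have hB := D.seg (f := fun z => ((1/3 - ε/2 + ε/50) ≤ dist z (y 0)) ∧ ((1/3 - ε/2 + 3*ε/50) ≤ dist z (D.g w t)))
        w (A := (D.L w - (1/3 - ε/2) - ε/25)) (B := D.L w) (by linarith) (by linarith) (le_refl _)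
        (fun u hu0 hu1 => ⟨by
          rw [hy0]
          exact D.cross_ge (Ne.symm hjw) ⟨by linarith, hu1⟩ hmemj
            (by linarith) (by linarith) (by linarith), segwt u hu0 hu1⟩)
      rw [D.h1 k] at hA
      rw [D.h1 w] at hB
      exact hA.trans hB.symm
    have P1 : GP (fun z => ((1/3 - ε/2 + ε/50) ≤ dist z (y 1)) ∧ ((1/3 - ε/2 + 3*ε/50) ≤ dist z (D.g w t))) (y 0) (y 2) := by
      rw [hy0, hy2]
      have hA := D.seg (f := fun z => ((1/3 - ε/2 + ε/50) ≤ dist z (y 1)) ∧ ((1/3 - ε/2 + 3*ε/50) ≤ dist z (D.g w t)))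
        j (A := (1/3 - ε/2 + 3*ε/50)) (B := D.L j) (by linarith) (by linarith) (le_refl _)
        (fun u hu0 hu1 => ⟨by
          rw [hy1]
          exact D.cross_ge hjk ⟨by linarith, hu1⟩ hmemk
            (by linarith) (by linarith) (by linarith), segjt u hu0 hu1⟩)
      have hB := D.seg (f := fun z => ((1/3 - ε/2 + ε/50) ≤ dist z (y 1)) ∧ ((1/3 - ε/2 + 3*ε/50) ≤ dist z (D.g w t)))
        w (A := (D.L w - (1/3 - ε/2) - ε/25)) (B := D.L w) (by linarith) (by linarith) (le_refl _)
        (fun u hu0 hu1 => ⟨by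
          rw [hy1]
          exact D.cross_ge (Ne.symm hkw) ⟨by linarith, hu1⟩ hmemk
            (by linarith) (by linarith) (by linarith), segwt u hu0 hu1⟩)
      rw [D.h1 j] at hA
      rw [D.h1 w] at hB
      exact hA.trans hB.symm
    have d01 : y 0 ≠ y 1 := by
      have hd : (1/3:ℝ) ≤ dist (y 0) (y 1) := by
        rw [hy0, hy1]
        exact D.cross_ge hjk hmemj hmemk (by linarith) (by linarith) (by linarith)
      intro he; rw [he, dist_self] at hd; linarith
    have d02 : y 0 ≠ y 2 := by
      have hd : (1/3:ℝ) ≤ dist (y 0) (y 2) := by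
        rw [hy0, hy2]
        exact D.cross_ge hjw hmemj hmems (by linarith) (by linarith) (by linarith)
      intro he; rw [he, dist_self] at hd; linarith
    have d12 : y 1 ≠ y 2 := by
      have hd : (1/3:ℝ) ≤ dist (y 1) (y 2) := by
        rw [hy1, hy2]
        exact D.cross_ge hkw hmemk hmems (by linarith) (by linarith) (by linarith)
      intro he; rw [he, dist_self] at hd; linarith
    exact finish y (dispatch y P2 P0 P1) (nedispatch y d01 d02 d12)
  · rcases le_or_gt (D.L w - (1/3 - ε/2 + 3*ε/50)) t with hHI | hMID2
    · -- HI case: t near the junction b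
      have hmemj : (D.L j - (1/3 - ε/2 + 3*ε/50)) ∈ Set.Icc 0 (D.L j) := ⟨by linarith, by linarith⟩
      have hmemk : (D.L k - (1/3 - ε/2 + 3*ε/50)) ∈ Set.Icc 0 (D.L k) := ⟨by linarith, by linarith⟩
      have hmems : ((1/3 - ε/2 + ε/25):ℝ) ∈ Set.Icc 0 (D.L w) := ⟨by linarith, by linarith⟩
      obtain ⟨y, hy0, hy1, hy2⟩ :
          ∃ y : Fin 3 → M, y 0 = D.g j (D.L j - (1/3 - ε/2 + 3*ε/50)) ∧ y 1 = D.g k (D.L k - (1/3 - ε/2 + 3*ε/50)) ∧ y 2 = D.g w (1/3 - ε/2 + ε/25) :=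
        ⟨![D.g j (D.L j - (1/3 - ε/2 + 3*ε/50)), D.g k (D.L k - (1/3 - ε/2 + 3*ε/50)), D.g w (1/3 - ε/2 + ε/25)], rfl, rfl, rfl⟩
      have segjt : ∀ u, 0 ≤ u → u ≤ D.L j - (1/3 - ε/2 + 3*ε/50) → (1/3 - ε/2 + 3*ε/50) ≤ dist (D.g j u) (D.g w t) :=
        fun u hu0 hu1 => D.cross_ge hjw ⟨hu0, by linarith⟩ htmem
          (by linarith) (by linarith) (by linarith)
      have segkt : ∀ u, 0 ≤ u → u ≤ D.L k - (1/3 - ε/2 + 3*ε/50) → (1/3 - ε/2 + 3*ε/50) ≤ dist (D.g k u) (D.g w t) :=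
        fun u hu0 hu1 => D.cross_ge hkw ⟨hu0, by linarith⟩ htmem
          (by linarith) (by linarith) (by linarith)
      have segwt : ∀ u, 0 ≤ u → u ≤ (1/3 - ε/2 + ε/25) → (1/3 - ε/2 + 3*ε/50) ≤ dist (D.g w u) (D.g w t) :=
        fun u hu0 hu1 => D.same_ge' w ⟨hu0, by linarith⟩ htmem
          (by rw [abs_of_nonpos (by linarith)]; linarith) (by linarith)
      have P2 : GP (fun z => ((1/3 - ε/2 + ε/50) ≤ dist z (y 2)) ∧ ((1/3 - ε/2 + 3*ε/50) ≤ dist z (D.g w t))) (y 0) (y 1) := by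
        rw [hy0, hy1]
        have hA := D.seg (f := fun z => ((1/3 - ε/2 + ε/50) ≤ dist z (y 2)) ∧ ((1/3 - ε/2 + 3*ε/50) ≤ dist z (D.g w t)))
          j (A := 0) (B := D.L j - (1/3 - ε/2 + 3*ε/50)) (by linarith) (le_refl _) (by linarith)
          (fun u hu0 hu1 => ⟨by
            rw [hy2]
            exact D.cross_ge hjw ⟨hu0, by linarith⟩ hmems
              (by linarith) (by linarith) (by linarith), segjt u hu0 hu1⟩)
        have hB := D.seg (f := fun z => ((1/3 - ε/2 + ε/50) ≤ dist z (y 2)) ∧ ((1/3 - ε/2 + 3*ε/50) ≤ dist z (D.g w t)))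
          k (A := 0) (B := D.L k - (1/3 - ε/2 + 3*ε/50)) (by linarith) (le_refl _) (by linarith)
          (fun u hu0 hu1 => ⟨by
            rw [hy2]
            exact D.cross_ge hkw ⟨hu0, by linarith⟩ hmems
              (by linarith) (by linarith) (by linarith), segkt u hu0 hu1⟩)
        rw [D.h0 j] at hA
        rw [D.h0 k] at hB
        exact hA.symm.trans hB
      have P0 : GP (fun z => ((1/3 - ε/2 + ε/50) ≤ dist z (y 0)) ∧ ((1/3 - ε/2 + 3*ε/50) ≤ dist z (D.g w t))) (y 1) (y 2) := by
        rw [hy1, hy2]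
        have hA := D.seg (f := fun z => ((1/3 - ε/2 + ε/50) ≤ dist z (y 0)) ∧ ((1/3 - ε/2 + 3*ε/50) ≤ dist z (D.g w t)))
          k (A := 0) (B := D.L k - (1/3 - ε/2 + 3*ε/50)) (by linarith) (le_refl _) (by linarith)
          (fun u hu0 hu1 => ⟨by
            rw [hy0]
            exact D.cross_ge (Ne.symm hjk) ⟨hu0, by linarith⟩ hmemj
              (by linarith) (by linarith) (by linarith), segkt u hu0 hu1⟩)
        have hB := D.seg (f := fun z => ((1/3 - ε/2 + ε/50) ≤ dist z (y 0)) ∧ ((1/3 - ε/2 + 3*ε/50) ≤ dist z (D.g w t)))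
          w (A := 0) (B := (1/3 - ε/2 + ε/25)) (by linarith) (le_refl _) (by linarith)
          (fun u hu0 hu1 => ⟨by
            rw [hy0]
            exact D.cross_ge (Ne.symm hjw) ⟨hu0, by linarith⟩ hmemj
              (by linarith) (by linarith) (by linarith), segwt u hu0 hu1⟩)
        rw [D.h0 k] at hA
        rw [D.h0 w] at hB
        exact hA.symm.trans hB
      have P1 : GP (fun z => ((1/3 - ε/2 + ε/50) ≤ dist z (y 1)) ∧ ((1/3 - ε/2 + 3*ε/50) ≤ dist z (D.g w t))) (y 0) (y 2) := by
        rw [hy0, hy2]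
        have hA := D.seg (f := fun z => ((1/3 - ε/2 + ε/50) ≤ dist z (y 1)) ∧ ((1/3 - ε/2 + 3*ε/50) ≤ dist z (D.g w t)))
          j (A := 0) (B := D.L j - (1/3 - ε/2 + 3*ε/50)) (by linarith) (le_refl _) (by linarith)
          (fun u hu0 hu1 => ⟨by
            rw [hy1]
            exact D.cross_ge hjk ⟨hu0, by linarith⟩ hmemk
              (by linarith) (by linarith) (by linarith), segjt u hu0 hu1⟩)
        have hB := D.seg (f := fun z => ((1/3 - ε/2 + ε/50) ≤ dist z (y 1)) ∧ ((1/3 - ε/2 + 3*ε/50) ≤ dist z (D.g w t)))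
          w (A := 0) (B := (1/3 - ε/2 + ε/25)) (by linarith) (le_refl _) (by linarith)
          (fun u hu0 hu1 => ⟨by
            rw [hy1]
            exact D.cross_ge (Ne.symm hkw) ⟨hu0, by linarith⟩ hmemk
              (by linarith) (by linarith) (by linarith), segwt u hu0 hu1⟩)
        rw [D.h0 j] at hA
        rw [D.h0 w] at hB
        exact hA.symm.trans hB
      have d01 : y 0 ≠ y 1 := by
        have hd : (1/3:ℝ) ≤ dist (y 0) (y 1) := by
          rw [hy0, hy1]
          exact D.cross_ge hjk hmemj hmemk (by linarith) (by linarith) (by linarith)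
        intro he; rw [he, dist_self] at hd; linarith
      have d02 : y 0 ≠ y 2 := by
        have hd : (1/3:ℝ) ≤ dist (y 0) (y 2) := by
          rw [hy0, hy2]
          exact D.cross_ge hjw hmemj hmems (by linarith) (by linarith) (by linarith)
        intro he; rw [he, dist_self] at hd; linarith
      have d12 : y 1 ≠ y 2 := by
        have hd : (1/3:ℝ) ≤ dist (y 1) (y 2) := by
          rw [hy1, hy2]
          exact D.cross_ge hkw hmemk hmems (by linarith) (by linarith) (by linarith)
        intro he; rw [he, dist_self] at hd; linarith
      exact finish y (dispatch y P2 P0 P1) (nedispatch y d01 d02 d12)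
    · -- MID case
      have hmemh : (D.L j/2) ∈ Set.Icc 0 (D.L j) := ⟨by linarith, by linarith⟩
      obtain ⟨y, hy0, hy1, hy2⟩ :
          ∃ y : Fin 3 → M, y 0 = D.a ∧ y 1 = D.b ∧ y 2 = D.g j (D.L j/2) :=
        ⟨![D.a, D.b, D.g j (D.L j/2)], rfl, rfl, rfl⟩
      have segjt : ∀ u, 0 ≤ u → u ≤ D.L j → (1/3 - ε/2 + 3*ε/50) ≤ dist (D.g j u) (D.g w t) :=
        fun u hu0 hu1 => D.cross_ge hjw ⟨hu0, hu1⟩ htmem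
          (by linarith) (by linarith) (by linarith)
      have segkt : ∀ u, 0 ≤ u → u ≤ D.L k → (1/3 - ε/2 + 3*ε/50) ≤ dist (D.g k u) (D.g w t) :=
        fun u hu0 hu1 => D.cross_ge hkw ⟨hu0, hu1⟩ htmem
          (by linarith) (by linarith) (by linarith)
      have P2 : GP (fun z => ((1/3 - ε/2 + ε/50) ≤ dist z (y 2)) ∧ ((1/3 - ε/2 + 3*ε/50) ≤ dist z (D.g w t))) (y 0) (y 1) := by
        rw [hy0, hy1]
        have hA := D.seg (f := fun z => ((1/3 - ε/2 + ε/50) ≤ dist z (y 2)) ∧ ((1/3 - ε/2 + 3*ε/50) ≤ dist z (D.g w t)))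
          k (A := 0) (B := D.L k) (by linarith) (le_refl _) (le_refl _)
          (fun u hu0 hu1 => ⟨by
            rw [hy2]
            exact D.cross_ge (Ne.symm hjk) ⟨hu0, hu1⟩ hmemh
              (by linarith) (by linarith) (by linarith), segkt u hu0 hu1⟩)
        rw [D.h0 k, D.h1 k] at hA
        exact hA
      have P0 : GP (fun z => ((1/3 - ε/2 + ε/50) ≤ dist z (y 0)) ∧ ((1/3 - ε/2 + 3*ε/50) ≤ dist z (D.g w t))) (y 1) (y 2) := by
        rw [hy1, hy2]
        have hA := D.seg (f := fun z => ((1/3 - ε/2 + ε/50) ≤ dist z (y 0)) ∧ ((1/3 - ε/2 + 3*ε/50) ≤ dist z (D.g w t)))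
          j (A := D.L j/2) (B := D.L j) (by linarith) (by linarith) (le_refl _)
          (fun u hu0 hu1 => ⟨by
            rw [hy0, ← D.h0 j]
            exact D.same_ge' j ⟨by linarith, hu1⟩ ⟨le_refl _, by linarith⟩
              (by rw [abs_of_nonneg (by linarith)]; linarith) (by linarith),
            segjt u (by linarith) hu1⟩)
        rw [D.h1 j] at hA
        exact hA.symm
      have P1 : GP (fun z => ((1/3 - ε/2 + ε/50) ≤ dist z (y 1)) ∧ ((1/3 - ε/2 + 3*ε/50) ≤ dist z (D.g w t))) (y 0) (y 2) := by
        rw [hy0, hy2]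
        have hA := D.seg (f := fun z => ((1/3 - ε/2 + ε/50) ≤ dist z (y 1)) ∧ ((1/3 - ε/2 + 3*ε/50) ≤ dist z (D.g w t)))
          j (A := 0) (B := D.L j/2) (by linarith) (le_refl _) (by linarith)
          (fun u hu0 hu1 => ⟨by
            rw [hy1, ← D.h1 j]
            exact D.same_ge' j ⟨hu0, by linarith⟩ ⟨by linarith, le_refl _⟩
              (by rw [abs_of_nonpos (by linarith)]; linarith) (by linarith),
            segjt u hu0 (by linarith)⟩)
        rw [D.h0 j] at hA
        exact hA
      have d01 : y 0 ≠ y 1 := by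
        have hd : (1:ℝ) ≤ dist (y 0) (y 1) := by
          rw [hy0, hy1, ← D.h0 j, ← D.h1 j]
          exact D.same_ge' j ⟨le_refl _, by linarith⟩ ⟨by linarith, le_refl _⟩
            (by rw [abs_of_nonpos (by linarith)]; linarith) (le_refl _)
        intro he; rw [he, dist_self] at hd; linarith
      have d02 : y 0 ≠ y 2 := by
        have hd : (1/2:ℝ) ≤ dist (y 0) (y 2) := by
          rw [hy0, hy2, ← D.h0 j]
          exact D.same_ge' j ⟨le_refl _, by linarith⟩ hmemh
            (by rw [abs_of_nonpos (by linarith)]; linarith) (by linarith)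
        intro he; rw [he, dist_self] at hd; linarith
      have d12 : y 1 ≠ y 2 := by
        have hd : (1/2:ℝ) ≤ dist (y 1) (y 2) := by
          rw [hy1, hy2, ← D.h1 j]
          exact D.same_ge' j ⟨by linarith, le_refl _⟩ hmemh
            (by rw [abs_of_nonneg (by linarith)]; linarith) (by linarith)
        intro he; rw [he, dist_self] at hd; linarith
      exact finish y (dispatch y P2 P0 P1) (nedispatch y d01 d02 d12)
include D in
set_option maxHeartbeats 1000000 in
lemma core [LinearOrder M] {ε : ℝ} (hε : 0 < ε) (hε' : ε ≤ 1/100)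
    (hsurj : ∀ x : M, ∃ i : Fin 3, ∃ s ∈ Set.Icc 0 (D.L i), x = D.g i s)
    (hns : ∀ y1 y2 y3 y4 : M, y1 < y2 → y2 < y3 → y3 < y4 → dist y1 y3 ≤ 2*ε →
      dist y2 y4 ≤ 2*ε → dist y1 y2 < 1/3 - ε) : False := by
  obtain ⟨v1, h, h', hh1, hh2, hdhh, hfar1, hfar1'⟩ := D.step1 hε hε'
  obtain ⟨w, t, htmem, hw⟩ := hsurj h
  obtain ⟨v2, g, g', hg1, hg2, hdgg, hfar2, hfar2', hfar3, hfar3'⟩ :=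
    D.step2 hε hε' w htmem.1 htmem.2
  rw [← hw] at hfar3 hfar3'
  obtain ⟨wv, tv, hvmem, hv⟩ := hsurj v1
  obtain ⟨wg, tg, hgmem, hgw⟩ := hsurj g
  obtain ⟨wv2, tv2, hv2mem, hv2⟩ := hsurj v2
  -- transfer v1 → g along a path far from h
  have hα : GP (fun z => 1/3 - ε ≤ dist z h) v1 g := by
    rw [hw, hv, hgw]
    refine D.connect hε hε' w htmem wv hvmem wg hgmem ?_ ?_
    · rw [← hv, ← hw, dist_comm]
      linarith
    · rw [← hgw, ← hw]
      linarith
  have hαr : h < g ∧ g < h' :=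
    transfer hε hε' hns (lt_trans hh1 hh2) (le_trans hdhh (by linarith)) hα hh1 hh2
  -- transfer v2 → h along a path far from g
  have hβ : GP (fun z => 1/3 - ε ≤ dist z g) v2 h := by
    rw [hgw, hv2, hw]
    refine D.connect hε hε' wg hgmem wv2 hv2mem w htmem ?_ ?_
    · rw [← hv2, ← hgw, dist_comm]
      linarith
    · rw [← hw, ← hgw, dist_comm]
      linarith
  have hβr : g < h ∧ h < g' :=
    transfer hε hε' hns (lt_trans hg1 hg2) (le_trans hdgg (by linarith)) hβ hg1 hg2
  exact (lt_asymm hαr.1) hβr.1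

include D in
lemma main [LinearOrder M] {ε : ℝ} (hε : 0 < ε) (hε' : ε ≤ 1/100)
    (hsurj : ∀ x : M, ∃ i : Fin 3, ∃ s ∈ Set.Icc 0 (D.L i), x = D.g i s) :
    ∃ x1 x2 x3 x4 : M, x1 < x2 ∧ x2 < x3 ∧ x3 < x4 ∧ dist x1 x3 ≤ 2*ε ∧
      dist x2 x4 ≤ 2*ε ∧ 1/3 - ε ≤ dist x1 x2 := by
  by_contra hcon
  push_neg at hcon
  refine D.core hε hε' hsurj ?_
  intro y1 y2 y3 y4 h1 h2 h3 h4 h5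
  exact hcon y1 y2 y3 y4 h1 h2 h3 h4 h5

end TD
end Theta12

/-- Let `Γ` be a domino (theta) graph: two junction points `a, b` joined by three internally
disjoint arcs of lengths `L 0, L 1, L 2 ≥ 1`, with the inner metric (axiomatised via the
arc-length parametrisations `γ` and the explicit distance formulas).  Then for every total
order `T` on `Γ` and every `ε > 0` there is a snake on `4` points of diameter at least
`1/3 - ε` and width at most `2ε`; in particular `Γ` admits snakes on `4` points of
arbitrarily large elongation for every order. -/
theorem stmt12 {M : Type*} [MetricSpace M] (a b : M) (L : Fin 3 → ℝ)
    (hL : ∀ i, 1 ≤ L i)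
    (γ : Fin 3 → ℝ → M)
    (h0 : ∀ i, γ i 0 = a) (h1 : ∀ i, γ i (L i) = b)
    (hsame : ∀ i : Fin 3, ∀ s t : ℝ, s ∈ Set.Icc 0 (L i) → t ∈ Set.Icc 0 (L i) →
      dist (γ i s) (γ i t) =
        min (|s - t|)
          (min (s + min (min (L 0) (L 1)) (L 2) + (L i - t))
            ((L i - s) + min (min (L 0) (L 1)) (L 2) + t)))
    (hdiff : ∀ i j : Fin 3, i ≠ j → ∀ s t : ℝ,
      s ∈ Set.Icc 0 (L i) → t ∈ Set.Icc 0 (L j) →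
      dist (γ i s) (γ j t) =
        min (min (s + t) ((L i - s) + (L j - t)))
          (min (s + min (min (L 0) (L 1)) (L 2) + (L j - t))
            ((L i - s) + min (min (L 0) (L 1)) (L 2) + t)))
    (hsurj : ∀ x : M, ∃ i : Fin 3, ∃ s ∈ Set.Icc 0 (L i), x = γ i s) :
    (∀ (T : LinearOrder M) (ε : ℝ), 0 < ε →
      ∃ x : Fin 4 → M, IsSnake T x ∧
        1/3 - ε ≤ snakeDiam (fun x y : M => dist x y) x ∧
        snakeWidth (fun x y : M => dist x y) x ≤ 2 * ε) ∧
    (∀ (T : LinearOrder M) (E : ℝ), 0 < E →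
      ∃ x : Fin 4 → M, IsSnake T x ∧
        E * snakeWidth (fun x y : M => dist x y) x <
          snakeDiam (fun x y : M => dist x y) x) := by

  classical
  let D : Theta12.TD M := ⟨a, b, L, γ, hL, h0, h1, hsame, hdiff⟩
  have hsurj' : ∀ x : M, ∃ i : Fin 3, ∃ s ∈ Set.Icc 0 (D.L i), x = D.g i s := hsurj
  have key : ∀ (T : LinearOrder M) (ε : ℝ), 0 < ε → ε ≤ 1/100 →
      ∃ x : Fin 4 → M, IsSnake T x ∧
        1/3 - ε ≤ snakeDiam (fun x y : M => dist x y) x ∧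
        snakeWidth (fun x y : M => dist x y) x ≤ 2 * ε := by
    intro T ε hε hε'
    letI := T
    obtain ⟨x1, x2, x3, x4, h12, h23, h34, w13, w24, hdiam⟩ := D.main hε hε' hsurj'
    set v : Fin 4 → M := ![x1, x2, x3, x4] with hvdef
    have hv0 : v 0 = x1 := rfl
    have hv1 : v 1 = x2 := rfl
    have hv2 : v 2 = x3 := rfl
    have hv3 : v 3 = x4 := rfl
    refine ⟨v, ?_, ?_, ?_⟩
    · intro i j hij
      fin_cases i <;> fin_cases j <;>
        first
          | exact absurd hij (by decide)
          | exact h12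
          | exact h23
          | exact h34
          | exact lt_trans h12 h23
          | exact lt_trans h23 h34
          | exact lt_trans h12 (lt_trans h23 h34)
    · have hbdd : BddAbove {r : ℝ | ∃ i j : Fin 4, r = dist (v i) (v j)} := by
        have he : {r : ℝ | ∃ i j : Fin 4, r = dist (v i) (v j)} =
            Set.range (fun p : Fin 4 × Fin 4 => dist (v p.1) (v p.2)) := by
          ext r
          constructor
          · rintro ⟨i, j, rfl⟩; exact ⟨(i, j), rfl⟩
          · rintro ⟨⟨i, j⟩, rfl⟩; exact ⟨i, j, rfl⟩
        rw [he]
        exact (Set.finite_range _).bddAbove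
      have hmem : dist x1 x2 ∈ {r : ℝ | ∃ i j : Fin 4, r = dist (v i) (v j)} :=
        ⟨0, 1, rfl⟩
      exact le_trans hdiam (le_csSup hbdd hmem)
    · apply csSup_le
      · exact ⟨dist (v 0) (v 0), 0, 0, rfl, rfl⟩
      · rintro r ⟨i, j, hpar, rfl⟩
        have h2ε : (0:ℝ) ≤ 2 * ε := by linarith
        change dist (v i) (v j) ≤ 2 * ε
        fin_cases i <;> fin_cases j <;>
          first
            | exact absurd hpar (by decide)
            | (rw [dist_self]; linarith)
            | exact w13
            | exact w24
            | (rw [dist_comm]; exact w13)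
            | (rw [dist_comm]; exact w24)
  constructor
  · intro T ε hε
    have hmin : (0:ℝ) < min ε (1/100) := lt_min hε (by norm_num)
    obtain ⟨x, hsn, hd, hw⟩ := key T (min ε (1/100)) hmin (min_le_right _ _)
    refine ⟨x, hsn, le_trans ?_ hd, le_trans hw ?_⟩
    · have := min_le_left ε (1/100)
      linarith
    · have := min_le_left ε (1/100)
      linarith
  · intro T E hE
    have hc : (0:ℝ) < 100*(E+1) := by positivity
    have hε : (0:ℝ) < 1/(100*(E+1)) := by positivity
    have hle : (1/(100*(E+1)) : ℝ) ≤ 1/100 := by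
      rw [div_le_div_iff₀ hc (by norm_num : (0:ℝ) < 100)]
      nlinarith
    obtain ⟨x, hsn, hd, hw⟩ := key T _ hε hle
    refine ⟨x, hsn, ?_⟩
    have hqe : (1/(100*(E+1))) * (100*(E+1)) = 1 := by field_simp
    have h3 : E * (2 * (1/(100*(E+1)))) < 1/3 - 1/(100*(E+1)) := by nlinarith
    calc E * snakeWidth (fun x y : M => dist x y) x
        ≤ E * (2 * (1/(100*(E+1)))) := mul_le_mul_of_nonneg_left hw (le_of_lt hE)
      _ < 1/3 - 1/(100*(E+1)) := h3
      _ ≤ snakeDiam (fun x y : M => dist x y) x := hd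
end

section
/- Let G be a one-ended finitely generated group, equipped with the word metric of a finite generating set S. Then for any total order T on G and any integer N, there exists a snake on 4 points in (G,T) of width 1 and of diameter at least N. In particular, Br(G) ≥ 4. -/
open scoped Classical

/-- The order breakpoint `Br(M,T)`: the smallest `s` with `OR_{M,T}(s) < s`, or `∞`. -/
noncomputable def Brd {α : Type*} (d : α → α → ℝ) (T : LinearOrder α) : ℕ∞ :=
  if h : ∃ s : ℕ, ORd d T s < s then (Nat.find h : ℕ∞) else ⊤

/-- The order breakpoint of the (unordered) space: minimum over all total orders. -/
noncomputable def BrSp {α : Type*} (d : α → α → ℝ) : ℕ∞ :=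
  ⨅ T : LinearOrder α, Brd d T

/-- The Cayley graph of a group with respect to a finite set `S`. -/
def cayley {G : Type*} [Group G] (S : Finset G) : SimpleGraph G :=
  SimpleGraph.fromRel (fun g h => g⁻¹ * h ∈ S)

/-- A graph is one-ended: for every finite set `K` of vertices, the graph induced on the
complement of `K` has exactly one infinite connected component. -/
def OneEnded {α : Type*} (Γ : SimpleGraph α) : Prop :=
  ∀ K : Finset α,
    ∃! C : (Γ.induce ((K : Set α)ᶜ)).ConnectedComponent, C.supp.Infinite

namespace Stmt16Aux

open SimpleGraph

variable {G : Type*} [Group G] (S : Finset G)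

lemma cayley_adj {g h : G} :
    (cayley S).Adj g h ↔ g ≠ h ∧ (g⁻¹ * h ∈ S ∨ h⁻¹ * g ∈ S) := by
  simp [cayley, SimpleGraph.fromRel_adj]

/-- Left multiplication as a graph isomorphism of the Cayley graph. -/
def mulIso (g : G) : cayley S ≃g cayley S where
  toEquiv := Equiv.mulLeft g
  map_rel_iff' := by
    intro a b
    simp only [Equiv.coe_mulLeft, cayley_adj, ne_eq, mul_right_inj]
    constructor
    · rintro ⟨h1, h2⟩
      refine ⟨h1, ?_⟩
      simpa [mul_inv_rev, mul_assoc] using h2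
    · rintro ⟨h1, h2⟩
      refine ⟨h1, ?_⟩
      simpa [mul_inv_rev, mul_assoc] using h2

lemma adj_smul {g a b : G} : (cayley S).Adj (g * a) (g * b) ↔ (cayley S).Adj a b :=
  (mulIso S g).map_rel_iff'

variable (hgen : Subgroup.closure (S : Set G) = ⊤)

include hgen in
lemma reachable_one (g : G) : (cayley S).Reachable 1 g := by
  have hmem : g ∈ Subgroup.closure (S : Set G) := by rw [hgen]; trivial
  induction hmem using Subgroup.closure_induction with
  | mem s hs =>
    by_cases h : s = 1
    · subst h; rfl
    · exact (SimpleGraph.Adj.reachable (by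
        rw [cayley_adj]; exact ⟨fun hh => h hh.symm, Or.inl (by simpa using hs)⟩))
  | one => rfl
  | mul a b _ _ ha hb =>
    refine ha.trans ?_
    have := hb.map (mulIso S a).toHom
    simpa [mulIso, Equiv.coe_mulLeft] using this
  | inv a _ ha =>
    have := ha.map (mulIso S a⁻¹).toHom
    simpa [mulIso, Equiv.coe_mulLeft] using this.symm

include hgen in
lemma cayley_connected : (cayley S).Connected := by
  refine ⟨?_⟩
  intro u v
  exact (reachable_one S hgen u).symm.trans (reachable_one S hgen v)

include hgen in
lemma dist_smul (g u v : G) :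
    (cayley S).dist (g * u) (g * v) = (cayley S).dist u v := by
  have key : ∀ a b c : G, (cayley S).dist (c * a) (c * b) ≤ (cayley S).dist a b := by
    intro a b c
    obtain ⟨w, hw⟩ := ((cayley_connected S hgen) a b).exists_walk_length_eq_dist
    have := SimpleGraph.dist_le (w.map (mulIso S c).toHom)
    exact (by simpa [hw] using this : (cayley S).dist ((mulIso S c) a) ((mulIso S c) b) ≤ (cayley S).dist a b)
  refine le_antisymm (key u v g) ?_
  have := key (g * u) (g * v) g⁻¹
  simpa using this



/-- ball in graph metric -/
def gball (Γ : SimpleGraph G) (x : G) (r : ℕ) : Set G := {y | Γ.dist x y ≤ r}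

lemma nbr_finite [DecidableEq G] (x : G) : {y | (cayley S).Adj x y}.Finite := by
  have : {y | (cayley S).Adj x y} ⊆ ((fun z => x * z) '' ((S : Set G) ∪ (S : Set G)⁻¹)) := by
    intro y hy
    rcases (by simpa [cayley, SimpleGraph.fromRel_adj] using hy :
      x ≠ y ∧ (x⁻¹ * y ∈ S ∨ y⁻¹ * x ∈ S)) with ⟨_, h | h⟩
    · exact ⟨x⁻¹ * y, Or.inl h, by group⟩
    · exact ⟨x⁻¹ * y, Or.inr (by simpa using h), by group⟩
  exact Set.Finite.subset (Set.Finite.image _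
    (S.finite_toSet.union (S.finite_toSet.inv))) this

lemma gball_finite [DecidableEq G] (hgen : Subgroup.closure (S : Set G) = ⊤)
    (x : G) (r : ℕ) : (gball (cayley S) x r).Finite := by
  induction r with
  | zero =>
    refine Set.Finite.subset (Set.finite_singleton x) ?_
    intro y hy
    have : (cayley S).dist x y = 0 := Nat.le_zero.mp hy
    have := ((cayley_connected S hgen).dist_eq_zero_iff ).mp this
    simp [this]
  | succ r ih =>
    have hsub : gball (cayley S) x (r+1) ⊆
        gball (cayley S) x r ∪ ⋃ z ∈ gball (cayley S) x r, {y | (cayley S).Adj z y} := by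
      intro y hy
      obtain ⟨w, hw⟩ := ((cayley_connected S hgen) x y).exists_walk_length_eq_dist
      have hw' : w.reverse.length = (cayley S).dist x y := by simpa using hw
      cases hrev : w.reverse with
      | nil =>
        left
        simp [gball, SimpleGraph.dist_self]
      | @cons _ z _ hadj p =>
        right
        have hlen : p.length + 1 = (cayley S).dist x y := by
          simpa [hrev] using hw'
        have hdz : (cayley S).dist x z ≤ r := by
          have h2 : (cayley S).dist z x ≤ p.length := SimpleGraph.dist_le p
          have hd : (cayley S).dist x y ≤ r + 1 := hy
          rw [SimpleGraph.dist_comm] at h2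
          omega
        exact Set.mem_biUnion hdz (hadj.symm)
    exact Set.Finite.subset (ih.union (Set.Finite.biUnion ih (fun z _ => nbr_finite S z))) hsub




/-- step of a path avoiding K -/
def OutStep (K : Set G) (u v : G) : Prop := (cayley S).Adj u v ∧ u ∉ K ∧ v ∉ K

/-- connectivity outside K -/
def Out (K : Set G) : G → G → Prop := Relation.ReflTransGen (OutStep S K)

lemma Out.symm {K : Set G} {x y : G} (h : Out S K x y) : Out S K y x :=
  haveI : Std.Symm (OutStep S K) := ⟨fun _ _ hab => ⟨hab.1.symm, hab.2.2, hab.2.1⟩⟩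
  Std.Symm.symm (r := Relation.ReflTransGen (OutStep S K)) _ _ h

lemma Out.right_notmem {K : Set G} {x y : G} (h : Out S K x y) (hx : x ∉ K) : y ∉ K := by
  induction h with
  | refl => exact hx
  | tail _ hbc _ => exact hbc.2.2

def outComp (K : Set G) (x : G) : Set G := {z | Out S K x z}

lemma outComp_eq_of_out {K : Set G} {x y : G} (h : Out S K x y) :
    outComp S K x = outComp S K y := by
  ext z
  exact ⟨fun hz => (h.symm S).trans hz, fun hz => h.trans hz⟩

lemma out_to_reach {K : Set G} {x y : G} (h : Out S K x y) :
    ∀ (hx : x ∈ Kᶜ) (hy : y ∈ Kᶜ),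
      ((cayley S).induce Kᶜ).Reachable ⟨x, hx⟩ ⟨y, hy⟩ := by
  induction h with
  | refl => intro hx hy; rfl
  | @tail b c hab hbc ih =>
    intro hx hy
    refine (ih hx hbc.2.1).trans (SimpleGraph.Adj.reachable ?_)
    exact hbc.1

lemma reach_to_out {K : Set G} {x y : G} (hx : x ∈ Kᶜ) (hy : y ∈ Kᶜ)
    (h : ((cayley S).induce Kᶜ).Reachable ⟨x, hx⟩ ⟨y, hy⟩) : Out S K x y := by
  rw [SimpleGraph.reachable_iff_reflTransGen] at h
  have : ∀ (a b : {z // z ∈ Kᶜ}),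
      Relation.ReflTransGen ((cayley S).induce Kᶜ).Adj a b → Out S K a.1 b.1 := by
    intro a b hab
    induction hab with
    | refl => exact Relation.ReflTransGen.refl
    | @tail p q hpq hq ih => exact ih.tail ⟨hq, p.2, q.2⟩
  exact this _ _ h

lemma val_image_supp (K : Set G) (x : G) (hx : x ∈ Kᶜ) :
    Subtype.val '' (((cayley S).induce Kᶜ).connectedComponentMk ⟨x, hx⟩).supp
      = outComp S K x := by
  ext z
  simp only [Set.mem_image, SimpleGraph.ConnectedComponent.mem_supp_iff, outComp,
    Set.mem_setOf_eq]
  constructor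
  · rintro ⟨⟨z', hz'⟩, hmk, rfl⟩
    exact ((reach_to_out S hz' hx (SimpleGraph.ConnectedComponent.eq.mp hmk)).symm S)
  · intro hz
    have hzK : z ∈ Kᶜ := (hz.right_notmem S hx : z ∉ K)
    exact ⟨⟨z, hzK⟩, SimpleGraph.ConnectedComponent.eq.mpr
      (out_to_reach S (hz.symm S) hzK hx), rfl⟩


lemma out_of_infinite (hend : OneEnded (cayley S)) (K : Finset G) {x y : G} (hx : x ∉ (K : Set G)) (hy : y ∉ (K : Set G))
    (hxi : (outComp S (↑K) x).Infinite) (hyi : (outComp S (↑K) y).Infinite) :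
    Out S (↑K) x y := by
  obtain ⟨C, _, huniq⟩ := hend K
  have hsupp : ∀ (z : G) (hz : z ∉ (K : Set G)), (outComp S (↑K) z).Infinite →
      (((cayley S).induce ((K : Set G))ᶜ).connectedComponentMk ⟨z, hz⟩) = C := by
    intro z hz hzi
    refine huniq _ ?_
    by_contra hfin
    rw [Set.not_infinite] at hfin
    have : (Subtype.val ''
        (((cayley S).induce ((K : Set G))ᶜ).connectedComponentMk ⟨z, hz⟩).supp).Finite :=
      hfin.image _
    rw [val_image_supp S (↑K) z hz] at this
    exact hzi this
  have h1 := hsupp x hx hxi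
  have h2 := hsupp y hy hyi
  have : (((cayley S).induce ((K : Set G))ᶜ).connectedComponentMk ⟨x, hx⟩)
      = (((cayley S).induce ((K : Set G))ᶜ).connectedComponentMk ⟨y, hy⟩) := by
    rw [h1, h2]
  exact reach_to_out S hx hy (SimpleGraph.ConnectedComponent.eq.mp this)



lemma out_to_boundary {K : Set G} :
    ∀ {y k : G}, (cayley S).Walk y k → k ∈ K → y ∉ K →
      ∃ v u, Out S K y v ∧ (cayley S).Adj v u ∧ u ∈ K := by
  intro y k w
  induction w with
  | nil => intro hk hy; exact absurd hk hy
  | @cons a b c hadj p ih =>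
    intro hk hy
    by_cases hb : b ∈ K
    · exact ⟨a, b, Relation.ReflTransGen.refl, hadj, hb⟩
    · obtain ⟨v, u, h1, h2, h3⟩ := ih hk hb
      exact ⟨v, u, Relation.ReflTransGen.head ⟨hadj, hy, hb⟩ h1, h2, h3⟩

include hgen in
lemma comp_rep {K : Set G} (hK : K.Nonempty) {y : G} (hy : y ∉ K) :
    ∃ v, Out S K y v ∧ ∃ u ∈ K, (cayley S).Adj v u := by
  obtain ⟨k, hk⟩ := hK
  obtain ⟨w⟩ := (cayley_connected S hgen) y k
  obtain ⟨v, u, h1, h2, h3⟩ := out_to_boundary S w hk hy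
  exact ⟨v, h1, u, h3, h2⟩

include hgen in
lemma dtri (a b c : G) : (cayley S).dist a c ≤ (cayley S).dist a b + (cayley S).dist b c :=
  (cayley_connected S hgen).dist_triangle

lemma dadj {a b : G} (h : (cayley S).Adj a b) : (cayley S).dist a b = 1 :=
  SimpleGraph.dist_eq_one_iff_adj.mpr h

include hgen in
lemma dzero {a b : G} (h : (cayley S).dist a b = 0) : a = b :=
  ((cayley_connected S hgen).dist_eq_zero_iff).mp h

include hgen in
lemma finite_subset_ball (x : G) {W : Set G} (hW : W.Finite) :
    ∃ R : ℕ, ∀ w ∈ W, (cayley S).dist x w ≤ R := by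
  classical
  refine ⟨hW.toFinset.sup (fun w => (cayley S).dist x w), ?_⟩
  intro w hw
  exact Finset.le_sup (by simpa using hw)

include hgen in
lemma bad_bounded_one [DecidableEq G] (hend : OneEnded (cayley S)) (r : ℕ) :
    ∃ R : ℕ, r < R ∧ ∀ y : G, R < (cayley S).dist 1 y →
      (outComp S (gball (cayley S) 1 r) y).Infinite := by
  classical
  set B := gball (cayley S) 1 r with hBdef
  have hBfin : B.Finite := gball_finite S hgen 1 r
  set Y := {v : G | v ∉ B ∧ ∃ u ∈ B, (cayley S).Adj v u} with hYdef
  have hYfin : Y.Finite := by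
    refine Set.Finite.subset (gball_finite S hgen 1 (r+1)) ?_
    rintro v ⟨-, u, hu, hadj⟩
    have h1 : (cayley S).dist 1 v ≤ (cayley S).dist 1 u + (cayley S).dist u v :=
      dtri S hgen 1 u v
    have h2 : (cayley S).dist u v = 1 := dadj S hadj.symm
    have h3 : (cayley S).dist 1 u ≤ r := hu
    simp only [gball, Set.mem_setOf_eq]
    omega
  set Bad := {y : G | y ∉ B ∧ (outComp S B y).Finite} with hBaddef
  have hBadfin : Bad.Finite := by
    have hsub : Bad ⊆ ⋃ v ∈ Y, (outComp S B v ∩ Bad) := by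
      intro y hy
      obtain ⟨v, hout, u, huB, hadj⟩ := comp_rep S hgen ⟨1, by simp [hBdef, gball, SimpleGraph.dist_self]⟩ hy.1
      have hvB : v ∉ B := hout.right_notmem S hy.1
      refine Set.mem_biUnion (show v ∈ Y from ⟨hvB, u, huB, hadj⟩) ?_
      exact ⟨(hout.symm S).trans Relation.ReflTransGen.refl, hy⟩
    refine Set.Finite.subset (Set.Finite.biUnion hYfin ?_) hsub
    intro v hv
    by_cases hne : (outComp S B v ∩ Bad).Nonempty
    · obtain ⟨y, hy1, hy2⟩ := hne
      have : outComp S B v = outComp S B y := outComp_eq_of_out S hy1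
      rw [this]
      exact hy2.2.inter_of_left _
    · rw [Set.not_nonempty_iff_eq_empty] at hne
      rw [hne]; exact Set.finite_empty
  obtain ⟨R0, hR0⟩ := finite_subset_ball S hgen 1 hBadfin
  refine ⟨max (r+1) (R0+1) + 1, by omega, ?_⟩
  intro y hy
  have hyB : y ∉ B := by
    intro hyB
    have : (cayley S).dist 1 y ≤ r := hyB
    omega
  by_contra hfin
  rw [Set.not_infinite] at hfin
  have : y ∈ Bad := ⟨hyB, hfin⟩
  have := hR0 y this
  omega

lemma out_smul {K : Set G} {u v : G} (g : G) (h : Out S K u v) :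
    Out S ((fun z => g * z) '' K) (g * u) (g * v) := by
  induction h with
  | refl => exact Relation.ReflTransGen.refl
  | @tail b c hab hbc ih =>
    refine ih.tail ⟨(adj_smul S).mpr hbc.1, ?_, ?_⟩
    · rintro ⟨w, hw, hww⟩
      have : w = b := mul_left_cancel hww
      exact hbc.2.1 (this ▸ hw)
    · rintro ⟨w, hw, hww⟩
      have : w = c := mul_left_cancel hww
      exact hbc.2.2 (this ▸ hw)

include hgen in
lemma gball_smul (x : G) (r : ℕ) :
    gball (cayley S) x r = (fun z => x * z) '' gball (cayley S) 1 r := by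
  ext y
  simp only [gball, Set.mem_setOf_eq, Set.mem_image]
  constructor
  · intro h
    refine ⟨x⁻¹ * y, ?_, by group⟩
    have h2 := dist_smul S hgen x⁻¹ x y
    simp only [inv_mul_cancel] at h2
    exact le_trans (le_of_eq h2) h
  · rintro ⟨z, hz, rfl⟩
    have h2 := dist_smul S hgen x 1 z
    simp only [mul_one] at h2
    exact le_trans (le_of_eq h2) hz

include hgen in
lemma bad_bounded [DecidableEq G] (hend : OneEnded (cayley S)) (r : ℕ) :
    ∃ R : ℕ, r < R ∧ ∀ x y : G, R < (cayley S).dist x y →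
      (outComp S (gball (cayley S) x r) y).Infinite := by
  obtain ⟨R, hrR, hR⟩ := bad_bounded_one S hgen hend r
  refine ⟨R, hrR, ?_⟩
  intro x y hxy
  have hd : R < (cayley S).dist 1 (x⁻¹ * y) := by
    have h2 := dist_smul S hgen x⁻¹ x y
    simp only [inv_mul_cancel] at h2
    omega
  have hinf := hR (x⁻¹ * y) hd
  have himg : (fun z => x * z) '' (outComp S (gball (cayley S) 1 r) (x⁻¹ * y))
      ⊆ outComp S (gball (cayley S) x r) y := by
    rintro _ ⟨w, hw, rfl⟩
    have := out_smul S x hw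
    rw [← gball_smul S hgen x r] at this
    simpa [outComp] using this
  exact Set.Infinite.mono himg (Set.Infinite.image (Set.injOn_of_injective (mul_right_injective x)) hinf)

include hgen in
lemma infiniteG (hend : OneEnded (cayley S)) : Infinite G := by
  obtain ⟨C, hC, -⟩ := hend (∅ : Finset G)
  have := hC.to_subtype
  exact Infinite.of_injective (fun a : C.supp => (a.1.1 : G))
    (fun a b hab => Subtype.ext (Subtype.ext hab))

include hgen in
lemma exists_far [DecidableEq G] (hend : OneEnded (cayley S)) {W : Set G} (hW : W.Finite) (R : ℕ) :
    ∃ g : G, ∀ w ∈ W, R < (cayley S).dist w g := by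
  classical
  have : Infinite G := infiniteG S hgen hend
  have hU : (⋃ w ∈ W, gball (cayley S) w R).Finite :=
    Set.Finite.biUnion hW (fun w _ => gball_finite S hgen w R)
  obtain ⟨g, -, hg⟩ := Set.Infinite.exists_notMem_finset Set.infinite_univ hU.toFinset
  refine ⟨g, fun w hw => ?_⟩
  by_contra h
  exact hg (by simp only [Set.Finite.mem_toFinset]; exact Set.mem_biUnion hw (by omega : (cayley S).dist w g ≤ R))


section OrderSec
variable [LinearOrder G]

/-- A far interleaved ("crossing") pair of edges. -/
def FarX (N : ℕ) : Prop :=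
  ∃ a c b e : G, a < c ∧ c < b ∧ b < e ∧ (cayley S).Adj a b ∧ (cayley S).Adj c e ∧
    N ≤ (cayley S).dist c b

include hgen in
lemma machine [DecidableEq G] {N R₁ : ℕ} (hno : ¬ FarX S N)
    (hrR : N + 2 < R₁)
    (hR₁ : ∀ x y : G, R₁ < (cayley S).dist x y →
       (outComp S (gball (cayley S) x (N+2)) y).Infinite)
    (hend : OneEnded (cayley S))
    {a b u w : G} (hab : (cayley S).Adj a b) (hab' : a < b)
    (hu1 : a < u) (hu2 : u < b) (hw : w < a ∨ b < w)
    (hdu : R₁ < (cayley S).dist a u) (hdw : R₁ < (cayley S).dist a w) : False := by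
  classical
  set K := gball (cayley S) a (N+2) with hK
  have hKfin : K.Finite := gball_finite S hgen a (N+2)
  have cross : ∀ p q : G, (cayley S).Adj p q → a < p → p < b → (q < a ∨ b < q) →
      N + 2 ≤ (cayley S).dist a p → False := by
    intro p q hpq h1 h2 h3 h4
    rcases h3 with h3 | h3
    · exact hno ⟨q, a, p, b, h3, h1, h2, hpq.symm, hab, by omega⟩
    · have t1 : (cayley S).dist a p ≤ (cayley S).dist a b + (cayley S).dist b p :=
        dtri S hgen a b p
      have hab1 : (cayley S).dist a b = 1 := dadj S hab
      have hcomm : (cayley S).dist b p = (cayley S).dist p b := SimpleGraph.dist_comm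
      exact hno ⟨a, p, b, q, h1, h2, h3, hab, hpq, by omega⟩
  have stay : ∀ z, Out S K u z → a < z ∧ z < b := by
    intro z hz
    induction hz with
    | refl => exact ⟨hu1, hu2⟩
    | @tail p q hpq hstep ih =>
      have hp := ih
      have hqK : q ∉ K := hstep.2.2
      have hq4 : N + 2 < (cayley S).dist a q := by
        by_contra hcon
        exact hqK (by simp only [hK, gball, Set.mem_setOf_eq]; omega)
      have hpK : p ∉ K := hstep.2.1
      have hp4 : N + 2 < (cayley S).dist a p := by
        by_contra hcon
        exact hpK (by simp only [hK, gball, Set.mem_setOf_eq]; omega)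
      rcases lt_trichotomy q a with h | h | h
      · exact (cross p q hstep.1 hp.1 hp.2 (Or.inl h) (by omega)).elim
      · subst h
        simp [SimpleGraph.dist_self] at hq4
      · rcases lt_trichotomy q b with h' | h' | h'
        · exact ⟨h, h'⟩
        · subst h'
          have : (cayley S).dist a q = 1 := dadj S hab
          omega
        · exact (cross p q hstep.1 hp.1 hp.2 (Or.inr h') (by omega)).elim
  have hnout : ¬ Out S K u w := by
    intro hout
    have := stay w hout
    rcases hw with h | h
    · exact absurd this.1 (not_lt.mpr h.le)
    · exact absurd this.2 (not_lt.mpr h.le)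
  have huK : u ∉ K := by
    simp only [hK, gball, Set.mem_setOf_eq]
    omega
  have hwK : w ∉ K := by
    simp only [hK, gball, Set.mem_setOf_eq]
    omega
  have hinfu := hR₁ a u hdu
  have hinfw := hR₁ a w hdw
  have hout := out_of_infinite S hend hKfin.toFinset
    (by simpa [Set.Finite.coe_toFinset] using huK)
    (by simpa [Set.Finite.coe_toFinset] using hwK)
    (by simpa only [Set.Finite.coe_toFinset] using hinfu)
    (by simpa only [Set.Finite.coe_toFinset] using hinfw)
  rw [Set.Finite.coe_toFinset] at hout
  exact hnout hout

include hgen in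
lemma dichotomy [DecidableEq G] {N R₁ : ℕ} (hno : ¬ FarX S N)
    (hrR : N + 2 < R₁)
    (hR₁ : ∀ x y : G, R₁ < (cayley S).dist x y →
       (outComp S (gball (cayley S) x (N+2)) y).Infinite)
    (hend : OneEnded (cayley S))
    {a b : G} (hab : (cayley S).Adj a b) (hab' : a < b) :
    (∀ u, a < u → u < b → (cayley S).dist a u ≤ R₁) ∨
    (∀ w, (w < a ∨ b < w) → (cayley S).dist a w ≤ R₁) := by
  by_contra hcon
  push_neg at hcon
  obtain ⟨⟨u, hu1, hu2, hu3⟩, ⟨w, hw1, hw2⟩⟩ := hcon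
  exact machine S hgen hno hrR hR₁ hend hab hab' hu1 hu2 hw1 hu3 hw2

lemma exists_cross {A : Set G} :
    ∀ {y k : G}, (cayley S).Walk y k → y ∈ A → k ∉ A →
      ∃ p q, (cayley S).Adj p q ∧ p ∈ A ∧ q ∉ A := by
  intro y k w
  induction w with
  | nil => intro hy hk; exact absurd hy hk
  | @cons a b c hadj p ih =>
    intro hy hk
    by_cases hb : b ∈ A
    · exact ih hb hk
    · exact ⟨a, b, hadj, hy, hb⟩

include hgen in
lemma caseA [DecidableEq G] {N R₁ : ℕ} (hno : ¬ FarX S N)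
    (hrR : N + 2 < R₁)
    (hR₁ : ∀ x y : G, R₁ < (cayley S).dist x y →
       (outComp S (gball (cayley S) x (N+2)) y).Infinite)
    (hend : OneEnded (cayley S))
    (A : Set G) (hdown : ∀ ⦃x y : G⦄, x ∈ A → y ≤ x → y ∈ A)
    (hAinf : A.Infinite) (hAcinf : Aᶜ.Infinite) : False := by
  classical
  set L := {x : G | ∃ y, (cayley S).Adj x y ∧ ((x ∈ A ∧ y ∉ A) ∨ (x ∉ A ∧ y ∈ A))} with hLdef
  obtain ⟨a₀, ha₀⟩ := hAinf.nonempty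
  obtain ⟨b₀, hb₀⟩ := hAcinf.nonempty
  obtain ⟨w₀⟩ := (cayley_connected S hgen) a₀ b₀
  obtain ⟨p₀, q₀, hpq₀, hp₀, hq₀⟩ := exists_cross S w₀ ha₀ hb₀
  have hLne : L.Nonempty := ⟨p₀, q₀, hpq₀, Or.inl ⟨hp₀, hq₀⟩⟩
  have stayA : ∀ x z, Out S L x z → x ∈ A → z ∈ A := by
    intro x z hxz
    induction hxz with
    | refl => exact id
    | @tail p q hpq hstep ih =>
      intro hx
      have hp := ih hx
      by_contra hq
      exact hstep.2.1 ⟨q, hstep.1, Or.inl ⟨hp, hq⟩⟩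
  have stayAc : ∀ x z, Out S L x z → x ∉ A → z ∉ A := by
    intro x z hxz
    induction hxz with
    | refl => exact id
    | @tail p q hpq hstep ih =>
      intro hx
      have hp := ih hx
      exact fun hq => hstep.2.1 ⟨q, hstep.1, Or.inr ⟨hp, hq⟩⟩
  by_cases hLfin : L.Finite
  · have main : ∀ (B : Set G), B.Infinite → (∀ x z, Out S L x z → x ∈ B → z ∈ B) →
        ∃ x, x ∈ B ∧ x ∉ L ∧ (outComp S L x).Infinite := by
      intro B hBinf hstay
      set Y := {v : G | v ∉ L ∧ ∃ u ∈ L, (cayley S).Adj v u} with hY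
      have hYfin : Y.Finite := by
        refine Set.Finite.subset (Set.Finite.biUnion hLfin (fun u _ => nbr_finite S u)) ?_
        rintro v ⟨hv, u, hu, hadj⟩
        exact Set.mem_biUnion hu hadj.symm
      have hsub : B \ L ⊆ ⋃ v ∈ Y, (outComp S L v ∩ (B \ L)) := by
        intro x hx
        obtain ⟨v, hout, u, huL, hadj⟩ := comp_rep S hgen hLne hx.2
        have hvL : v ∉ L := hout.right_notmem S hx.2
        exact Set.mem_biUnion (show v ∈ Y from ⟨hvL, u, huL, hadj⟩) ⟨hout.symm S, hx⟩
      by_contra hcon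
      push_neg at hcon
      have hfin : (B \ L).Finite := by
        refine Set.Finite.subset (Set.Finite.biUnion hYfin ?_) hsub
        intro v hv
        by_cases hne : (outComp S L v ∩ (B \ L)).Nonempty
        · obtain ⟨x, hx1, hx2⟩ := hne
          rw [outComp_eq_of_out S hx1]
          have := hcon x hx2.1 hx2.2
          exact this.inter_of_left _
        · rw [Set.not_nonempty_iff_eq_empty] at hne
          rw [hne]; exact Set.finite_empty
      have hBsub : B ⊆ (B \ L) ∪ L := by
        intro z hz
        by_cases h : z ∈ L
        · exact Or.inr h
        · exact Or.inl ⟨hz, h⟩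
      exact hBinf (Set.Finite.subset (hfin.union hLfin) hBsub)
    obtain ⟨x, hxB, hxL, hxinf⟩ := main A hAinf (fun x z h hx => stayA x z h hx)
    obtain ⟨y, hyB, hyL, hyinf⟩ := main Aᶜ hAcinf (fun x z h hx => stayAc x z h hx)
    have hout := out_of_infinite S hend hLfin.toFinset
      (by simpa [Set.Finite.coe_toFinset] using hxL)
      (by simpa [Set.Finite.coe_toFinset] using hyL)
      (by simpa only [Set.Finite.coe_toFinset] using hxinf)
      (by simpa only [Set.Finite.coe_toFinset] using hyinf)
    rw [Set.Finite.coe_toFinset] at hout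
    exact hyB (stayA x y hout hxB)
  · -- L infinite
    have hLinf : L.Infinite := hLfin
    set D : ℕ := R₁ + N + 10 with hD
    have pick : ∀ (W : Set G), W.Finite → ∃ l ∈ L, ∀ w ∈ W, 3*D < (cayley S).dist w l := by
      intro W hW
      have hU : (⋃ w ∈ W, gball (cayley S) w (3*D)).Finite :=
        Set.Finite.biUnion hW (fun w _ => gball_finite S hgen w (3*D))
      obtain ⟨l, hlL, hl⟩ := Set.Infinite.exists_notMem_finset hLinf hU.toFinset
      refine ⟨l, hlL, fun w hw => ?_⟩
      by_contra h
      exact hl (by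
        simp only [Set.Finite.mem_toFinset]
        exact Set.mem_biUnion hw (by omega : (cayley S).dist w l ≤ 3*D))
    obtain ⟨l₁, hl₁L, -⟩ := pick ∅ Set.finite_empty
    obtain ⟨l₂, hl₂L, hl₂⟩ := pick {l₁} (Set.finite_singleton l₁)
    obtain ⟨l₃, hl₃L, hl₃⟩ := pick {l₁, l₂} (Set.Finite.insert l₁ (Set.finite_singleton l₂))
    have getedge : ∀ l ∈ L, ∃ a b, (cayley S).Adj a b ∧ a ∈ A ∧ b ∉ A ∧
        (cayley S).dist l a ≤ 1 := by
      intro l hl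
      obtain ⟨y, hadj, hcase⟩ := hl
      rcases hcase with ⟨h1, h2⟩ | ⟨h1, h2⟩
      · exact ⟨l, y, hadj, h1, h2, by simp [SimpleGraph.dist_self]⟩
      · exact ⟨y, l, hadj.symm, h2, h1, le_of_eq (dadj S hadj)⟩
    obtain ⟨a₁, b₁, hadj₁, ha₁, hb₁, hd₁⟩ := getedge l₁ hl₁L
    obtain ⟨a₂, b₂, hadj₂, ha₂, hb₂, hd₂⟩ := getedge l₂ hl₂L
    obtain ⟨a₃, b₃, hadj₃, ha₃, hb₃, hd₃⟩ := getedge l₃ hl₃L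
    have horient : ∀ {a b : G}, a ∈ A → b ∉ A → a < b := by
      intro a b ha hb
      exact not_le.mp (fun h => hb (hdown ha h))
    -- pairwise distance between the aᵢ's
    have hdaux : ∀ {li lj ai aj : G}, 3*D < (cayley S).dist li lj →
        (cayley S).dist li ai ≤ 1 → (cayley S).dist lj aj ≤ 1 →
        D ≤ (cayley S).dist ai aj := by
      intro li lj ai aj h1 h2 h3
      have t1 := dtri S hgen li ai lj
      have t2 := dtri S hgen ai lj aj  -- wrong shape; fix below
      have t3 := dtri S hgen ai aj lj
      have c1 : (cayley S).dist ai li = (cayley S).dist li ai := SimpleGraph.dist_comm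
      have c2 : (cayley S).dist aj lj = (cayley S).dist lj aj := SimpleGraph.dist_comm
      have t4 := dtri S hgen li lj aj  -- unneeded
      have t5 := dtri S hgen ai li lj
      have t6 := dtri S hgen li aj lj  -- unneeded
      -- li→lj ≤ li→ai + ai→aj + aj→lj
      have t7 := dtri S hgen li ai aj  -- li→aj ≤ li→ai + ai→aj
      have t8 := dtri S hgen li aj lj  -- li→lj ≤ li→aj + aj→lj
      have c3 : (cayley S).dist aj lj = (cayley S).dist lj aj := SimpleGraph.dist_comm
      omega
    have d12 : D ≤ (cayley S).dist a₁ a₂ := hdaux (by simpa using hl₂ l₁ rfl) hd₁ hd₂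
    have d13 : D ≤ (cayley S).dist a₁ a₃ := hdaux (hl₃ l₁ (by simp)) hd₁ hd₃
    have d23 : D ≤ (cayley S).dist a₂ a₃ := hdaux (hl₃ l₂ (by simp)) hd₂ hd₃
    -- nested pair lemma
    have pairlem : ∀ {ai bi aj bj : G}, (cayley S).Adj ai bi → (cayley S).Adj aj bj →
        ai ∈ A → bi ∉ A → aj ∈ A → bj ∉ A → ai < aj →
        D ≤ (cayley S).dist ai aj → bj < bi := by
      intro ai bi aj bj hi hj hai hbi haj hbj hij hd
      have h1 : aj < bi := horient haj hbi
      have hdi : (cayley S).dist ai bi = 1 := dadj S hi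
      have hdj : (cayley S).dist aj bj = 1 := dadj S hj
      rcases lt_trichotomy bi bj with h | h | h
      · -- FarX (ai, aj, bi, bj)
        have hmid : N ≤ (cayley S).dist aj bi := by
          have t1 := dtri S hgen ai aj bi  -- ai→bi ≤ ai→aj + aj→bi
          have t2 := dtri S hgen aj ai bi  -- aj→bi ≤ aj→ai + ai→bi
          have t3 := dtri S hgen ai bi aj  -- ai→aj ≤ ai→bi + bi→aj
          have c1 : (cayley S).dist bi aj = (cayley S).dist aj bi := SimpleGraph.dist_comm
          omega
        exact absurd ⟨ai, aj, bi, bj, hij, h1, h, hi, hj, hmid⟩ hno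
      · -- bi = bj impossible: distance
        subst h
        have t1 := dtri S hgen ai bi aj
        have c1 : (cayley S).dist bi aj = (cayley S).dist aj bi := SimpleGraph.dist_comm
        omega
      · exact h
    -- final: sorted triple gives contradiction via machine
    have final : ∀ (ai bi aj bj ak bk : G), (cayley S).Adj ai bi → (cayley S).Adj aj bj →
        (cayley S).Adj ak bk → ai ∈ A → bi ∉ A → aj ∈ A → bj ∉ A → ak ∈ A → bk ∉ A →
        ai < aj → aj < ak →
        D ≤ (cayley S).dist ai aj → D ≤ (cayley S).dist aj ak →
        D ≤ (cayley S).dist ai ak → False := by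
      intro ai bi aj bj ak bk hi hj hk hai hbi haj hbj hak hbk hij hjk ddij ddjk ddik
      have hn1 : bj < bi := pairlem hi hj hai hbi haj hbj hij ddij
      have hn2 : bk < bj := pairlem hj hk haj hbj hak hbk hjk ddjk
      have hujk : ak < bk := horient hak hbk
      refine machine S hgen hno hrR hR₁ hend hj (horient haj hbj) hjk
        (lt_trans hujk hn2) (Or.inl hij) ?_ ?_
      · omega
      · have c := (SimpleGraph.dist_comm (G := cayley S) (u := ai) (v := aj))
        omega
    -- sort a₁ a₂ a₃
    have dc : ∀ x y : G, (cayley S).dist x y = (cayley S).dist y x :=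
      fun x y => SimpleGraph.dist_comm
    have hne12 : a₁ ≠ a₂ := by
      intro h; rw [h, SimpleGraph.dist_self] at d12; omega
    have hne13 : a₁ ≠ a₃ := by
      intro h; rw [h, SimpleGraph.dist_self] at d13; omega
    have hne23 : a₂ ≠ a₃ := by
      intro h; rw [h, SimpleGraph.dist_self] at d23; omega
    rcases lt_trichotomy a₁ a₂ with h12 | h12 | h12
    · rcases lt_trichotomy a₂ a₃ with h23 | h23 | h23
      · exact final a₁ b₁ a₂ b₂ a₃ b₃ hadj₁ hadj₂ hadj₃ ha₁ hb₁ ha₂ hb₂ ha₃ hb₃ h12 h23 d12 d23 d13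
      · exact absurd h23 hne23
      · rcases lt_trichotomy a₁ a₃ with h13 | h13 | h13
        · exact final a₁ b₁ a₃ b₃ a₂ b₂ hadj₁ hadj₃ hadj₂ ha₁ hb₁ ha₃ hb₃ ha₂ hb₂ h13 h23 d13 (by rw [dc a₃ a₂]; exact d23) d12
        · exact absurd h13 hne13
        · exact final a₃ b₃ a₁ b₁ a₂ b₂ hadj₃ hadj₁ hadj₂ ha₃ hb₃ ha₁ hb₁ ha₂ hb₂ h13 h12 (by rw [dc a₃ a₁]; exact d13) d12 (by rw [dc a₃ a₂]; exact d23)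
    · exact absurd h12 hne12
    · rcases lt_trichotomy a₁ a₃ with h13 | h13 | h13
      · exact final a₂ b₂ a₁ b₁ a₃ b₃ hadj₂ hadj₁ hadj₃ ha₂ hb₂ ha₁ hb₁ ha₃ hb₃ h12 h13 (by rw [dc a₂ a₁]; exact d12) d13 d23
      · exact absurd h13 hne13
      · rcases lt_trichotomy a₂ a₃ with h23 | h23 | h23
        · exact final a₂ b₂ a₃ b₃ a₁ b₁ hadj₂ hadj₃ hadj₁ ha₂ hb₂ ha₃ hb₃ ha₁ hb₁ h23 h13 d23 (by rw [dc a₃ a₁]; exact d13) (by rw [dc a₂ a₁]; exact d12)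
        · exact absurd h23 hne23
        · exact final a₃ b₃ a₂ b₂ a₁ b₁ hadj₃ hadj₂ hadj₁ ha₃ hb₃ ha₂ hb₂ ha₁ hb₁ h23 h12 (by rw [dc a₃ a₂]; exact d23) (by rw [dc a₂ a₁]; exact d12) (by rw [dc a₃ a₁]; exact d13)



include hgen in
lemma caseB [DecidableEq G] {N R₁ : ℕ} (hno : ¬ FarX S N)
    (hrR : N + 2 < R₁)
    (hR₁ : ∀ x y : G, R₁ < (cayley S).dist x y →
       (outComp S (gball (cayley S) x (N+2)) y).Infinite)
    (hend : OneEnded (cayley S))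
    (hPc : ({t : G | {x : G | x ≤ t}.Finite}ᶜ).Finite) : False := by
  classical
  have hGinf : Infinite G := infiniteG S hgen hend
  set P := {t : G | {x : G | x ≤ t}.Finite} with hPdef
  set J := Pᶜ with hJdef
  have hJfin : J.Finite := hPc
  have hPinf : P.Infinite := by
    have := hJfin.infinite_compl
    rwa [compl_compl] at this
  have hsmall : ∀ x y : G, x ∈ P → y ∈ P → (cayley S).Adj x y → x < y →
      ∀ u, x < u → u < y → (cayley S).dist x u ≤ R₁ := by
    intro x y hx hy hadj hxy
    rcases dichotomy S hgen hno hrR hR₁ hend hadj hxy with h | h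
    · exact fun u h1 h2 => h u h1 h2
    · exfalso
      have hWfin : (gball (cayley S) x R₁ ∪ {z : G | z ≤ y}).Finite :=
        (gball_finite S hgen x R₁).union hy
      obtain ⟨g, -, hg⟩ := Set.Infinite.exists_notMem_finset Set.infinite_univ hWfin.toFinset
      rw [Set.Finite.mem_toFinset] at hg
      have hg1 : ¬ (cayley S).dist x g ≤ R₁ := fun h' => hg (Or.inl h')
      have hg2 : y < g := not_le.mp (fun h' => hg (Or.inr h'))
      exact hg1 (h g (Or.inr hg2))
  set XJ := {x : G | x ∈ P ∧ ∃ j ∈ J, (cayley S).Adj x j} with hXJdef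
  have hXJfin : XJ.Finite := by
    refine Set.Finite.subset (Set.Finite.biUnion hJfin (fun j _ => nbr_finite S j)) ?_
    rintro x ⟨hxP, j, hj, hadj⟩
    exact Set.mem_biUnion hj hadj.symm
  obtain ⟨R₂, hR₂gt, hR₂⟩ := bad_bounded S hgen hend (R₁+1)
  set C := Set.ncard (gball (cayley S) (1:G) R₂) with hC
  obtain ⟨W₁, hW₁sub, hW₁card⟩ := hPinf.exists_subset_card_eq (C+1)
  set W₂ := W₁ ∪ hXJfin.toFinset with hW₂
  have hW₂ne : W₂.Nonempty := by
    have : W₁.Nonempty := Finset.card_pos.mp (by omega)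
    exact this.mono Finset.subset_union_left
  set t := W₂.max' hW₂ne with ht
  have htP : t ∈ P := by
    have := W₂.max'_mem hW₂ne
    rcases Finset.mem_union.mp this with h | h
    · exact hW₁sub h
    · exact (hXJfin.mem_toFinset.mp h).1
  set Lt := {x : G | x ≤ t} ∪ J with hLt
  have hLtfin : Lt.Finite := htP.union hJfin
  have hbound : ∀ x ∈ Lt, ∀ y, y ∉ Lt → (cayley S).Adj x y →
      (cayley S).dist t x ≤ R₁ + 1 ∧ (cayley S).dist t y ≤ R₁ + 1 := by
    intro x hx y hy hadj
    have hyP : y ∈ P := by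
      by_contra h
      exact hy (Or.inr h)
    have hty : t < y := not_le.mp (fun h => hy (Or.inl h))
    rcases hx with hx | hx
    · -- x ≤ t
      have hxP : x ∈ P := htP.subset (fun z hz => le_trans hz hx)
      have hxy : x < y := lt_of_le_of_lt hx hty
      have hdxt : (cayley S).dist x t ≤ R₁ := by
        rcases eq_or_lt_of_le hx with h | h
        · rw [h]; simp [SimpleGraph.dist_self]
        · exact hsmall x y hxP hyP hadj hxy t h hty
      have hc : (cayley S).dist t x = (cayley S).dist x t := SimpleGraph.dist_comm
      have htri := dtri S hgen t x y
      have hd1 : (cayley S).dist x y = 1 := dadj S hadj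
      exact ⟨by omega, by omega⟩
    · -- x ∈ J : impossible
      exfalso
      have hyXJ : y ∈ XJ := ⟨hyP, x, hx, hadj.symm⟩
      have : y ≤ t := W₂.le_max' y (Finset.mem_union_right _ (hXJfin.mem_toFinset.mpr hyXJ))
      exact absurd hty (not_lt.mpr this)
  set K := gball (cayley S) t (R₁+1) with hK
  have hstay : ∀ z, z ∈ Lt → ∀ z', Out S K z z' → z' ∈ Lt := by
    intro z hz z' hout
    induction hout with
    | refl => exact hz
    | @tail p q hpq hstep ih =>
      by_contra hq
      have := (hbound p ih q hq hstep.1).2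
      exact hstep.2.2 (by simp only [hK, gball, Set.mem_setOf_eq]; omega)
  have hLtsub : Lt ⊆ gball (cayley S) t R₂ := by
    intro z hz
    by_cases hzK : z ∈ K
    · have : (cayley S).dist t z ≤ R₁ + 1 := hzK
      simp only [gball, Set.mem_setOf_eq]
      omega
    · by_contra h
      have hfar : R₂ < (cayley S).dist t z := by
        simp only [gball, Set.mem_setOf_eq] at h
        omega
      have hinf := hR₂ t z hfar
      have hsub : outComp S K z ⊆ Lt := fun w hw => hstay z hz w hw
      exact hinf (hLtfin.subset hsub)
  have h1 : (W₁ : Set G) ⊆ Lt :=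
    fun w hw => Or.inl (W₂.le_max' w (Finset.mem_union_left _ hw))
  have hcard1 : (W₁ : Set G).ncard = C + 1 := by
    rw [Set.ncard_coe_finset]; exact hW₁card
  have hcard2 : (W₁ : Set G).ncard ≤ Set.ncard (gball (cayley S) t R₂) :=
    Set.ncard_le_ncard (h1.trans hLtsub) (gball_finite S hgen t R₂)
  have hcard3 : Set.ncard (gball (cayley S) t R₂) = C := by
    rw [gball_smul S hgen t R₂, Set.ncard_image_of_injective _ (mul_right_injective t)]
  omega



end OrderSec

/-- the dual of a linear order -/
def dualLO {α : Type*} (L : LinearOrder α) : LinearOrder α :=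
  @OrderDual.instLinearOrder α L

section Assemble
variable [L : LinearOrder G]

lemma dual_le {a b : G} :
    (@LE.le G (@Preorder.toLE G (@PartialOrder.toPreorder G
      (@LinearOrder.toPartialOrder G (dualLO L)))) a b) ↔ b ≤ a :=
  ⟨fun h => h, fun h => h⟩

lemma dual_lt {a b : G} :
    (@LT.lt G (@Preorder.toLT G (@PartialOrder.toPreorder G
      (@LinearOrder.toPartialOrder G (dualLO L)))) a b) ↔ b < a :=
  ⟨fun h => h, fun h => h⟩

include hgen in
lemma farx_exists [DecidableEq G] (hend : OneEnded (cayley S)) (N : ℕ) : FarX S N := by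
  classical
  by_contra hno
  have hGinf : Infinite G := infiniteG S hgen hend
  obtain ⟨R₁, hrR, hR₁⟩ := bad_bounded S hgen hend (N+2)
  have hno' : ¬ @FarX G _ S (dualLO L) N := by
    rintro ⟨a, c, b, e, h1, h2, h3, j1, j2, j3⟩
    refine hno ⟨e, b, c, a, dual_lt.mp h3, dual_lt.mp h2, dual_lt.mp h1, j2.symm, j1.symm, ?_⟩
    rwa [SimpleGraph.dist_comm] at j3
  set P := {t : G | {x : G | x ≤ t}.Finite} with hP
  set Q := {t : G | {x : G | t ≤ x}.Finite} with hQ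
  by_cases hPc : (Pᶜ).Finite
  · exact caseB S hgen hno hrR hR₁ hend hPc
  by_cases hQc : (Qᶜ).Finite
  · refine @caseB G _ S hgen (dualLO L) _ N R₁ hno' hrR hR₁ hend ?_
    exact hQc
  by_cases hPinf : P.Infinite
  · -- caseA with A = P
    refine caseA S hgen hno hrR hR₁ hend P ?_ hPinf hPc
    intro x y hx hyx
    exact hx.subset (fun z hz => le_trans hz hyx)
  by_cases hQinf : Q.Infinite
  · -- caseA with A = Qᶜ
    refine caseA S hgen hno hrR hR₁ hend Qᶜ ?_ hQc ?_
    · intro x y hx hyx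
      intro hyQ
      exact hx (hyQ.subset (fun z hz => le_trans hyx hz))
    · rwa [compl_compl]
  · -- P, Q both finite
    rw [Set.not_infinite] at hPinf hQinf
    obtain ⟨t, -, ht⟩ := Set.Infinite.exists_notMem_finset Set.infinite_univ
      (hPinf.union hQinf).toFinset
    rw [Set.Finite.mem_toFinset] at ht
    have htP : t ∉ P := fun h => ht (Or.inl h)
    have htQ : t ∉ Q := fun h => ht (Or.inr h)
    refine caseA S hgen hno hrR hR₁ hend {x : G | x ≤ t} ?_ htP ?_
    · intro x y hx hyx
      exact le_trans hyx hx
    · have hup : {x : G | t ≤ x}.Infinite := htQ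
      have : {x : G | t ≤ x} \ {t} ⊆ {x : G | x ≤ t}ᶜ := by
        rintro z ⟨hz1, hz2⟩
        simp only [Set.mem_compl_iff, Set.mem_setOf_eq, not_le]
        rcases lt_or_eq_of_le hz1 with h | h
        · exact h
        · exact absurd h.symm (by simpa using hz2)
      exact ((hup.diff (Set.finite_singleton t)).mono this)

end Assemble


section Lists
variable {α : Type*} (d : α → α → ℝ)

lemma pathLen_nil : pathLen d [] = 0 := rfl
lemma pathLen_single (a : α) : pathLen d [a] = 0 := rfl
lemma pathLen_cons₂ (a b : α) (l : List α) :
    pathLen d (a :: b :: l) = d a b + pathLen d (b :: l) := rfl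

variable (h0 : ∀ a b, 0 ≤ d a b)

include h0 in
lemma pathLen_nonneg : ∀ (l : List α), 0 ≤ pathLen d l := by
  intro l
  induction l with
  | nil => exact le_of_eq rfl
  | cons a t ih =>
    cases t with
    | nil => exact le_of_eq rfl
    | cons b t' =>
      rw [pathLen_cons₂]
      have := h0 a b
      linarith

include h0 in
lemma pathLen_tail_le (a : α) (t : List α) : pathLen d t ≤ pathLen d (a :: t) := by
  cases t with
  | nil => exact le_of_eq rfl
  | cons b t' =>
    rw [pathLen_cons₂]
    have := h0 a b
    linarith

variable (hself : ∀ a, d a a = 0) (hsym : ∀ a b, d a b = d b a)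
variable (htri : ∀ a b c, d a c ≤ d a b + d b c)

include h0 hself htri in
lemma dist_le_pathLen_head : ∀ (t : List α) (a u : α), u ∈ a :: t →
    d a u ≤ pathLen d (a :: t) := by
  intro t
  induction t with
  | nil =>
    intro a u hu
    simp only [List.mem_singleton] at hu
    subst hu
    rw [hself]
    exact le_of_eq rfl
  | cons b t' ih =>
    intro a u hu
    rcases List.mem_cons.mp hu with rfl | hu'
    · rw [hself]
      exact pathLen_nonneg d h0 _
    · have h1 := ih b u hu'
      have h2 := htri a b u
      rw [pathLen_cons₂]
      linarith

include h0 hself hsym htri in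
lemma dist_le_pathLen : ∀ (l : List α) (u v : α), u ∈ l → v ∈ l →
    d u v ≤ pathLen d l := by
  intro l
  induction l with
  | nil => intro u v hu _; simp at hu
  | cons a t ih =>
    intro u v hu hv
    rcases List.mem_cons.mp hu with rfl | hu'
    · exact dist_le_pathLen_head d h0 hself htri t u v hv
    · rcases List.mem_cons.mp hv with rfl | hv'
      · rw [hsym]
        exact dist_le_pathLen_head d h0 hself htri t _ u (List.mem_cons_of_mem _ hu')
      · exact le_trans (ih u v hu' hv') (pathLen_tail_le d h0 a t)

lemma pathLen_le_of_pairs (M : ℝ) (hM : 0 ≤ M) : ∀ (l : List α),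
    (∀ u v, u ∈ l → v ∈ l → d u v ≤ M) → pathLen d l ≤ ((l.length - 1 : ℕ) : ℝ) * M := by
  intro l
  induction l with
  | nil => intro _; simp [pathLen_nil]
  | cons a t ih =>
    intro hp
    cases t with
    | nil => simp [pathLen_single]
    | cons b t' =>
      rw [pathLen_cons₂]
      have h1 := ih (fun u v hu hv => hp u v (List.mem_cons_of_mem a hu) (List.mem_cons_of_mem a hv))
      have hab := hp a b List.mem_cons_self (List.mem_cons_of_mem a List.mem_cons_self)
      have hl1 : (((a :: b :: t').length - 1 : ℕ) : ℝ) = ((b :: t').length : ℝ) := by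
        simp
      have hl2 : (((b :: t').length - 1 : ℕ) : ℝ) = (t'.length : ℝ) := by
        simp
      rw [hl1] at *
      rw [hl2] at h1
      have : ((b :: t').length : ℝ) = (t'.length : ℝ) + 1 := by simp
      rw [this]
      nlinarith [hM]

section FinsetPart

lemma toFinset_indep (i1 i2 : DecidableEq α) (l : List α) :
    @List.toFinset α i1 l = @List.toFinset α i2 l := by
  have : i1 = i2 := Subsingleton.elim _ _
  rw [this]

lemma lopt_set_nonempty (X : Finset α) :
    {r : ℝ | ∃ l : List α, l.Nodup ∧ l.toFinset = X ∧ pathLen d l = r}.Nonempty :=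
  ⟨pathLen d X.toList, X.toList, X.nodup_toList, by simp, rfl⟩

include h0 in
lemma lopt_bddBelow (X : Finset α) :
    BddBelow {r : ℝ | ∃ l : List α, l.Nodup ∧ l.toFinset = X ∧ pathLen d l = r} := by
  refine ⟨0, ?_⟩
  rintro r ⟨l, -, -, rfl⟩
  exact pathLen_nonneg d h0 l

include h0 hself hsym htri in
lemma dist_le_lopt (X : Finset α) {u v : α} (hu : u ∈ X) (hv : v ∈ X) :
    d u v ≤ lopt d X := by
  refine le_csInf (lopt_set_nonempty d X) ?_
  rintro r ⟨l, hn, hX, rfl⟩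
  refine dist_le_pathLen d h0 hself hsym htri l u v ?_ ?_
  · rw [← List.mem_toFinset, hX]; exact hu
  · rw [← List.mem_toFinset, hX]; exact hv

include h0 in
lemma lopt_le_pathLen {inst : DecidableEq α} {X : Finset α} (l : List α) (hn : l.Nodup)
    (hX : @List.toFinset α inst l = X) :
    lopt d X ≤ pathLen d l :=
  csInf_le (lopt_bddBelow d h0 X) ⟨l, hn, by rw [toFinset_indep _ inst]; exact hX, rfl⟩

lemma lord_eq (T : LinearOrder α) (l : List α) (hn : l.Nodup) (hs : List.Pairwise T.lt l) :
    lord d T l.toFinset = pathLen d l := by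
  letI := T
  haveI : IsAntisymm α T.lt := ⟨fun a b h1 h2 => absurd h2 (lt_asymm h1)⟩
  have hset : {r : ℝ | ∃ l' : List α, l'.Nodup ∧ l'.toFinset = l.toFinset ∧
      List.Pairwise T.lt l' ∧ pathLen d l' = r} = {pathLen d l} := by
    ext r
    simp only [Set.mem_setOf_eq, Set.mem_singleton_iff]
    constructor
    · rintro ⟨l', h1, h2, h3, rfl⟩
      have hperm : l'.Perm l := List.perm_of_nodup_nodup_toFinset_eq h1 hn h2
      rw [List.Perm.eq_of_pairwise (fun _ _ _ _ h1 h2 => absurd h2 (lt_asymm h1)) h3 hs hperm]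
    · rintro rfl
      exact ⟨l, hn, rfl, hs, rfl⟩
  rw [lord, hset, csInf_singleton]

lemma lord_eq' (T : LinearOrder α) {inst : DecidableEq α} (l : List α) (hn : l.Nodup)
    (hs : List.Pairwise T.lt l) {X : Finset α} (hX : @List.toFinset α inst l = X) :
    lord d T X = pathLen d l := by
  subst hX
  rw [toFinset_indep inst _ l]
  exact lord_eq d T l hn hs

end FinsetPart
end Lists

section Final
variable {G' : Type*} [Group G'] (S' : Finset G')

/-- real-valued word distance -/
noncomputable def dR : G' → G' → ℝ := fun g h => ((cayley S').dist g h : ℝ)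

lemma dR0 (a b : G') : 0 ≤ dR S' a b := Nat.cast_nonneg _

lemma dRself (a : G') : dR S' a a = 0 := by simp [dR, SimpleGraph.dist_self]

lemma dRsym (a b : G') : dR S' a b = dR S' b a := by
  simp [dR, SimpleGraph.dist_comm]

variable (hgen' : Subgroup.closure (S' : Set G') = ⊤)

include hgen' in
lemma dRtri (a b c : G') : dR S' a c ≤ dR S' a b + dR S' b c := by
  have := dtri S' hgen' a b c
  simp only [dR]
  exact_mod_cast this

lemma dRadj {a b : G'} (h : (cayley S').Adj a b) : dR S' a b = 1 := by
  simp [dR, dadj S' h]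

include hgen' in
lemma dRpos {a b : G'} (h : a ≠ b) : 1 ≤ dR S' a b := by
  have := (cayley_connected S' hgen').pos_dist_of_ne h
  simp only [dR]
  exact_mod_cast this

end Final

section Ratios
variable [L : LinearOrder G]

include hgen in
lemma ratio_le (k : ℕ) {r : ℝ}
    (hr : r ∈ {r : ℝ | ∃ X : Finset G, 2 ≤ X.card ∧ X.card ≤ k + 1 ∧
      r = lord (dR S) L X / lopt (dR S) X}) : r ≤ k := by
  obtain ⟨X, h2, hk, rfl⟩ := hr
  obtain ⟨u, hu, v, hv, huv⟩ := Finset.one_lt_card.mp h2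
  have hlopt1 : 1 ≤ lopt (dR S) X :=
    le_trans (dRpos S hgen huv)
      (dist_le_lopt _ (dR0 S) (dRself S) (dRsym S) (dRtri S hgen) X hu hv)
  have hlopt0 : (0:ℝ) < lopt (dR S) X := by linarith
  have hsorted : List.Pairwise L.lt (X.sort L.le) := (Finset.sortedLT_sort X).pairwise
  have hnodup : (X.sort L.le).Nodup := Finset.sort_nodup _ _
  have heq : lord (dR S) L X = pathLen (dR S) (X.sort L.le) :=
    lord_eq' (dR S) L (X.sort L.le) hnodup hsorted (Finset.sort_toFinset _ _)
  have hpl : pathLen (dR S) (X.sort L.le) ≤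
      (((X.sort L.le).length - 1 : ℕ) : ℝ) * lopt (dR S) X := by
    refine pathLen_le_of_pairs (dR S) _ (by linarith) _ ?_
    intro u' v' hu' hv'
    exact dist_le_lopt _ (dR0 S) (dRself S) (dRsym S) (dRtri S hgen) X
      ((Finset.mem_sort _).mp hu') ((Finset.mem_sort _).mp hv')
  have hlen : (X.sort L.le).length = X.card := Finset.length_sort _
  have hcard : ((X.card - 1 : ℕ) : ℝ) ≤ (k : ℝ) := by
    have : X.card - 1 ≤ k := by omega
    exact_mod_cast this
  rw [div_le_iff₀ hlopt0]
  calc lord (dR S) L X ≤ (((X.sort L.le).length - 1 : ℕ) : ℝ) * lopt (dR S) X := by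
        rw [heq]; exact hpl
    _ ≤ (k : ℝ) * lopt (dR S) X := by
        apply mul_le_mul_of_nonneg_right _ (by linarith)
        rw [hlen]
        exact hcard

include hgen in
lemma ORd_bdd (k : ℕ) :
    BddAbove {r : ℝ | ∃ X : Finset G, 2 ≤ X.card ∧ X.card ≤ k + 1 ∧
      r = lord (dR S) L X / lopt (dR S) X} :=
  ⟨k, fun _ hr => ratio_le S hgen k hr⟩

include hgen in
lemma snake_pack (hend : OneEnded (cayley S)) (N : ℕ) :
    ∃ a c b e : G, a < c ∧ c < b ∧ b < e ∧ (cayley S).Adj a b ∧ (cayley S).Adj c e ∧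
      (N:ℝ) ≤ dR S c b ∧ dR S a b = 1 ∧ dR S c e = 1 ∧
      (N:ℝ) - 1 ≤ dR S a c ∧ dR S a c ≤ dR S c b + 1 ∧ dR S c b - 1 ≤ dR S b e ∧
      dR S c b ≤ dR S a c + 1 := by
  obtain ⟨a, c, b, e, h1, h2, h3, j1, j2, j3⟩ := farx_exists S hgen hend N
  have hcb : (N:ℝ) ≤ dR S c b := by
    simp only [dR]; exact_mod_cast j3
  have hab : dR S a b = 1 := dRadj S j1
  have hce : dR S c e = 1 := dRadj S j2
  have t1 : dR S c b ≤ dR S c a + dR S a b := dRtri S hgen c a b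
  have t2 : dR S a c ≤ dR S a b + dR S b c := dRtri S hgen a b c
  have t3 : dR S c b ≤ dR S c e + dR S e b := dRtri S hgen c e b
  have s1 : dR S c a = dR S a c := dRsym S c a
  have s2 : dR S b c = dR S c b := dRsym S b c
  have s3 : dR S e b = dR S b e := dRsym S e b
  exact ⟨a, c, b, e, h1, h2, h3, j1, j2, hcb, hab, hce,
    by linarith, by linarith, by linarith, by linarith⟩

include hgen in
lemma ord_one (hend : OneEnded (cayley S)) :
    (1:ℝ) ≤ ORd (dR S) L 1 := by
  obtain ⟨a, c, b, e, h1, h2, h3, j1, j2, -, -, -, -, -, -, -⟩ :=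
    snake_pack S hgen hend 1
  classical
  have hne : a ≠ c := ne_of_lt h1
  set l : List G := [a, c] with hl
  have hnodup : l.Nodup := by simp [hl, hne]
  have hsorted : List.Pairwise L.lt l := by simp [hl, List.pairwise_cons, h1]
  have hplen : pathLen (dR S) l = dR S a c := by simp [hl, pathLen_cons₂, pathLen_single]
  have hlord : lord (dR S) L l.toFinset = dR S a c := by
    rw [lord_eq' (dR S) L l hnodup hsorted rfl, hplen]
  have hmema : a ∈ l.toFinset := by simp [hl]
  have hmemc : c ∈ l.toFinset := by simp [hl]
  have hlopt : lopt (dR S) l.toFinset = dR S a c := by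
    refine le_antisymm ?_ ?_
    · have h' := lopt_le_pathLen (dR S) (dR0 S) (X := l.toFinset) l hnodup rfl
      rw [hplen] at h'
      exact h'
    · exact dist_le_lopt _ (dR0 S) (dRself S) (dRsym S) (dRtri S hgen) _ hmema hmemc
  have hpos : (1:ℝ) ≤ dR S a c := dRpos S hgen hne
  have hmem : (1:ℝ) ∈ {r : ℝ | ∃ X : Finset G, 2 ≤ X.card ∧ X.card ≤ 1 + 1 ∧
      r = lord (dR S) L X / lopt (dR S) X} := by
    refine ⟨l.toFinset, ?_, ?_, ?_⟩
    · rw [List.toFinset_card_of_nodup hnodup, hl]; norm_num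
    · rw [List.toFinset_card_of_nodup hnodup, hl]; norm_num
    · rw [hlord, hlopt, div_self (by linarith)]
  exact le_csSup (ORd_bdd S hgen 1) hmem



include hgen in
lemma mem_two (hend : OneEnded (cayley S)) (N : ℕ) (hN : 2 ≤ N) :
    ∃ r ∈ {r : ℝ | ∃ X : Finset G, 2 ≤ X.card ∧ X.card ≤ 2 + 1 ∧
      r = lord (dR S) L X / lopt (dR S) X}, 2 - 3/(N:ℝ) ≤ r := by
  obtain ⟨a, c, b, e, h1, h2, h3, j1, j2, hcb, hab, hce, hac1, hac2, hbe1, hcb1⟩ :=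
    snake_pack S hgen hend N
  classical
  have hne1 : a ≠ c := ne_of_lt h1
  have hne2 : c ≠ b := ne_of_lt h2
  have hne3 : a ≠ b := ne_of_lt (lt_trans h1 h2)
  set l : List G := [a, c, b] with hl
  have hnodup : l.Nodup := by simp [hl, hne1, hne2, hne3]
  have hsorted : List.Pairwise L.lt l := by
    simp [hl, List.pairwise_cons, h1, h2, lt_trans h1 h2]
  have hplen : pathLen (dR S) l = dR S a c + dR S c b := by
    simp [hl, pathLen_cons₂, pathLen_single]
  set X := l.toFinset with hX
  have hlord : lord (dR S) L X = dR S a c + dR S c b := by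
    rw [lord_eq' (dR S) L l hnodup hsorted rfl, hplen]
  set l2 : List G := [c, a, b] with hl2
  have hnodup2 : l2.Nodup := by simp [hl2, hne1.symm, hne2, hne3]
  have hto2 : @List.toFinset G _ l2 = X := by
    rw [hX]
    ext z
    simp [hl, hl2]
    tauto
  have hlopt_le : lopt (dR S) X ≤ dR S a c + 1 := by
    have h' := lopt_le_pathLen (dR S) (dR0 S) (X := X) l2 hnodup2 hto2
    have : pathLen (dR S) l2 = dR S c a + dR S a b := by
      simp [hl2, pathLen_cons₂, pathLen_single]
    rw [this, dRsym S c a, hab] at h'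
    exact h'
  have hmema : a ∈ X := by simp [hX, hl]
  have hmemc : c ∈ X := by simp [hX, hl]
  have hlopt1 : 1 ≤ lopt (dR S) X :=
    le_trans (dRpos S hgen hne1)
      (dist_le_lopt _ (dR0 S) (dRself S) (dRsym S) (dRtri S hgen) X hmema hmemc)
  have hlopt0 : (0:ℝ) < lopt (dR S) X := by linarith
  have hN0 : (0:ℝ) < (N:ℝ) := by exact_mod_cast (by omega : 0 < N)
  have hNr : (2:ℝ) ≤ (N:ℝ) := by exact_mod_cast hN
  refine ⟨lord (dR S) L X / lopt (dR S) X, ⟨X, ?_, ?_, rfl⟩, ?_⟩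
  · rw [hX, List.toFinset_card_of_nodup hnodup, hl]; norm_num
  · rw [hX, List.toFinset_card_of_nodup hnodup, hl]; norm_num
  · rw [le_div_iff₀ hlopt0]
    rw [hlord]
    -- (2 - 3/N) * lopt ≤ Dac + Dcb
    have hkey : (2 - 3/(N:ℝ)) * lopt (dR S) X ≤ (2 - 3/(N:ℝ)) * (dR S a c + 1) := by
      apply mul_le_mul_of_nonneg_left hlopt_le
      have : 3/(N:ℝ) ≤ 3/2 := by
        apply div_le_div_of_nonneg_left (by norm_num) (by norm_num) hNr
      linarith
    have hfrac : 3/(N:ℝ) * (N:ℝ) = 3 := by field_simp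
    have hmul : 3/(N:ℝ) * (dR S a c + 1) ≥ 3 := by
      have h' : (N:ℝ) ≤ dR S a c + 1 := by linarith
      have := mul_le_mul_of_nonneg_left h' (le_of_lt (by positivity : (0:ℝ) < 3/(N:ℝ)))
      linarith [hfrac]
    linarith

include hgen in
lemma mem_three (hend : OneEnded (cayley S)) (N : ℕ) (hN : 3 ≤ N) :
    ∃ r ∈ {r : ℝ | ∃ X : Finset G, 2 ≤ X.card ∧ X.card ≤ 3 + 1 ∧
      r = lord (dR S) L X / lopt (dR S) X}, 3 - 9/(N:ℝ) ≤ r := by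
  obtain ⟨a, c, b, e, h1, h2, h3, j1, j2, hcb, hab, hce, hac1, hac2, hbe1, hcb1⟩ :=
    snake_pack S hgen hend N
  classical
  have h13 : a < b := lt_trans h1 h2
  have h14 : a < e := lt_trans h13 h3
  have h24 : c < e := lt_trans h2 h3
  have hne1 : a ≠ c := ne_of_lt h1
  have hne2 : c ≠ b := ne_of_lt h2
  have hne3 : a ≠ b := ne_of_lt h13
  have hne4 : a ≠ e := ne_of_lt h14
  have hne5 : c ≠ e := ne_of_lt h24
  have hne6 : b ≠ e := ne_of_lt h3
  set l : List G := [a, c, b, e] with hl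
  have hnodup : l.Nodup := by simp [hl, hne1, hne2, hne3, hne4, hne5, hne6]
  have hsorted : List.Pairwise L.lt l := by
    simp [hl, List.pairwise_cons, h1, h2, h3, h13, h14, h24]
  have hplen : pathLen (dR S) l = dR S a c + dR S c b + dR S b e := by
    simp [hl, pathLen_cons₂, pathLen_single]
    ring
  set X := l.toFinset with hX
  have hlord : lord (dR S) L X = dR S a c + dR S c b + dR S b e := by
    rw [lord_eq' (dR S) L l hnodup hsorted rfl, hplen]
  set l2 : List G := [e, c, a, b] with hl2
  have hnodup2 : l2.Nodup := by
    simp [hl2, hne1.symm, hne2, hne3, hne4.symm, hne5.symm, hne6.symm]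
  have hto2 : @List.toFinset G _ l2 = X := by
    rw [hX]
    ext z
    simp [hl, hl2]
    tauto
  have hlopt_le : lopt (dR S) X ≤ dR S a c + 2 := by
    have h' := lopt_le_pathLen (dR S) (dR0 S) (X := X) l2 hnodup2 hto2
    have hp2 : pathLen (dR S) l2 = dR S e c + dR S c a + dR S a b := by
      simp [hl2, pathLen_cons₂, pathLen_single]
      ring
    rw [hp2, dRsym S c a, dRsym S e c, hce, hab] at h'
    linarith
  have hmema : a ∈ X := by simp [hX, hl]
  have hmemc : c ∈ X := by simp [hX, hl]
  have hlopt1 : 1 ≤ lopt (dR S) X :=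
    le_trans (dRpos S hgen hne1)
      (dist_le_lopt _ (dR0 S) (dRself S) (dRsym S) (dRtri S hgen) X hmema hmemc)
  have hlopt0 : (0:ℝ) < lopt (dR S) X := by linarith
  have hN0 : (0:ℝ) < (N:ℝ) := by exact_mod_cast (by omega : 0 < N)
  have hNr : (3:ℝ) ≤ (N:ℝ) := by exact_mod_cast hN
  refine ⟨lord (dR S) L X / lopt (dR S) X, ⟨X, ?_, ?_, rfl⟩, ?_⟩
  · rw [hX, List.toFinset_card_of_nodup hnodup, hl]; norm_num
  · rw [hX, List.toFinset_card_of_nodup hnodup, hl]; norm_num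
  · rw [le_div_iff₀ hlopt0]
    rw [hlord]
    have hkey : (3 - 9/(N:ℝ)) * lopt (dR S) X ≤ (3 - 9/(N:ℝ)) * (dR S a c + 2) := by
      apply mul_le_mul_of_nonneg_left hlopt_le
      have : 9/(N:ℝ) ≤ 9/3 := by
        apply div_le_div_of_nonneg_left (by norm_num) (by norm_num) hNr
      linarith
    have hfrac : 9/(N:ℝ) * (N:ℝ) = 9 := by field_simp
    have hmul : 9/(N:ℝ) * (dR S a c + 2) ≥ 9 := by
      have h' : (N:ℝ) ≤ dR S a c + 2 := by linarith
      have := mul_le_mul_of_nonneg_left h' (le_of_lt (by positivity : (0:ℝ) < 9/(N:ℝ)))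
      linarith [hfrac]
    linarith

include hgen in
lemma ord_two (hend : OneEnded (cayley S)) : (2:ℝ) ≤ ORd (dR S) L 2 := by
  by_contra hlt
  push_neg at hlt
  set o := ORd (dR S) L 2 with ho
  have hε : (0:ℝ) < 2 - o := by linarith
  obtain ⟨N, hNgt⟩ := exists_nat_gt (max 2 (3 / (2 - o)))
  have hN2 : 2 ≤ N := by
    have := le_max_left 2 (3 / (2 - o))
    have h' : (2:ℝ) < N := lt_of_le_of_lt this hNgt
    exact_mod_cast h'.le
  obtain ⟨r, hrmem, hrge⟩ := mem_two S hgen hend N hN2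
  have hro : r ≤ o := le_csSup (ORd_bdd S hgen 2) hrmem
  have hN0 : (0:ℝ) < (N:ℝ) := by positivity
  have h3N : 3 / (N:ℝ) < 2 - o := by
    rw [div_lt_iff₀ hN0]
    have h' := lt_of_le_of_lt (le_max_right 2 (3 / (2 - o))) hNgt
    rw [div_lt_iff₀ hε] at h'
    linarith
  linarith

include hgen in
lemma ord_three (hend : OneEnded (cayley S)) : (3:ℝ) ≤ ORd (dR S) L 3 := by
  by_contra hlt
  push_neg at hlt
  set o := ORd (dR S) L 3 with ho
  have hε : (0:ℝ) < 3 - o := by linarith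
  obtain ⟨N, hNgt⟩ := exists_nat_gt (max 3 (9 / (3 - o)))
  have hN3 : 3 ≤ N := by
    have := le_max_left 3 (9 / (3 - o))
    have h' : (3:ℝ) < N := lt_of_le_of_lt this hNgt
    exact_mod_cast h'.le
  obtain ⟨r, hrmem, hrge⟩ := mem_three S hgen hend N hN3
  have hro : r ≤ o := le_csSup (ORd_bdd S hgen 3) hrmem
  have hN0 : (0:ℝ) < (N:ℝ) := by positivity
  have h9N : 9 / (N:ℝ) < 3 - o := by
    rw [div_lt_iff₀ hN0]
    have h' := lt_of_le_of_lt (le_max_right 3 (9 / (3 - o))) hNgt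
    rw [div_lt_iff₀ hε] at h'
    linarith
  linarith



include hgen in
lemma brd_ge (hend : OneEnded (cayley S)) : (4:ℕ∞) ≤ Brd (dR S) L := by
  rw [Brd]
  split_ifs with h
  · have h4 : 4 ≤ Nat.find h := by
      rw [Nat.le_find_iff]
      intro m hm
      interval_cases m
      · -- m = 0
        have hempty : {r : ℝ | ∃ X : Finset G, 2 ≤ X.card ∧ X.card ≤ 0 + 1 ∧
            r = lord (dR S) L X / lopt (dR S) X} = ∅ := by
          ext r
          simp only [Set.mem_setOf_eq, Set.mem_empty_iff_false, iff_false, not_exists]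
          intro X h'
          omega
        rw [ORd, hempty, Real.sSup_empty]
        simp
      · have h' := ord_one S hgen hend
        rw [ORd] at h'
        rw [ORd]
        push_cast
        intro hcon
        norm_num at h' hcon
        linarith
      · have h' := ord_two S hgen hend
        rw [ORd] at h'
        rw [ORd]
        push_cast
        intro hcon
        norm_num at h' hcon
        linarith
      · have h' := ord_three S hgen hend
        rw [ORd] at h'
        rw [ORd]
        push_cast
        intro hcon
        norm_num at h' hcon
        linarith
    exact_mod_cast h4
  · exact le_top

end Ratios

include hgen in
lemma snake_exists (hend : OneEnded (cayley S)) (T : LinearOrder G) (N : ℕ) :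
    ∃ x : Fin 4 → G, IsSnake T x ∧ snakeWidth (dR S) x = 1 ∧
      (N:ℝ) ≤ snakeDiam (dR S) x := by
  letI := T
  obtain ⟨a, c, b, e, h1, h2, h3, j1, j2, hcb, hab, hce, -, -, -, -⟩ :=
    snake_pack S hgen hend N
  have h13 : a < b := lt_trans h1 h2
  have h24 : c < e := lt_trans h2 h3
  have h14 : a < e := lt_trans h13 h3
  refine ⟨![a, c, b, e], ?_, ?_, ?_⟩
  · intro i j hij
    fin_cases i <;> fin_cases j <;>
      simp only [Matrix.cons_val_zero, Matrix.cons_val_one, Matrix.head_cons,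
        Matrix.cons_val_two, Matrix.tail_cons, Matrix.cons_val_three, Matrix.head_fin_const,
        Matrix.cons_val_fin_one] <;>
      first
        | exact absurd hij (by decide)
        | exact h1
        | exact h2
        | exact h3
        | exact h13
        | exact h24
        | exact h14
  · -- width
    have hub : ∀ r ∈ {r : ℝ | ∃ i j : Fin 4, i.val % 2 = j.val % 2 ∧
        r = dR S (![a, c, b, e] i) (![a, c, b, e] j)}, r ≤ 1 := by
      rintro r ⟨i, j, hpar, rfl⟩
      fin_cases i <;> fin_cases j <;>
        simp only [Matrix.cons_val_zero, Matrix.cons_val_one, Matrix.head_cons,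
          Matrix.cons_val_two, Matrix.tail_cons, Matrix.cons_val_three] <;>
        first
          | exact absurd hpar (by decide)
          | (rw [dRself]; norm_num)
          | exact le_of_eq hab
          | exact le_of_eq hce
          | (rw [dRsym]; exact le_of_eq hab)
          | (rw [dRsym]; exact le_of_eq hce)
    have hmem : (1:ℝ) ∈ {r : ℝ | ∃ i j : Fin 4, i.val % 2 = j.val % 2 ∧
        r = dR S (![a, c, b, e] i) (![a, c, b, e] j)} := by
      refine ⟨0, 2, by decide, ?_⟩
      simp only [Matrix.cons_val_zero, Matrix.cons_val_two, Matrix.tail_cons, Matrix.head_cons]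
      exact hab.symm
    rw [snakeWidth]
    exact le_antisymm (csSup_le ⟨1, hmem⟩ hub) (le_csSup ⟨1, hub⟩ hmem)
  · -- diameter
    rw [snakeDiam]
    have hrange : {r : ℝ | ∃ i j : Fin 4, r = dR S (![a, c, b, e] i) (![a, c, b, e] j)}
        = Set.range (fun p : Fin 4 × Fin 4 => dR S (![a, c, b, e] p.1) (![a, c, b, e] p.2)) := by
      ext r
      constructor
      · rintro ⟨i, j, rfl⟩; exact ⟨(i, j), rfl⟩
      · rintro ⟨⟨i, j⟩, rfl⟩; exact ⟨i, j, rfl⟩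
    have hbdd : BddAbove {r : ℝ | ∃ i j : Fin 4, r = dR S (![a, c, b, e] i) (![a, c, b, e] j)} := by
      rw [hrange]
      exact (Set.finite_range _).bddAbove
    have hmem : dR S c b ∈ {r : ℝ | ∃ i j : Fin 4, r = dR S (![a, c, b, e] i) (![a, c, b, e] j)} := by
      refine ⟨1, 2, ?_⟩
      simp only [Matrix.cons_val_one, Matrix.head_cons, Matrix.cons_val_two, Matrix.tail_cons]
      rfl
    exact le_trans hcb (le_csSup hbdd hmem)

end Stmt16Aux

/-- Let `G` be a one-ended finitely generated group with the word metric of a finite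
generating set `S`.  Then for every total order `T` on `G` and every integer `N` there is
a snake on `4` points of width `1` and diameter at least `N`; in particular `Br(G) ≥ 4`. -/
theorem stmt16 {G : Type*} [Group G] (S : Finset G)
    (hgen : Subgroup.closure (S : Set G) = ⊤)
    (hend : OneEnded (cayley S)) :
    (∀ (T : LinearOrder G) (N : ℕ), ∃ x : Fin 4 → G,
      IsSnake T x ∧
      snakeWidth (fun g h : G => ((cayley S).dist g h : ℝ)) x = 1 ∧
      (N : ℝ) ≤ snakeDiam (fun g h : G => ((cayley S).dist g h : ℝ)) x) ∧
    4 ≤ BrSp (fun g h : G => ((cayley S).dist g h : ℝ)) := by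
  constructor
  · intro T N
    exact Stmt16Aux.snake_exists S hgen hend T N
  · rw [BrSp]
    refine le_iInf ?_
    intro T
    exact @Stmt16Aux.brd_ge G _ S hgen T hend
end

section
/- Let G be a group with a finite generating set S, and assume G is not finitely presented. Then for every N > 0 there is an isometric embedding of a cycle of length greater than N into the Cayley graph Γ(G,S); that is, there exists n > N and a cycle of n vertices in Γ(G,S) such that the graph distance in Γ(G,S) between any two of its vertices equals their distance along the cycle. -/
/-- A group is finitely presented if it is isomorphic to a group presented by finitely many
generators and finitely many relations. -/
def IsFinitelyPresented (G : Type*) [Group G] : Prop :=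
  ∃ (n : ℕ) (rels : Set (FreeGroup (Fin n))),
    rels.Finite ∧ Nonempty (G ≃* PresentedGroup rels)

namespace Stmt17Aux

variable {G : Type*} [Group G]

/-- Enumeration of the generating set. -/
noncomputable def gen (S : Finset G) : Fin S.card → G :=
  fun i => ((Fintype.equivFinOfCardEq (Fintype.card_coe S)).symm i : G)

lemma gen_mem (S : Finset G) (i : Fin S.card) : gen S i ∈ S :=
  ((Fintype.equivFinOfCardEq (Fintype.card_coe S)).symm i).2

lemma exists_gen (S : Finset G) {s : G} (hs : s ∈ S) : ∃ i, gen S i = s :=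
  ⟨Fintype.equivFinOfCardEq (Fintype.card_coe S) ⟨s, hs⟩, by simp [gen]⟩

/-- The canonical projection from the free group. -/
noncomputable def pr (S : Finset G) : FreeGroup (Fin S.card) →* G :=
  FreeGroup.lift (gen S)

lemma pr_single (S : Finset G) (x : Fin S.card × Bool) :
    pr S (FreeGroup.mk [x]) = if x.2 then gen S x.1 else (gen S x.1)⁻¹ := by
  obtain ⟨i, b⟩ := x
  cases b
  · have h1 : FreeGroup.mk [(i, false)] = (FreeGroup.of i)⁻¹ := by
      rw [show FreeGroup.of i = FreeGroup.mk [(i, true)] from rfl, FreeGroup.inv_mk]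
      rfl
    rw [h1, map_inv]
    simp [pr]
  · show pr S (FreeGroup.of i) = _
    simp [pr]

lemma adj_step (S : Finset G) {g h : G} (hne : g ≠ h) (x : Fin S.card × Bool)
    (hx : g⁻¹ * h = pr S (FreeGroup.mk [x])) : (cayley S).Adj g h := by
  rw [cayley, SimpleGraph.fromRel_adj]
  refine ⟨hne, ?_⟩
  obtain ⟨i, b⟩ := x
  rw [pr_single] at hx
  cases b
  · simp only [Bool.false_eq_true, if_false] at hx
    right
    have h2 : h⁻¹ * g = (g⁻¹ * h)⁻¹ := by group
    rw [h2, hx, inv_inv]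
    exact gen_mem S i
  · simp only [if_true] at hx
    left
    rw [hx]
    exact gen_mem S i

lemma word_of_walk (S : Finset G) : ∀ {u v : G} (p : (cayley S).Walk u v),
    ∃ m : List (Fin S.card × Bool), m.length = p.length ∧
      pr S (FreeGroup.mk m) = u⁻¹ * v := by
  intro u v p
  induction p with
  | nil => exact ⟨[], rfl, by rw [← FreeGroup.one_eq_mk, map_one, inv_mul_cancel]⟩
  | @cons u w v h p ih =>
    obtain ⟨m, hm, hpm⟩ := ih
    rw [cayley, SimpleGraph.fromRel_adj] at h
    rcases h.2 with hs | hs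
    · obtain ⟨i, hi⟩ := exists_gen S hs
      refine ⟨(i, true) :: m, by simp [hm], ?_⟩
      rw [show ((i, true) :: m) = [(i, true)] ++ m from rfl, ← FreeGroup.mul_mk,
        map_mul, pr_single, hpm]
      simp only [if_true]
      rw [hi]
      group
    · obtain ⟨i, hi⟩ := exists_gen S hs
      refine ⟨(i, false) :: m, by simp [hm], ?_⟩
      rw [show ((i, false) :: m) = [(i, false)] ++ m from rfl, ← FreeGroup.mul_mk,
        map_mul, pr_single, hpm]
      simp only [Bool.false_eq_true, if_false]
      rw [hi]
      group

/-- Prefix products of a word. -/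
noncomputable def pref (S : Finset G) (l : List (Fin S.card × Bool)) (k : ℕ) : G :=
  pr S (FreeGroup.mk (l.take k))

lemma pref_zero (S : Finset G) (l : List (Fin S.card × Bool)) : pref S l 0 = 1 := by
  rw [pref, List.take_zero, ← FreeGroup.one_eq_mk, map_one]

lemma pref_length (S : Finset G) (l : List (Fin S.card × Bool)) :
    pref S l l.length = pr S (FreeGroup.mk l) := by
  rw [pref, List.take_length]

lemma pref_mid (S : Finset G) (l : List (Fin S.card × Bool)) {a b : ℕ} (hab : a ≤ b) :
    pr S (FreeGroup.mk ((l.drop a).take (b - a))) = (pref S l a)⁻¹ * pref S l b := by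
  have h : pref S l b = pref S l a * pr S (FreeGroup.mk ((l.drop a).take (b - a))) := by
    unfold pref
    rw [← map_mul, FreeGroup.mul_mk, ← List.take_add, Nat.add_sub_cancel' hab]
  rw [h]
  group

lemma pref_drop (S : Finset G) (l : List (Fin S.card × Bool)) (b : ℕ) :
    pr S (FreeGroup.mk l) = pref S l b * pr S (FreeGroup.mk (l.drop b)) := by
  unfold pref
  rw [← map_mul, FreeGroup.mul_mk, List.take_append_drop]

lemma pref_succ (S : Finset G) (l : List (Fin S.card × Bool)) {k : ℕ} (hk : k < l.length) :
    pref S l (k + 1) = pref S l k * pr S (FreeGroup.mk [l.get ⟨k, hk⟩]) := by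
  have h1 : (l.drop k).take (k + 1 - k) = [l.get ⟨k, hk⟩] := by
    rw [Nat.add_sub_cancel_left, List.take_one_drop_eq_of_lt_length hk]
  have := pref_mid S l (Nat.le_succ k)
  rw [h1] at this
  rw [this]
  group

lemma main (S : Finset G) (C : ℕ)
    (hC : ∀ n : ℕ, C < n → ∀ f : ZMod n → G, ∃ i j : ZMod n,
      (cayley S).dist (f i) (f j) ≠ min (i - j).val (j - i).val) :
    ∀ (L : ℕ) (l : List (Fin S.card × Bool)), l.length = L → pr S (FreeGroup.mk l) = 1 →
      FreeGroup.mk l ∈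
        Subgroup.normalClosure {w : FreeGroup (Fin S.card) | pr S w = 1 ∧ w.toWord.length ≤ C} := by
  intro L
  induction L using Nat.strong_induction_on with
  | _ L IH =>
  intro l hlen hl1
  by_cases hL : L ≤ C
  · exact Subgroup.subset_normalClosure
      ⟨hl1, le_trans FreeGroup.norm_mk_le (by omega)⟩
  push_neg at hL
  -- the key splitting step
  have key : ∀ a b : ℕ, a ≤ b → b ≤ L → ∀ m : List (Fin S.card × Bool),
      pr S (FreeGroup.mk m) = (pref S l a)⁻¹ * pref S l b →
      (b - a) + m.length < L → (L - (b - a)) + m.length < L →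
      FreeGroup.mk l ∈
        Subgroup.normalClosure {w : FreeGroup (Fin S.card) | pr S w = 1 ∧ w.toWord.length ≤ C} := by
    intro a b hab hbL m hm h1 h2
    have hylen : ((l.drop a).take (b - a)).length = b - a := by
      rw [List.length_take, List.length_drop, hlen]
      omega
    have hpy := pref_mid S l hab
    have hpx : pr S (FreeGroup.mk (l.take a)) = pref S l a := rfl
    have hpz : pr S (FreeGroup.mk (l.drop b)) = (pref S l b)⁻¹ := by
      have h := (pref_drop S l b).symm
      rw [hl1] at h
      exact (inv_eq_of_mul_eq_one_right h).symm
    have hw1 : FreeGroup.mk ((l.drop a).take (b - a) ++ FreeGroup.invRev m) ∈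
        Subgroup.normalClosure
          {w : FreeGroup (Fin S.card) | pr S w = 1 ∧ w.toWord.length ≤ C} := by
      refine IH ((b - a) + m.length) (by omega) _ ?_ ?_
      · rw [List.length_append, hylen, FreeGroup.invRev_length]
      · rw [← FreeGroup.mul_mk, ← FreeGroup.inv_mk, map_mul, map_inv, hpy, hm]
        group
    have hw2 : FreeGroup.mk (l.take a ++ m ++ l.drop b) ∈
        Subgroup.normalClosure
          {w : FreeGroup (Fin S.card) | pr S w = 1 ∧ w.toWord.length ≤ C} := by
      refine IH ((L - (b - a)) + m.length) (by omega) _ ?_ ?_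
      · simp only [List.length_append, List.length_take, List.length_drop, hlen]
        omega
      · rw [← FreeGroup.mul_mk, ← FreeGroup.mul_mk, map_mul, map_mul, hpx, hm, hpz]
        group
    have h3 : l.take a ++ (l.drop a).take (b - a) = l.take b := by
      rw [← List.take_add, Nat.add_sub_cancel' hab]
    have hprod : FreeGroup.mk l = FreeGroup.mk (l.take a) *
        FreeGroup.mk ((l.drop a).take (b - a)) * FreeGroup.mk (l.drop b) := by
      conv_lhs => rw [← List.take_append_drop b l, ← h3]
      rw [FreeGroup.mul_mk, FreeGroup.mul_mk]
    have hdecomp : FreeGroup.mk l =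
        (FreeGroup.mk (l.take a) *
          FreeGroup.mk ((l.drop a).take (b - a) ++ FreeGroup.invRev m) *
          (FreeGroup.mk (l.take a))⁻¹) *
        FreeGroup.mk (l.take a ++ m ++ l.drop b) := by
      rw [← FreeGroup.mul_mk, ← FreeGroup.inv_mk, ← FreeGroup.mul_mk, ← FreeGroup.mul_mk,
        hprod]
      group
    rw [hdecomp]
    exact Subgroup.mul_mem _ (Subgroup.normalClosure_normal.conj_mem _ hw1 _) hw2
  -- does the loop revisit a vertex?
  by_cases hrep : ∃ a b : ℕ, a < b ∧ b < L ∧ pref S l a = pref S l b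
  · obtain ⟨a, b, hab, hbL, heq⟩ := hrep
    refine key a b hab.le hbL.le [] ?_ ?_ ?_
    · rw [← FreeGroup.one_eq_mk, map_one, heq, inv_mul_cancel]
    · simp only [List.length_nil]; omega
    · simp only [List.length_nil]; omega
  push_neg at hrep
  -- the loop is an embedded cycle of length L > C : contradiction machinery
  have hLpos : 0 < L := by omega
  haveI : NeZero L := ⟨by omega⟩
  have hg0 : pref S l 0 = 1 := pref_zero S l
  have hgL : pref S l L = 1 := by rw [← hlen, pref_length, hl1]
  obtain ⟨i, j, hne⟩ := hC L hL (fun i : ZMod L => pref S l i.val)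
  have hij : i ≠ j := by
    rintro rfl
    simp [SimpleGraph.dist_self, sub_self, ZMod.val_zero] at hne
  have hvij : i.val ≠ j.val := fun h => hij (ZMod.val_injective L h)
  have hsub : ∀ a b : ℕ, a < b → b < L →
      ((b : ZMod L) - (a : ZMod L)).val = b - a ∧
      ((a : ZMod L) - (b : ZMod L)).val = L - (b - a) := by
    intro a b hab hbL
    constructor
    · rw [← Nat.cast_sub hab.le, ZMod.val_cast_of_lt (by omega)]
    · have he : (a : ZMod L) - (b : ZMod L) = ((L - (b - a) : ℕ) : ZMod L) := by
        rw [Nat.cast_sub (by omega), Nat.cast_sub hab.le, ZMod.natCast_self]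
        ring
      rw [he, ZMod.val_cast_of_lt (by omega)]
  obtain ⟨a, b, hab, hbL, hdne⟩ :
      ∃ a b : ℕ, a < b ∧ b < L ∧
        (cayley S).dist (pref S l a) (pref S l b) ≠ min (b - a) (L - (b - a)) := by
    rcases Nat.lt_or_ge i.val j.val with h | h
    · obtain ⟨e1, e2⟩ := hsub i.val j.val h (ZMod.val_lt j)
      rw [ZMod.natCast_zmod_val, ZMod.natCast_zmod_val] at e1 e2
      refine ⟨i.val, j.val, h, ZMod.val_lt j, ?_⟩
      rw [e1, e2] at hne
      rwa [min_comm] at hne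
    · have h' : j.val < i.val := by omega
      obtain ⟨e1, e2⟩ := hsub j.val i.val h' (ZMod.val_lt i)
      rw [ZMod.natCast_zmod_val, ZMod.natCast_zmod_val] at e1 e2
      refine ⟨j.val, i.val, h', ZMod.val_lt i, ?_⟩
      rw [e1, e2] at hne
      rwa [SimpleGraph.dist_comm] at hne
  have hadj : ∀ k, k < L → (cayley S).Adj (pref S l k) (pref S l (k + 1)) := by
    intro k hk
    have hk' : k < l.length := by omega
    have hstep := pref_succ S l hk'
    have hne' : pref S l k ≠ pref S l (k + 1) := by
      rcases Nat.lt_or_ge (k + 1) L with h' | h'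
      · exact hrep k (k + 1) (by omega) h'
      · have hkL : k + 1 = L := by omega
        rw [hkL, hgL, ← hg0]
        exact fun hcontra => hrep 0 k (by omega) (by omega) hcontra.symm
    refine adj_step S hne' (l.get ⟨k, hk'⟩) ?_
    rw [hstep]
    group
  have hwalk : ∀ a' b' : ℕ, a' ≤ b' → b' ≤ L →
      ∃ p : (cayley S).Walk (pref S l a') (pref S l b'), p.length = b' - a' := by
    intro a' b' hab' hbL'
    induction b', hab' using Nat.le_induction with
    | base => exact ⟨SimpleGraph.Walk.nil, by simp⟩
    | succ b'' hb'' ih =>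
      obtain ⟨p, hp⟩ := ih (by omega)
      exact ⟨p.concat (hadj b'' (by omega)),
        by rw [SimpleGraph.Walk.length_concat]; omega⟩
  have hd1 : (cayley S).dist (pref S l a) (pref S l b) ≤ b - a := by
    obtain ⟨p, hp⟩ := hwalk a b hab.le hbL.le
    exact hp ▸ SimpleGraph.dist_le p
  have hd2 : (cayley S).dist (pref S l a) (pref S l b) ≤ L - (b - a) := by
    obtain ⟨p1, hp1⟩ := hwalk b L hbL.le le_rfl
    obtain ⟨p2, hp2⟩ := hwalk 0 a (Nat.zero_le a) (by omega)
    have e : pref S l L = pref S l 0 := by rw [hgL, hg0]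
    have hle := SimpleGraph.dist_le ((p1.copy rfl e).append p2)
    rw [SimpleGraph.Walk.length_append, SimpleGraph.Walk.length_copy, hp1, hp2] at hle
    rw [SimpleGraph.dist_comm]
    omega
  have hdlt : (cayley S).dist (pref S l a) (pref S l b) < min (b - a) (L - (b - a)) :=
    lt_of_le_of_ne (le_min hd1 hd2) hdne
  obtain ⟨q, _⟩ := hwalk a b hab.le hbL.le
  obtain ⟨p, hp⟩ := SimpleGraph.Reachable.exists_walk_length_eq_dist ⟨q⟩
  obtain ⟨m, hm, hpm⟩ := word_of_walk S p
  exact key a b hab.le hbL.le m hpm (by omega) (by omega)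

end Stmt17Aux

/-- If `G` is a finitely generated group which is not finitely presented, then for every
`N` there is an isometric embedding of a cycle of length `n > N` into the Cayley graph
`Γ(G,S)`: a map `f : ZMod n → G` such that the word distance between `f i` and `f j`
equals the distance between `i` and `j` along the cycle. -/
theorem stmt17 {G : Type*} [Group G] (S : Finset G)
    (hgen : Subgroup.closure (S : Set G) = ⊤)
    (hnfp : ¬ IsFinitelyPresented G) :
    ∀ N : ℕ, ∃ n : ℕ, N < n ∧ ∃ f : ZMod n → G,
      ∀ i j : ZMod n, (cayley S).dist (f i) (f j) = min (i - j).val (j - i).val := by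
  by_contra h
  push_neg at h
  obtain ⟨N, hN⟩ := h
  apply hnfp
  refine ⟨S.card, {w : FreeGroup (Fin S.card) | Stmt17Aux.pr S w = 1 ∧ w.toWord.length ≤ N},
    ?_, ?_⟩
  · exact Set.Finite.subset
      ((List.finite_length_le (α := Fin S.card × Bool) (n := N)).preimage FreeGroup.toWord_injective.injOn)
      (fun w hw => hw.2)
  · have hrange : Set.range (Stmt17Aux.gen S) = (S : Set G) := by
      ext s
      constructor
      · rintro ⟨i, rfl⟩
        exact Stmt17Aux.gen_mem S i
      · intro hs
        exact Stmt17Aux.exists_gen S hs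
    have hsurj : Function.Surjective (Stmt17Aux.pr S) := by
      rw [← MonoidHom.range_eq_top, Stmt17Aux.pr, FreeGroup.range_lift_eq_closure, hrange,
        hgen]
    have hN' : ∀ n : ℕ, N < n → ∀ f : ZMod n → G, ∃ i j : ZMod n,
        (cayley S).dist (f i) (f j) ≠ min (i - j).val (j - i).val := by
      intro n hn f
      obtain ⟨i, j, hij⟩ := hN n hn f
      exact ⟨i, j, hij⟩
    have hker : (Stmt17Aux.pr S).ker = Subgroup.normalClosure
        {w : FreeGroup (Fin S.card) | Stmt17Aux.pr S w = 1 ∧ w.toWord.length ≤ N} := by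
      refine le_antisymm ?_ (Subgroup.normalClosure_le_normal fun w hw => hw.1)
      intro w hw
      have := Stmt17Aux.main S N hN' w.toWord.length w.toWord rfl
        (by rw [FreeGroup.mk_toWord]; exact hw)
      rwa [FreeGroup.mk_toWord] at this
    exact ⟨(QuotientGroup.quotientKerEquivOfSurjective _ hsurj).symm.trans
      (QuotientGroup.quotientMulEquivOfEq hker)⟩
end

section
/- Let M be a metric space admitting a total order T and a constant C such that OR_{M,T}(k) ≤ C for all k ≥ 1, let Ω ⊆ M, and for s ≥ 1 let M_s(Ω) be the metric space obtained from s disjoint copies of M by gluing them along Ω (points of Ω are identified across all copies; the distance between points in different copies is the infimum of sums of distances through points of Ω). Then M_s(Ω) admits a total order T_s with OR_{M_s(Ω),T_s}(k) ≤ sC + s − 1 for all k ≥ 1. -/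
open scoped Classical

/-! ### Auxiliary lemmas about `pathLen` -/

section Basic
variable {α : Type*} (d : α → α → ℝ)

lemma pathLen_cons_cons (a b : α) (l : List α) :
    pathLen d (a :: b :: l) = d a b + pathLen d (b :: l) := rfl

lemma pathLen_short : ∀ l : List α, l.length ≤ 1 → pathLen d l = 0
  | [], _ => rfl
  | [_], _ => rfl
  | _ :: _ :: _, h => by simp at h

variable (hd0 : ∀ a b : α, 0 ≤ d a b)
include hd0

lemma pathLen_nonneg : ∀ l : List α, 0 ≤ pathLen d l
  | [] => le_refl _
  | [_] => le_refl _
  | a :: b :: l => by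
      rw [pathLen_cons_cons]
      exact add_nonneg (hd0 a b) (pathLen_nonneg (b :: l))

lemma pathLen_cons_le (a : α) (l : List α) : pathLen d l ≤ pathLen d (a :: l) := by
  cases l with
  | nil => simp [pathLen]
  | cons b t =>
      rw [pathLen_cons_cons]
      exact le_add_of_nonneg_left (hd0 a b)

variable (htri : ∀ a b c : α, d a c ≤ d a b + d b c)
include htri

lemma pathLen_sublist : ∀ {l₁ l₂ : List α}, l₁.Sublist l₂ →
    pathLen d l₁ ≤ pathLen d l₂ ∧ ∀ a, pathLen d (a :: l₁) ≤ pathLen d (a :: l₂) := by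
  intro l₁ l₂ h
  induction h with
  | slnil => exact ⟨le_refl _, fun a => le_refl _⟩
  | @cons l₁ l₂ b hsub ih =>
      constructor
      · exact le_trans ih.1 (pathLen_cons_le d hd0 b l₂)
      · intro a
        cases l₁ with
        | nil =>
            simpa [pathLen] using pathLen_nonneg d hd0 (a :: b :: l₂)
        | cons c t =>
            rw [pathLen_cons_cons, pathLen_cons_cons]
            calc d a c + pathLen d (c :: t)
                ≤ (d a b + d b c) + pathLen d (c :: t) :=
                  add_le_add_left (htri a b c) _
              _ = d a b + pathLen d (b :: c :: t) := by
                  rw [pathLen_cons_cons]; ring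
              _ ≤ d a b + pathLen d (b :: l₂) := add_le_add le_rfl (ih.2 b)
  | @cons_cons l₁ l₂ b hsub ih =>
      refine ⟨ih.2 b, fun a => ?_⟩
      rw [pathLen_cons_cons, pathLen_cons_cons]
      exact add_le_add_right (ih.2 b) _

lemma pathLen_sublist_le {l₁ l₂ : List α} (h : l₁.Sublist l₂) :
    pathLen d l₁ ≤ pathLen d l₂ := (pathLen_sublist d hd0 htri h).1

variable (hdself : ∀ a : α, d a a = 0)
include hdself

lemma pathLen_head_le : ∀ (h : α) (t : List α) (a : α), a ∈ h :: t →
    d h a ≤ pathLen d (h :: t) := by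
  intro h t
  induction t generalizing h with
  | nil =>
      intro a ha
      simp only [List.mem_singleton] at ha
      simp [ha, pathLen, hdself]
  | cons b t ih =>
      intro a ha
      rcases List.mem_cons.mp ha with rfl | ha
      · rw [hdself a]
        exact pathLen_nonneg d hd0 _
      · calc d h a ≤ d h b + d b a := htri h b a
          _ ≤ d h b + pathLen d (b :: t) := add_le_add le_rfl (ih b a ha)
          _ = pathLen d (h :: b :: t) := (pathLen_cons_cons d h b t).symm

variable (hsym : ∀ a b : α, d a b = d b a)
include hsym

lemma pathLen_pair_le : ∀ (l : List α) (a b : α), a ∈ l → b ∈ l →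
    d a b ≤ pathLen d l := by
  intro l
  induction l with
  | nil => intro a b ha; simp at ha
  | cons h t ih =>
      intro a b ha hb
      rcases List.mem_cons.mp ha with rfl | ha
      · exact pathLen_head_le d hd0 htri hdself a t b hb
      · rcases List.mem_cons.mp hb with rfl | hb
        · rw [hsym a b]
          exact pathLen_head_le d hd0 htri hdself b t a ha
        · calc d a b ≤ pathLen d t := ih a b ha hb
            _ ≤ pathLen d (h :: t) := pathLen_cons_le d hd0 h t

end Basic

section B2
variable {α β : Type*}

lemma pathLen_map_le (d' : α → α → ℝ) (d : β → β → ℝ) (f : α → β)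
    (h : ∀ x y : α, d (f x) (f y) ≤ d' x y) :
    ∀ l : List α, pathLen d (l.map f) ≤ pathLen d' l
  | [] => le_refl _
  | [_] => le_refl _
  | a :: b :: l => by
      simp only [List.map_cons]
      rw [pathLen_cons_cons, pathLen_cons_cons]
      exact add_le_add (h a b) (by simpa using pathLen_map_le d' d f h (b :: l))

lemma pathLen_map_eq (d' : α → α → ℝ) (d : β → β → ℝ) (f : α → β)
    {l : List α} (h : ∀ x ∈ l, ∀ y ∈ l, d (f x) (f y) = d' x y) :
    pathLen d (l.map f) = pathLen d' l := by
  induction l with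
  | nil => rfl
  | cons a t ih =>
      cases t with
      | nil => rfl
      | cons b t' =>
          simp only [List.map_cons]
          rw [pathLen_cons_cons, pathLen_cons_cons]
          have h1 : d (f a) (f b) = d' a b := h a (by simp) b (by simp)
          have h2 : pathLen d ((b :: t').map f) = pathLen d' (b :: t') := by
            apply ih
            intro x hx y hy
            exact h x (List.mem_cons_of_mem _ hx) y (List.mem_cons_of_mem _ hy)
          simp only [List.map_cons] at h2
          rw [h1, h2]

lemma pathLen_le_edges (d : α → α → ℝ) (B : ℝ) (hB : 0 ≤ B) :
    ∀ l : List α, (∀ a ∈ l, ∀ b ∈ l, d a b ≤ B) →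
      pathLen d l ≤ ((l.length - 1 : ℕ) : ℝ) * B
  | [] => by intro _; simp [pathLen]
  | [_] => by intro _; simp [pathLen]
  | a :: b :: l => by
      intro h
      rw [pathLen_cons_cons]
      have ih := pathLen_le_edges d B hB (b :: l)
        (fun x hx y hy => h x (List.mem_cons_of_mem _ hx) y (List.mem_cons_of_mem _ hy))
      have hab : d a b ≤ B := h a (by simp) b (by simp)
      have hlen : ((b :: l).length - 1 : ℕ) + 1 = ((a :: b :: l).length - 1 : ℕ) := by
        simp
      calc d a b + pathLen d (b :: l) ≤ B + ((((b :: l)).length - 1 : ℕ) : ℝ) * B :=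
            add_le_add hab ih
        _ = ((((b :: l)).length - 1 : ℕ) + 1 : ℝ) * B := by ring
        _ = (((a :: b :: l).length - 1 : ℕ) : ℝ) * B := by
            rw [← hlen]; push_cast; ring

lemma pathLen_eq_pairs (d : α → α → ℝ) :
    ∀ l : List α, pathLen d l = ((l.zip l.tail).map fun p => d p.1 p.2).sum
  | [] => rfl
  | [_] => rfl
  | a :: b :: l => by
      rw [pathLen_cons_cons, pathLen_eq_pairs d (b :: l)]
      simp [List.zip]

lemma list_sum_map_add (l : List α) (f g : α → ℝ) :
    (l.map fun x => f x + g x).sum = (l.map f).sum + (l.map g).sum := by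
  induction l with
  | nil => simp
  | cons a t ih => simp [ih]; ring

lemma list_sum_map_finsum {ι : Type*} (l : List α) (S : Finset ι) (f : ι → α → ℝ) :
    (l.map fun x => ∑ i ∈ S, f i x).sum = ∑ i ∈ S, (l.map (f i)).sum := by
  induction l with
  | nil => simp
  | cons a t ih => simp [ih, Finset.sum_add_distrib]

lemma list_sum_ite_le (l : List α) (q : α → Prop) [DecidablePred q] (f : α → ℝ) (B : ℝ)
    (hB : 0 ≤ B) (h : ∀ p ∈ l, q p → f p ≤ B) :
    (l.map fun p => if q p then f p else 0).sum ≤ (l.countP fun p => decide (q p)) * B := by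
  induction l with
  | nil => simp
  | cons a t ih =>
      have ih' := ih (fun p hp => h p (List.mem_cons_of_mem _ hp))
      by_cases hq : q a
      · simp only [List.map_cons, List.sum_cons, if_pos hq, List.countP_cons,
          decide_eq_true_eq, if_pos hq]
        push_cast
        have hfa := h a (by simp) hq
        calc f a + (t.map fun p => if q p then f p else 0).sum
            ≤ B + (t.countP fun p => decide (q p)) * B := add_le_add hfa ih'
          _ = ((t.countP fun p => decide (q p)) + 1 : ℝ) * B := by ring
          _ = _ := by push_cast; ring
      · simp only [List.map_cons, List.sum_cons, if_neg hq, List.countP_cons,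
          decide_eq_true_eq, if_neg hq, zero_add, add_zero]
        simpa using ih'

end B2

section B3
variable {α : Type*}

lemma cnt_aux {s : ℕ} : ∀ (t : List (Fin s)) (a : Fin s),
    List.Pairwise (· ≤ ·) (a :: t) →
    (((a :: t).zip t).countP fun p => decide (p.1 ≠ p.2)) + a.val + 1 ≤ s := by
  intro t
  induction t with
  | nil =>
      intro a _
      have := a.isLt
      simp only [List.zip_nil_right, List.countP_nil]
      omega
  | cons b t' ih =>
      intro a hsort
      have hab : a ≤ b := (List.pairwise_cons.mp hsort).1 b (by simp)
      have hrest := ih b (List.pairwise_cons.mp hsort).2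
      have hzip : ((a :: b :: t').zip (b :: t')) = (a, b) :: ((b :: t').zip t') := rfl
      rw [hzip]
      by_cases h : a = b
      · rw [List.countP_cons_of_neg (by simp [h])]
        omega
      · have hlt : a < b := lt_of_le_of_ne hab h
        have hv : a.val + 1 ≤ b.val := hlt
        rw [List.countP_cons_of_pos (by simp [h])]
        omega

lemma cnt {s : ℕ} (g : List (Fin s)) (hg : List.Pairwise (· ≤ ·) g) :
    ((g.zip g.tail).countP fun p => decide (p.1 ≠ p.2)) ≤ s - 1 := by
  cases g with
  | nil => simp
  | cons a t =>
      have := cnt_aux t a hg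
      simp only [List.tail_cons]
      omega

lemma blk {β : Type*} [LinearOrder β] (d : α → α → ℝ) (c : α → β) (i : β)
    (F : α × α → ℝ) (q : α → Bool)
    (hF1 : ∀ p : α × α, c p.1 = i → c p.2 = i → F p = d p.1 p.2)
    (hF0 : ∀ p : α × α, ¬(c p.1 = i ∧ c p.2 = i) → F p = 0)
    (hq : ∀ x, q x = true ↔ c x = i) :
    ∀ l : List α, List.Pairwise (· ≤ ·) (l.map c) →
    (((l.zip l.tail).map F).sum = pathLen d (l.filter q)) := by
  intro l
  induction l with
  | nil => intro _; rfl
  | cons a t ih =>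
      intro hsort
      cases t with
      | nil =>
          simp only [List.tail_cons, List.zip_nil_right, List.map_nil, List.sum_nil]
          by_cases h : c a = i
          · rw [List.filter_cons_of_pos ((hq a).mpr h)]; rfl
          · rw [List.filter_cons_of_neg (fun hh => h ((hq a).mp hh))]; rfl
      | cons b t' =>
          have hsort2 : List.Pairwise (· ≤ ·) (c a :: c b :: t'.map c) := by
            simpa using hsort
          have hab : c a ≤ c b := (List.pairwise_cons.mp hsort2).1 (c b) (by simp)
          have hsort' : List.Pairwise (· ≤ ·) ((b :: t').map c) := by
            simpa using (List.pairwise_cons.mp hsort2).2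
          have ihr := ih hsort'
          have hzip : ((a :: b :: t').zip (b :: t')) = (a, b) :: ((b :: t').zip t') := rfl
          simp only [List.tail_cons] at ihr ⊢
          rw [hzip, List.map_cons, List.sum_cons]
          by_cases h1 : c a = i
          · by_cases h2 : c b = i
            · rw [hF1 (a, b) h1 h2, ihr,
                List.filter_cons_of_pos (l := b :: t') ((hq a).mpr h1),
                List.filter_cons_of_pos (l := t') ((hq b).mpr h2),
                pathLen_cons_cons]
            · have hbi : i < c b := by
                rw [← h1] at h2 ⊢
                exact lt_of_le_of_ne hab (Ne.symm h2)
              have hall : ∀ x ∈ b :: t', c x ≠ i := by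
                intro x hx
                have hbx : c b ≤ c x := by
                  rcases List.mem_cons.mp hx with rfl | hx'
                  · exact le_refl _
                  · exact (List.pairwise_cons.mp hsort').1 (c x)
                      (List.mem_map_of_mem (f := c) hx')
                exact fun hxi => absurd (hxi ▸ hbx) (not_le.mpr hbi)
              have hfe : (b :: t').filter q = [] := by
                rw [List.filter_eq_nil_iff]
                intro x hx hxq
                exact hall x hx ((hq x).mp hxq)
              rw [hF0 (a, b) (by tauto), ihr, hfe,
                List.filter_cons_of_pos (l := b :: t') ((hq a).mpr h1), hfe]
              simp [pathLen]
          · rw [hF0 (a, b) (by tauto), ihr,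
              List.filter_cons_of_neg (l := b :: t') (fun hh => h1 ((hq a).mp hh))]
            simp
end B3

/-! ### Lemmas about `lopt`, `lord`, `ORd` in a metric space -/

section MetricLemmas
variable {γ : Type*} [MetricSpace γ]

lemma mhd0 : ∀ a b : γ, 0 ≤ dist a b := fun _ _ => dist_nonneg
lemma mhtri : ∀ a b c : γ, dist a c ≤ dist a b + dist b c := fun a b c => dist_triangle a b c
lemma mhself : ∀ a : γ, dist a a = 0 := fun a => dist_self a
lemma mhsym : ∀ a b : γ, dist a b = dist b a := fun a b => dist_comm a b

lemma loptSet_bddBelow (X : Finset γ) :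
    BddBelow {r : ℝ | ∃ l : List γ, l.Nodup ∧ l.toFinset = X ∧
      pathLen (fun x y : γ => dist x y) l = r} := by
  refine ⟨0, ?_⟩
  rintro r ⟨l, -, -, rfl⟩
  exact pathLen_nonneg _ mhd0 l

lemma loptSet_nonempty (X : Finset γ) :
    Set.Nonempty {r : ℝ | ∃ l : List γ, l.Nodup ∧ l.toFinset = X ∧
      pathLen (fun x y : γ => dist x y) l = r} :=
  ⟨_, X.toList, X.nodup_toList, X.toList_toFinset, rfl⟩

lemma lopt_le_pathLen {X : Finset γ} {l : List γ} (h1 : l.Nodup) (h2 : l.toFinset = X) :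
    lopt (fun x y : γ => dist x y) X ≤ pathLen (fun x y : γ => dist x y) l :=
  csInf_le (loptSet_bddBelow X) ⟨l, h1, h2, rfl⟩

lemma le_lopt {X : Finset γ} {B : ℝ}
    (h : ∀ l : List γ, l.Nodup → l.toFinset = X →
      B ≤ pathLen (fun x y : γ => dist x y) l) :
    B ≤ lopt (fun x y : γ => dist x y) X := by
  refine le_csInf (loptSet_nonempty X) ?_
  rintro r ⟨l, h1, h2, rfl⟩
  exact h l h1 h2

lemma lopt_nonneg (X : Finset γ) : 0 ≤ lopt (fun x y : γ => dist x y) X :=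
  le_lopt fun l _ _ => pathLen_nonneg _ mhd0 l

lemma dist_le_lopt {X : Finset γ} {a b : γ} (ha : a ∈ X) (hb : b ∈ X) :
    dist a b ≤ lopt (fun x y : γ => dist x y) X := by
  refine le_lopt fun l h1 h2 => ?_
  exact pathLen_pair_le _ mhd0 mhtri mhself mhsym l a b
    (by rw [← List.mem_toFinset, h2]; exact ha)
    (by rw [← List.mem_toFinset, h2]; exact hb)

lemma lopt_pos {X : Finset γ} (h2 : 2 ≤ X.card) :
    0 < lopt (fun x y : γ => dist x y) X := by
  obtain ⟨a, ha, b, hb, hab⟩ := Finset.one_lt_card.mp (show 1 < X.card by omega)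
  exact lt_of_lt_of_le (dist_pos.mpr hab) (dist_le_lopt ha hb)

lemma lopt_mono {Y X : Finset γ} (h : Y ⊆ X) :
    lopt (fun x y : γ => dist x y) Y ≤ lopt (fun x y : γ => dist x y) X := by
  refine le_lopt fun l h1 h2 => ?_
  have h1' : (l.filter (fun x => decide (x ∈ Y))).Nodup := h1.filter _
  have h2' : (l.filter (fun x => decide (x ∈ Y))).toFinset = Y := by
    rw [List.toFinset_filter, h2]
    ext x
    simp only [Finset.mem_filter, decide_eq_true_eq]
    exact ⟨fun hx => hx.2, fun hx => ⟨h hx, hx⟩⟩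
  calc lopt (fun x y : γ => dist x y) Y
      ≤ pathLen (fun x y : γ => dist x y) (l.filter (fun x => decide (x ∈ Y))) :=
        lopt_le_pathLen h1' h2'
    _ ≤ pathLen (fun x y : γ => dist x y) l :=
        pathLen_sublist_le _ mhd0 mhtri (List.filter_sublist (l := l))

lemma lopt_image_le {δ : Type*} [MetricSpace δ] [DecidableEq δ] (f : γ → δ)
    (hf : ∀ x y : γ, dist (f x) (f y) ≤ dist x y) (X : Finset γ) :
    lopt (fun x y : δ => dist x y) (X.image f) ≤ lopt (fun x y : γ => dist x y) X := by
  refine le_lopt fun l h1 h2 => ?_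
  have h1' : (l.map f).dedup.Nodup := List.nodup_dedup _
  have h2' : @List.toFinset δ (fun a b => Classical.propDecidable (a = b)) (l.map f).dedup
      = X.image f := by
    ext x
    simp [← h2]
  calc lopt (fun x y : δ => dist x y) (X.image f)
      ≤ pathLen (fun x y : δ => dist x y) (l.map f).dedup := lopt_le_pathLen h1' h2'
    _ ≤ pathLen (fun x y : δ => dist x y) (l.map f) :=
        pathLen_sublist_le _ mhd0 mhtri (List.dedup_sublist _)
    _ ≤ pathLen (fun x y : γ => dist x y) l := pathLen_map_le _ _ f hf l

lemma lordSet_bddBelow (T : LinearOrder γ) (X : Finset γ) :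
    BddBelow {r : ℝ | ∃ l : List γ, l.Nodup ∧ l.toFinset = X ∧ List.Pairwise T.lt l ∧
      pathLen (fun x y : γ => dist x y) l = r} := by
  refine ⟨0, ?_⟩
  rintro r ⟨l, -, -, -, rfl⟩
  exact pathLen_nonneg _ mhd0 l

lemma lord_le_pathLen (T : LinearOrder γ) {X : Finset γ} {l : List γ}
    (h1 : l.Nodup) (h2 : l.toFinset = X) (h3 : List.Pairwise T.lt l) :
    lord (fun x y : γ => dist x y) T X ≤ pathLen (fun x y : γ => dist x y) l :=
  csInf_le (lordSet_bddBelow T X) ⟨l, h1, h2, h3, rfl⟩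

lemma lord_eq_pathLen (T : LinearOrder γ) {X : Finset γ} {l : List γ}
    (h1 : l.Nodup) (h2 : l.toFinset = X) (h3 : List.Pairwise T.lt l) :
    lord (fun x y : γ => dist x y) T X = pathLen (fun x y : γ => dist x y) l := by
  letI := T
  haveI : IsAntisymm γ T.lt := ⟨fun a b h h' => absurd h (lt_asymm h')⟩
  have hset : {r : ℝ | ∃ l' : List γ, l'.Nodup ∧ l'.toFinset = X ∧ List.Pairwise T.lt l' ∧
      pathLen (fun x y : γ => dist x y) l' = r}
      = {pathLen (fun x y : γ => dist x y) l} := by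
    ext r
    constructor
    · rintro ⟨l', h1', h2', h3', rfl⟩
      have hperm : l'.Perm l :=
        List.perm_of_nodup_nodup_toFinset_eq h1' h1 (h2'.trans h2.symm)
      have heq : l' = l := hperm.eq_of_pairwise' h3' h3
      rw [heq]; rfl
    · rintro rfl
      exact ⟨l, h1, h2, h3, rfl⟩
  rw [lord, hset, csInf_singleton]

lemma lord_nonneg (T : LinearOrder γ) (X : Finset γ) :
    0 ≤ lord (fun x y : γ => dist x y) T X := by
  apply Real.sInf_nonneg
  rintro r ⟨l, -, -, -, rfl⟩
  exact pathLen_nonneg _ mhd0 l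

lemma ORd_nonneg (T : LinearOrder γ) (k : ℕ) :
    0 ≤ ORd (fun x y : γ => dist x y) T k := by
  apply Real.sSup_nonneg
  rintro r ⟨X, -, -, rfl⟩
  exact div_nonneg (lord_nonneg T X) (lopt_nonneg X)

lemma lord_le_card_mul_lopt (T : LinearOrder γ) {X : Finset γ} (h2 : 2 ≤ X.card) :
    lord (fun x y : γ => dist x y) T X
      ≤ ((X.card - 1 : ℕ) : ℝ) * lopt (fun x y : γ => dist x y) X := by
  letI := T
  set L := X.sort (· ≤ ·) with hL
  have hnodup : L.Nodup := X.sort_nodup _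
  have htofin : L.toFinset = X := X.sort_toFinset _
  have hsorted : List.Pairwise T.lt L := X.sortedLT_sort.pairwise
  have hlen : L.length = X.card := X.length_sort _
  calc lord (fun x y : γ => dist x y) T X ≤ pathLen (fun x y : γ => dist x y) L :=
        lord_le_pathLen T hnodup htofin hsorted
    _ ≤ ((L.length - 1 : ℕ) : ℝ) * lopt (fun x y : γ => dist x y) X := by
        refine pathLen_le_edges _ _ (lopt_nonneg X) L ?_
        intro a ha b hb
        exact dist_le_lopt (htofin ▸ List.mem_toFinset.mpr ha)
          (htofin ▸ List.mem_toFinset.mpr hb)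
    _ = _ := by rw [hlen]

lemma ORdSet_elem_le (T : LinearOrder γ) (k : ℕ) {r : ℝ}
    (hr : r ∈ {r : ℝ | ∃ X : Finset γ, 2 ≤ X.card ∧ X.card ≤ k + 1 ∧
      r = lord (fun x y : γ => dist x y) T X / lopt (fun x y : γ => dist x y) X}) :
    r ≤ (k : ℝ) := by
  obtain ⟨X, hX2, hXk, rfl⟩ := hr
  have hpos := lopt_pos (γ := γ) hX2
  rw [div_le_iff₀ hpos]
  calc lord (fun x y : γ => dist x y) T X
      ≤ ((X.card - 1 : ℕ) : ℝ) * lopt (fun x y : γ => dist x y) X :=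
        lord_le_card_mul_lopt T hX2
    _ ≤ (k : ℝ) * lopt (fun x y : γ => dist x y) X := by
        apply mul_le_mul_of_nonneg_right _ hpos.le
        have hck : X.card - 1 ≤ k := by omega
        exact_mod_cast hck

lemma lord_le_C_mul_lopt (T : LinearOrder γ) {C : ℝ} {k : ℕ}
    (hC : ORd (fun x y : γ => dist x y) T k ≤ C) {X : Finset γ}
    (h2 : 2 ≤ X.card) (hcard : X.card ≤ k + 1) :
    lord (fun x y : γ => dist x y) T X ≤ C * lopt (fun x y : γ => dist x y) X := by
  have hpos := lopt_pos (γ := γ) h2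
  have hmem : lord (fun x y : γ => dist x y) T X / lopt (fun x y : γ => dist x y) X
      ∈ {r : ℝ | ∃ X : Finset γ, 2 ≤ X.card ∧ X.card ≤ k + 1 ∧
        r = lord (fun x y : γ => dist x y) T X / lopt (fun x y : γ => dist x y) X} :=
    ⟨X, h2, hcard, rfl⟩
  have hbdd : BddAbove {r : ℝ | ∃ X : Finset γ, 2 ≤ X.card ∧ X.card ≤ k + 1 ∧
      r = lord (fun x y : γ => dist x y) T X / lopt (fun x y : γ => dist x y) X} :=
    ⟨(k : ℝ), fun r hr => ORdSet_elem_le T k hr⟩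
  have hsup := le_csSup hbdd hmem
  have hle : lord (fun x y : γ => dist x y) T X / lopt (fun x y : γ => dist x y) X ≤ C :=
    le_trans hsup hC
  calc lord (fun x y : γ => dist x y) T X
      = (lord (fun x y : γ => dist x y) T X / lopt (fun x y : γ => dist x y) X) *
        lopt (fun x y : γ => dist x y) X := by field_simp
    _ ≤ C * lopt (fun x y : γ => dist x y) X := mul_le_mul_of_nonneg_right hle hpos.le

end MetricLemmas

/-- Let `M` be a metric space with a total order `T` such that `OR_{M,T}(k) ≤ C` for all
`k ≥ 1`, and let `Ω ⊆ M`.  Let `M'` be the space `M_s(Ω)` obtained by gluing `s` copies of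
`M` along `Ω` (axiomatised by copy maps `ψ i : M → M'` with the glued distance: within one
copy the distance of `M`, between different copies the infimum of sums of distances through
points of `Ω`).  Then `M'` admits an order `T_s` with
`OR_{M',T_s}(k) ≤ s·C + s − 1` for all `k ≥ 1`. -/
theorem stmt19 {M : Type*} [MetricSpace M] (T : LinearOrder M) (C : ℝ)
    (hC : ∀ k : ℕ, 1 ≤ k → ORd (fun x y : M => dist x y) T k ≤ C)
    (Ω : Set M) (s : ℕ) (hs : 1 ≤ s)
    {M' : Type*} [MetricSpace M'] (ψ : Fin s → M → M')
    (hglue : ∀ i j : Fin s, ∀ ω ∈ Ω, ψ i ω = ψ j ω)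
    (hinj : ∀ i j : Fin s, ∀ a b : M, ψ i a = ψ j b → a = b ∧ (i ≠ j → a ∈ Ω))
    (hsurj : ∀ x : M', ∃ i : Fin s, ∃ a : M, x = ψ i a)
    (hdsame : ∀ i : Fin s, ∀ a b : M, dist (ψ i a) (ψ i b) = dist a b)
    (hddiff : ∀ i j : Fin s, i ≠ j → ∀ a b : M,
      dist (ψ i a) (ψ j b) = sInf {r : ℝ | ∃ ω ∈ Ω, r = dist a ω + dist ω b}) :
    ∃ Ts : LinearOrder M', ∀ k : ℕ, 1 ≤ k →
      ORd (fun x y : M' => dist x y) Ts k ≤ (s : ℝ) * C + (s : ℝ) - 1 := by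
  classical
  have hC0 : 0 ≤ C := le_trans (ORd_nonneg T 1) (hC 1 le_rfl)
  obtain ⟨ix, pt, hx⟩ : ∃ (ix : M' → Fin s) (pt : M' → M), ∀ x, x = ψ (ix x) (pt x) := by
    choose ix pt h using hsurj
    exact ⟨ix, pt, h⟩
  set i0 : Fin s := ⟨0, hs⟩ with hi0
  set cix : M' → Fin s := fun x => if pt x ∈ Ω then i0 else ix x with hcix
  have hx' : ∀ x : M', x = ψ (cix x) (pt x) := by
    intro x
    by_cases h : pt x ∈ Ω
    · have hg : ψ (ix x) (pt x) = ψ i0 (pt x) := hglue _ _ _ h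
      simp only [hcix, if_pos h]
      rw [← hg]; exact hx x
    · simp only [hcix, if_neg h]; exact hx x
  have hkey : ∀ x y : M', dist x y = dist (ψ (cix x) (pt x)) (ψ (cix y) (pt y)) := by
    intro x y
    rw [← hx' x, ← hx' y]
  have hlip : ∀ x y : M', dist (pt x) (pt y) ≤ dist x y := by
    intro x y
    by_cases h : cix x = cix y
    · have hxy : dist x y = dist (pt x) (pt y) := by
        rw [hkey x y, h]; exact hdsame _ _ _
      rw [hxy]
    · have hxy : dist x y
          = sInf {r : ℝ | ∃ ω ∈ Ω, r = dist (pt x) ω + dist ω (pt y)} := by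
        rw [hkey x y]; exact hddiff _ _ h _ _
      have hne : {r : ℝ | ∃ ω ∈ Ω, r = dist (pt x) ω + dist ω (pt y)}.Nonempty := by
        by_contra hemp
        rw [Set.not_nonempty_iff_eq_empty] at hemp
        rw [hemp, Real.sInf_empty] at hxy
        have hxy' : x = y := dist_eq_zero.mp hxy
        exact h (by rw [hxy'])
      rw [hxy]
      refine le_csInf hne ?_
      rintro r ⟨ω, hω, rfl⟩
      exact dist_triangle _ _ _
  letI : LinearOrder M := T
  have hφinj : Function.Injective (fun x : M' => toLex ((cix x, pt x) : Fin s × M)) := by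
    intro x y hxy
    have h1 : ((cix x, pt x) : Fin s × M) = (cix y, pt y) := toLex.injective hxy
    have h2 : cix x = cix y := congrArg Prod.fst h1
    have h3 : pt x = pt y := congrArg Prod.snd h1
    rw [hx' x, hx' y, h2, h3]
  letI Ts : LinearOrder M' :=
    LinearOrder.lift' (fun x : M' => toLex ((cix x, pt x) : Fin s × M)) hφinj
  refine ⟨Ts, ?_⟩
  intro k hk
  have hle : ∀ x y : M', x ≤ y → (cix x < cix y ∨ (cix x = cix y ∧ pt x ≤ pt y)) := by
    intro x y h
    exact Prod.Lex.le_iff.mp h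
  have hlt : ∀ x y : M', x < y → (cix x < cix y ∨ (cix x = cix y ∧ pt x < pt y)) := by
    intro x y h
    exact Prod.Lex.lt_iff.mp h
  have hsR : (1 : ℝ) ≤ (s : ℝ) := by exact_mod_cast hs
  have hb : (0 : ℝ) ≤ (s : ℝ) * C + (s : ℝ) - 1 := by nlinarith
  apply Real.sSup_le _ hb
  rintro r ⟨X, hX2, hXk, rfl⟩
  rw [div_le_iff₀ (lopt_pos hX2)]
  set L := X.sort (· ≤ ·) with hLdef
  have hnodup : L.Nodup := X.sort_nodup _
  have htofin : L.toFinset = X := X.sort_toFinset _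
  have hsortle : List.Pairwise (· ≤ ·) L := X.pairwise_sort _
  have hsortlt : List.Pairwise (· < ·) L := X.sortedLT_sort.pairwise
  have hlord : lord (fun x y : M' => dist x y) Ts X ≤ pathLen (fun x y : M' => dist x y) L :=
    lord_le_pathLen Ts hnodup htofin hsortlt
  have hmapsorted : List.Pairwise (· ≤ ·) (L.map cix) := by
    refine List.Pairwise.map cix ?_ hsortle
    intro a b hab
    rcases hle a b hab with h | ⟨h, -⟩
    · exact le_of_lt h
    · exact le_of_eq h
  set PL := L.zip L.tail with hPL
  have hpoint : ∀ p : M' × M', dist p.1 p.2 =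
      (∑ i : Fin s, if cix p.1 = i ∧ cix p.2 = i then dist p.1 p.2 else 0)
      + (if cix p.1 ≠ cix p.2 then dist p.1 p.2 else 0) := by
    intro p
    by_cases h : cix p.1 = cix p.2
    · have hiff : ∀ i : Fin s, (cix p.1 = i ∧ cix p.2 = i) ↔ (cix p.1 = i) :=
        fun i => ⟨fun hh => hh.1, fun hh => ⟨hh, by rw [← h]; exact hh⟩⟩
      have hsum : (∑ i : Fin s, if cix p.1 = i ∧ cix p.2 = i then dist p.1 p.2 else 0)
          = ∑ i : Fin s, if cix p.1 = i then dist p.1 p.2 else 0 := by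
        refine Finset.sum_congr rfl fun i _ => ?_
        simp only [hiff i]
      rw [hsum, Finset.sum_ite_eq, if_pos (Finset.mem_univ _),
        if_neg (by simpa using h), add_zero]
    · have hsum : (∑ i : Fin s, if cix p.1 = i ∧ cix p.2 = i then dist p.1 p.2 else 0)
          = 0 := by
        refine Finset.sum_eq_zero fun i _ => ?_
        rw [if_neg]
        rintro ⟨ha, hb2⟩
        exact h (ha.trans hb2.symm)
      rw [hsum, if_pos h, zero_add]
  have hdecomp : pathLen (fun x y : M' => dist x y) L
      = (∑ i : Fin s,
          (PL.map (fun p => if cix p.1 = i ∧ cix p.2 = i then dist p.1 p.2 else 0)).sum)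
        + (PL.map (fun p => if cix p.1 ≠ cix p.2 then dist p.1 p.2 else 0)).sum := by
    rw [pathLen_eq_pairs, ← hPL]
    have h1 : PL.map (fun p : M' × M' => dist p.1 p.2)
        = PL.map (fun p =>
            (∑ i : Fin s, if cix p.1 = i ∧ cix p.2 = i then dist p.1 p.2 else 0)
            + (if cix p.1 ≠ cix p.2 then dist p.1 p.2 else 0)) := by
      apply List.map_congr_left
      intro p _
      exact hpoint p
    rw [h1, list_sum_map_add, list_sum_map_finsum]
  have hblock : ∀ i : Fin s,
      (PL.map (fun p => if cix p.1 = i ∧ cix p.2 = i then dist p.1 p.2 else 0)).sum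
        ≤ C * lopt (fun x y : M' => dist x y) X := by
    intro i
    have hblk : ((L.zip L.tail).map
        (fun p => if cix p.1 = i ∧ cix p.2 = i then dist p.1 p.2 else 0)).sum
        = pathLen (fun x y : M' => dist x y) (L.filter (fun x => decide (cix x = i))) :=
      blk (fun x y : M' => dist x y) cix i
        (fun p => if cix p.1 = i ∧ cix p.2 = i then dist p.1 p.2 else 0)
        (fun x => decide (cix x = i))
        (fun p h1 h2 => if_pos ⟨h1, h2⟩) (fun p h => if_neg h)
        (fun x => by simp) L hmapsorted
    rw [show PL = L.zip L.tail from rfl, hblk]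
    set Li := L.filter (fun x => decide (cix x = i)) with hLi
    have hLisub : Li.Sublist L := List.filter_sublist (l := L)
    have hLimem : ∀ x ∈ Li, cix x = i := by
      intro x hxx
      have := (List.mem_filter.mp hxx).2
      simpa using this
    have hLiX : ∀ x ∈ Li, x ∈ X := fun x hxx =>
      htofin ▸ List.mem_toFinset.mpr (hLisub.subset hxx)
    have heq : pathLen (fun x y : M' => dist x y) Li
        = pathLen (fun x y : M => dist x y) (Li.map pt) := by
      symm
      apply pathLen_map_eq
      intro x hxx y hyy
      rw [hkey x y, hLimem x hxx, hLimem y hyy, hdsame]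
    rw [heq]
    by_cases hlen : 2 ≤ Li.length
    · set lM := Li.map pt with hlM
      have hinjLi : ∀ x ∈ Li, ∀ y ∈ Li, pt x = pt y → x = y := by
        intro x hxx y hyy hpteq
        rw [hx' x, hx' y, hLimem x hxx, hLimem y hyy, hpteq]
      have hnodupM : lM.Nodup := (hnodup.sublist hLisub).map_on hinjLi
      have hsortM : List.Pairwise (· < ·) lM := by
        apply List.pairwise_map.mpr
        have hpair : List.Pairwise (· < ·) Li := hsortlt.sublist hLisub
        refine List.Pairwise.imp_of_mem ?_ hpair
        intro a b haa hbb hab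
        rcases hlt a b hab with h | ⟨-, h⟩
        · rw [hLimem a haa, hLimem b hbb] at h
          exact absurd h (lt_irrefl i)
        · exact h
      set Y := lM.toFinset with hY
      have hYcard : Y.card = Li.length := by
        rw [hY, List.toFinset_card_of_nodup hnodupM, hlM, List.length_map]
      have hY2 : 2 ≤ Y.card := by rw [hYcard]; exact hlen
      have hYsub : Y ⊆ X.image pt := by
        intro z hz
        rw [hY] at hz
        obtain ⟨w, hw, rfl⟩ := List.mem_map.mp (List.mem_toFinset.mp hz)
        exact Finset.mem_image.mpr ⟨w, hLiX w hw, rfl⟩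
      have hYk : Y.card ≤ k + 1 := le_trans (Finset.card_le_card hYsub)
        (le_trans Finset.card_image_le hXk)
      have h1 : pathLen (fun x y : M => dist x y) lM
          = lord (fun x y : M => dist x y) T Y :=
        (lord_eq_pathLen T hnodupM rfl hsortM).symm
      have h2 : lord (fun x y : M => dist x y) T Y
          ≤ C * lopt (fun x y : M => dist x y) Y :=
        lord_le_C_mul_lopt T (hC k hk) hY2 hYk
      have h3 : lopt (fun x y : M => dist x y) Y ≤ lopt (fun x y : M' => dist x y) X :=
        le_trans (lopt_mono hYsub) (lopt_image_le pt hlip X)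
      calc pathLen (fun x y : M => dist x y) lM
          = lord (fun x y : M => dist x y) T Y := h1
        _ ≤ C * lopt (fun x y : M => dist x y) Y := h2
        _ ≤ C * lopt (fun x y : M' => dist x y) X :=
            mul_le_mul_of_nonneg_left h3 hC0
    · have hz : pathLen (fun x y : M => dist x y) (Li.map pt) = 0 := by
        apply pathLen_short
        rw [List.length_map]
        omega
      rw [hz]
      exact mul_nonneg hC0 (lopt_nonneg X)
  have hdiffmem : ∀ p ∈ PL, (cix p.1 ≠ cix p.2) →
      dist p.1 p.2 ≤ lopt (fun x y : M' => dist x y) X := by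
    rintro ⟨a, b⟩ hp -
    obtain ⟨h1, h2⟩ := List.of_mem_zip hp
    exact dist_le_lopt (htofin ▸ List.mem_toFinset.mpr h1)
      (htofin ▸ List.mem_toFinset.mpr (List.mem_of_mem_tail h2))
  have hdiff : (PL.map (fun p => if cix p.1 ≠ cix p.2 then dist p.1 p.2 else 0)).sum
      ≤ ((s : ℝ) - 1) * lopt (fun x y : M' => dist x y) X := by
    have h1 := list_sum_ite_le PL (fun p => cix p.1 ≠ cix p.2) (fun p => dist p.1 p.2)
      (lopt (fun x y : M' => dist x y) X) (lopt_nonneg X) hdiffmem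
    have h2 : (PL.countP fun p => decide (cix p.1 ≠ cix p.2)) ≤ s - 1 := by
      have hcnt := cnt (L.map cix) hmapsorted
      have heqc : ((L.map cix).zip (L.map cix).tail).countP (fun p => decide (p.1 ≠ p.2))
          = PL.countP fun p => decide (cix p.1 ≠ cix p.2) := by
        rw [hPL, ← List.map_tail, List.zip_map, List.countP_map]
        rfl
      rwa [heqc] at hcnt
    calc (PL.map (fun p => if cix p.1 ≠ cix p.2 then dist p.1 p.2 else 0)).sum
        ≤ (PL.countP fun p => decide (cix p.1 ≠ cix p.2)) *
            lopt (fun x y : M' => dist x y) X := h1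
      _ ≤ ((s : ℝ) - 1) * lopt (fun x y : M' => dist x y) X := by
          apply mul_le_mul_of_nonneg_right _ (lopt_nonneg X)
          have h3 : ((s - 1 : ℕ) : ℝ) = (s : ℝ) - 1 := by
            push_cast [Nat.cast_sub hs]
            ring
          rw [← h3]
          exact_mod_cast h2
  have hsum : (∑ i : Fin s,
      (PL.map (fun p => if cix p.1 = i ∧ cix p.2 = i then dist p.1 p.2 else 0)).sum)
      ≤ (s : ℝ) * (C * lopt (fun x y : M' => dist x y) X) := by
    calc (∑ i : Fin s,
        (PL.map (fun p => if cix p.1 = i ∧ cix p.2 = i then dist p.1 p.2 else 0)).sum)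
        ≤ ∑ _i : Fin s, C * lopt (fun x y : M' => dist x y) X :=
          Finset.sum_le_sum fun i _ => hblock i
      _ = (s : ℝ) * (C * lopt (fun x y : M' => dist x y) X) := by
          rw [Finset.sum_const, Finset.card_univ, Fintype.card_fin, nsmul_eq_mul]
  calc lord (fun x y : M' => dist x y) Ts X
      ≤ pathLen (fun x y : M' => dist x y) L := hlord
    _ = _ := hdecomp
    _ ≤ (s : ℝ) * (C * lopt (fun x y : M' => dist x y) X)
        + ((s : ℝ) - 1) * lopt (fun x y : M' => dist x y) X := add_le_add hsum hdiff
    _ = ((s : ℝ) * C + (s : ℝ) - 1) * lopt (fun x y : M' => dist x y) X := by ring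
end
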